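/- arXiv:1307.7434 — 8 statements merged into one kernel-verified Lean document; each statement's English description precedes it below -/
import Mathlib

section
/- Let a, b be real numbers with b > 0 and |a| ≤ b, and let x be a nonzero real number such that bx is not an integer multiple of π. Then cos(ax)/sin(bx) = 1/(bx) + Σ_{k=1}^∞ (-1)^{k+1} · cos(akπ/b) · (2bx)/((kπ)² − (bx)²), where the series converges. -/
open Real Filter Finset

open Complex in
lemma exp_integral_aux (θ : ℝ) (hθ : θ ≠ 0) :
    (∫ t in (-π:ℝ)..π, Complex.exp ((θ : ℂ) * I * t)) = 2 * Real.sin (θ * π) / θ := by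
  have h : ((θ:ℂ) * I) ≠ 0 := mul_ne_zero (Complex.ofReal_ne_zero.2 hθ) Complex.I_ne_zero
  rw [integral_exp_mul_complex h]
  have key : ∀ z : ℂ, Complex.exp (z * I) - Complex.exp (-z * I) = 2 * Complex.sin z * I := by
    intro z
    rw [Complex.exp_mul_I, show (-z*I) = (-z)*I from rfl, Complex.exp_mul_I,
      Complex.cos_neg, Complex.sin_neg]
    ring
  have h1 : ((θ:ℂ) * I * π) = ((θ * π : ℝ) : ℂ) * I := by push_cast; ring
  have h2 : ((θ:ℂ) * I * (-π:ℝ)) = -((θ * π : ℝ) : ℂ) * I := by push_cast; ring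
  rw [h1, h2, key, ← Complex.ofReal_sin]
  have hθ' : (θ:ℂ) ≠ 0 := Complex.ofReal_ne_zero.2 hθ
  field_simp [Complex.I_ne_zero]

lemma coeff_aux (α : ℝ) (hα : ∀ n : ℤ, α ≠ (n:ℝ)) (n : ℤ) :
    haveI : Fact (0 < 2*π) := ⟨by positivity⟩
    fourierCoeff (AddCircle.liftIco (2*π) (-π) (fun t => (Real.cos (α*t) : ℂ))) n
      = (((-1:ℝ)^n * Real.sin (α*π) * α / (π * (α^2 - (n:ℝ)^2))) : ℝ) := by
  haveI : Fact (0 < 2*π) := ⟨by positivity⟩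
  have hπ : (π:ℝ) ≠ 0 := pi_ne_zero
  have hmn : α - n ≠ 0 := sub_ne_zero.2 (hα n)
  have hpn : -(α + n) ≠ 0 := by
    have := hα (-n); intro h; apply this; push_cast; linarith
  rw [fourierCoeff_liftIco_eq, fourierCoeffOn_eq_integral]
  simp_rw [fourier_coe_apply, smul_eq_mul]
  have hint : ∀ x : ℝ, Complex.exp (2*π*Complex.I*(-n:ℤ)*x/((-π + 2*π - -π : ℝ):ℂ)) * (Real.cos (α*x) : ℂ)
      = (Complex.exp (((α - n : ℝ):ℂ) * Complex.I * x)
          + Complex.exp (((-(α + n) : ℝ):ℂ) * Complex.I * x)) / 2 := by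
    intro x
    have hc : (Real.cos (α*x) : ℂ)
        = (Complex.exp ((α*x:ℝ) * Complex.I) + Complex.exp (-(α*x:ℝ) * Complex.I)) / 2 := by
      rw [Complex.ofReal_cos, Complex.exp_mul_I, show (-(α*x:ℝ):ℂ) * Complex.I
        = (-(α*x:ℝ):ℂ) * Complex.I from rfl, Complex.exp_mul_I, Complex.cos_neg, Complex.sin_neg]
      ring
    rw [hc, show ∀ e A B : ℂ, e * ((A+B)/2) = (e*A + e*B)/2 from by intros; ring,
      ← Complex.exp_add, ← Complex.exp_add]
    have h2π : (-(π:ℂ) + 2*π - -π) = 2*π := by ring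
    have hπC : (π:ℂ) ≠ 0 := Complex.ofReal_ne_zero.2 hπ
    congr 2 <;> · push_cast [h2π]; congr 1; field_simp; ring
  rw [intervalIntegral.integral_congr (fun x _ => hint x)]
  rw [show (-π + 2*π : ℝ) = π from by ring]
  have ia : IntervalIntegrable (fun x:ℝ => Complex.exp (((α - n : ℝ):ℂ) * Complex.I * x))
      MeasureTheory.volume (-π) π := by
    apply Continuous.intervalIntegrable; fun_prop
  have ib : IntervalIntegrable (fun x:ℝ => Complex.exp (((-(α + n) : ℝ):ℂ) * Complex.I * x))
      MeasureTheory.volume (-π) π := by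
    apply Continuous.intervalIntegrable; fun_prop
  rw [intervalIntegral.integral_div, intervalIntegral.integral_add ia ib,
    exp_integral_aux _ hmn, exp_integral_aux _ hpn]
  have hs1 : Real.sin ((α - n)*π) = (-1)^n * Real.sin (α*π) := by
    rw [sub_mul, Real.sin_sub, Real.sin_int_mul_pi,
      show ((n:ℝ)*π) = (n:ℝ)*π - 0 from by ring, Real.cos_int_mul_pi_sub, Real.cos_zero]
    ring
  have hs2 : Real.sin ((-(α + n))*π) = -((-1)^n * Real.sin (α*π)) := by
    rw [neg_mul, Real.sin_neg, add_mul, Real.sin_add, Real.sin_int_mul_pi,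
      show ((n:ℝ)*π) = (n:ℝ)*π - 0 from by ring, Real.cos_int_mul_pi_sub, Real.cos_zero]
    ring
  rw [hs1, hs2, Complex.real_smul]
  have h1 : α^2 - (n:ℝ)^2 ≠ 0 := by
    intro h
    rcases mul_eq_zero.1 (by rw [← h]; ring : (α - n) * (α + n) = 0) with h' | h'
    · exact hmn h'
    · exact hpn (by linarith)
  have hmnC : ((α:ℂ) - n) ≠ 0 := by exact_mod_cast (Complex.ofReal_ne_zero.2 hmn)
  have hpnC : -((α:ℂ) + n) ≠ 0 := by exact_mod_cast (Complex.ofReal_ne_zero.2 hpn)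
  have hπC : (π:ℂ) ≠ 0 := Complex.ofReal_ne_zero.2 hπ
  have h1C : (α:ℂ)^2 - (n:ℂ)^2 ≠ 0 := by exact_mod_cast (Complex.ofReal_ne_zero.2 h1)
  norm_cast
  push_cast
  have hapn : α + (n:ℝ) ≠ 0 := fun h => hpn (by rw [h]; ring)
  have h2pi : (π - -π) ≠ 0 := by have := pi_pos; intro h; linarith
  rw [show (2:ℝ)*(-((-1)^n * Real.sin (α*π)))/(-(α+(n:ℝ)))
      = 2*((-1)^n * Real.sin (α*π))/(α+(n:ℝ)) from by rw [mul_neg, neg_div_neg_eq],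
    div_add_div _ _ hmn hapn, div_div, one_div_mul_eq_div, div_div,
    div_eq_div_iff (by exact mul_ne_zero (mul_ne_zero (mul_ne_zero hmn hapn) two_ne_zero) h2pi)
      (mul_ne_zero hπ h1)]
  ring

/-- Partial fraction expansion of `cos (a*x) / sin (b*x)`. -/
theorem cos_div_sin_partial_fraction
    (a b x : ℝ) (hb : 0 < b) (hab : |a| ≤ b) (hx0 : x ≠ 0)
    (hx : ∀ m : ℤ, b * x ≠ m * π) :
    ∃ S : ℝ,
      Tendsto (fun N : ℕ => ∑ k ∈ Finset.range N,
          (-1 : ℝ) ^ ((k + 1) + 1) * Real.cos (a * (k + 1) * π / b) *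
            (2 * b * x / (((k + 1 : ℝ) * π) ^ 2 - (b * x) ^ 2)))
        atTop (nhds S) ∧
      Real.cos (a * x) / Real.sin (b * x) = 1 / (b * x) + S := by
  have hπ : (0:ℝ) < π := pi_pos
  haveI : Fact (0 < 2*π) := ⟨by positivity⟩
  set α : ℝ := b * x / π with hαdef
  have hbx : b * x ≠ 0 := mul_ne_zero hb.ne' hx0
  have hαπ : α * π = b * x := div_mul_cancel₀ _ hπ.ne'
  have hα : ∀ n : ℤ, α ≠ (n:ℝ) := by
    intro n h
    apply hx n
    rw [← hαπ, h]
  have hα0 : α ≠ 0 := by simpa using hα 0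
  have hsin : Real.sin (b*x) ≠ 0 := by
    rw [Real.sin_ne_zero_iff]
    exact fun n h => hx n h.symm
  set t₀ : ℝ := a * π / b with ht₀def
  have hαt₀ : ∀ m : ℝ, α * (m * t₀) = a * m * x := by
    intro m; rw [hαdef, ht₀def]; field_simp
  set C : ℤ → ℝ := fun n => (-1)^n * Real.sin (α*π) * α / (π*(α^2 - (n:ℝ)^2)) with hC
  set f : ℝ → ℂ := fun t => (Real.cos (α*t) : ℂ) with hf
  have hcont : Continuous (AddCircle.liftIco (2*π) (-π) f) := by
    apply AddCircle.liftIco_continuous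
    · show ((Real.cos (α*(-π)) : ℝ) : ℂ) = ((Real.cos (α*(-π + 2*π)) : ℝ) : ℂ)
      norm_cast
      rw [show α * (-π) = -(α*π) from by ring, show α * (-π + 2*π) = α*π from by ring,
        Real.cos_neg]
    · exact Continuous.continuousOn (by fun_prop)
  set F : C(AddCircle (2*π), ℂ) := ⟨_, hcont⟩ with hF
  have hcoeff : ∀ n : ℤ, fourierCoeff (⇑F) n = ((C n : ℝ) : ℂ) := fun n => coeff_aux α hα n
  -- summability
  have hsumm : Summable (fourierCoeff (⇑F)) := by
    apply Summable.of_norm_bounded_eventually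
      (g := fun n : ℤ => (2*|Real.sin (α*π)*α|/π) * (1/(n:ℝ)^2))
      (Summable.mul_left _ (summable_one_div_int_pow.mpr one_lt_two))
    rw [Filter.eventually_cofinite]
    apply Set.Finite.subset (Set.finite_Icc (-(⌈2*α^2⌉₊:ℤ)) (⌈2*α^2⌉₊:ℤ))
    intro n hn
    simp only [Set.mem_setOf_eq] at hn
    by_contra hmem
    apply hn
    -- here n satisfies 2α² ≤ n²
    have h2a : 2*α^2 ≤ (n:ℝ)^2 := by
      simp only [Set.mem_Icc, not_and_or, not_le] at hmem
      have hN : (⌈2*α^2⌉₊:ℤ) < |n| := by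
        rcases hmem with h | h
        · rw [abs_of_neg (by omega)]; omega
        · rw [abs_of_pos (by omega)]; omega
      have h1 : 2*α^2 ≤ ((⌈2*α^2⌉₊:ℤ):ℝ) := by
        push_cast
        exact Nat.le_ceil _
      have h2 : ((⌈2*α^2⌉₊:ℤ):ℝ) ≤ (|n|:ℝ) := by exact_mod_cast hN.le
      have h3 : (|n|:ℝ) ≤ (n:ℝ)^2 := by
        have : |n| ≤ n^2 := by nlinarith [sq_nonneg (|n| - 1), abs_nonneg n, sq_abs n]
        exact_mod_cast this
      linarith
    rw [hcoeff n, Complex.norm_real, Real.norm_eq_abs]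
    have hn2 : (0:ℝ) < (n:ℝ)^2 := by
      have : (0:ℝ) < α^2 := by positivity
      linarith
    have h1 : |C n| = |Real.sin (α*π)*α| / (π*((n:ℝ)^2 - α^2)) := by
      rw [hC]
      simp only []
      have habs1 : |(-1:ℝ)^(n:ℤ)| = 1 := by
        rcases Int.even_or_odd n with h | h
        · rw [h.neg_one_zpow, abs_one]
        · rw [h.neg_one_zpow, abs_neg, abs_one]
      rw [abs_div, mul_assoc, abs_mul, habs1, one_mul]
      congr 1
      rw [abs_mul, abs_of_pos hπ, abs_sub_comm, abs_of_nonneg (by linarith)]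
    rw [h1]
    calc |Real.sin (α*π)*α| / (π*((n:ℝ)^2 - α^2))
        ≤ |Real.sin (α*π)*α| / (π*((n:ℝ)^2/2)) := by
          apply div_le_div_of_nonneg_left (abs_nonneg _) (by positivity)
          nlinarith
      _ = (2*|Real.sin (α*π)*α|/π) * (1/(n:ℝ)^2) := by
          field_simp
  -- pointwise sum
  have hsum := has_pointwise_sum_fourier_series_of_summable hsumm ((t₀ : ℝ) : AddCircle (2*π))
  have ht₀mem : -π ≤ t₀ ∧ t₀ ≤ π := by
    rw [ht₀def]
    rw [abs_le] at hab
    constructor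
    · rw [le_div_iff₀ hb]; nlinarith
    · rw [div_le_iff₀ hb]; nlinarith
  have hlift : ∀ s : ℝ, s ∈ Set.Ico (-π) (-π + 2*π) →
      F ((s : ℝ) : AddCircle (2*π)) = f s := by
    intro s hs
    simp only [hF, ContinuousMap.coe_mk]
    exact AddCircle.liftIco_coe_apply hs
  have hFt₀ : F ((t₀ : ℝ) : AddCircle (2*π)) = ((Real.cos (a*x) : ℝ) : ℂ) := by
    rcases lt_or_eq_of_le ht₀mem.2 with h | h
    · rw [hlift t₀ ⟨ht₀mem.1, by linarith⟩]
      show ((Real.cos (α * t₀) : ℝ) : ℂ) = ((Real.cos (a*x) : ℝ) : ℂ)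
      norm_cast
      rw [show α * t₀ = α * (1 * t₀) from by ring, hαt₀, mul_one]
    · have hc : ((t₀ : ℝ) : AddCircle (2*π)) = ((-π : ℝ) : AddCircle (2*π)) := by
        rw [show t₀ = -π + 2*π from by linarith]
        exact AddCircle.coe_add_period (2*π) (-π)
      rw [hc, hlift (-π) ⟨le_refl _, by linarith⟩]
      show ((Real.cos (α * (-π)) : ℝ) : ℂ) = ((Real.cos (a*x) : ℝ) : ℂ)
      norm_cast
      rw [show α * (-π) = -(α * π) from by ring, Real.cos_neg,
        show α * π = α * (1 * t₀) from by rw [one_mul, h], hαt₀, mul_one]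
  rw [hFt₀] at hsum
  simp_rw [hcoeff, smul_eq_mul] at hsum
  -- take real parts
  set r : ℤ → ℝ := fun n => C n * Real.cos (n * t₀) with hr
  have hrsum : HasSum r (Real.cos (a*x)) := by
    have h1 := Complex.reCLM.hasSum hsum
    simp only [Complex.reCLM_apply, Complex.ofReal_re] at h1
    have hfun : ∀ n : ℤ, (((C n : ℝ):ℂ) * fourier n ((t₀:ℝ) : AddCircle (2*π))).re = r n := by
      intro n
      rw [fourier_coe_apply]
      rw [show 2 * (π:ℂ) * Complex.I * (n:ℤ) * (t₀:ℝ) / ((2*π : ℝ):ℂ)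
          = (((n:ℝ) * t₀ : ℝ):ℂ) * Complex.I from by
        have hπC : ((π:ℝ):ℂ) ≠ 0 := Complex.ofReal_ne_zero.2 pi_ne_zero
        push_cast; field_simp]
      rw [Complex.re_ofReal_mul, Complex.exp_ofReal_mul_I_re]
    exact (funext hfun : _) ▸ h1
  -- symmetrize
  have hrsum2 := hrsum.nat_add_neg
  have hrsum3 := (hasSum_nat_add_iff' 1).mpr hrsum2
  simp only [Finset.range_one, Finset.sum_singleton] at hrsum3
  have hr0 : r 0 = Real.sin (b*x) / (b*x) := by
    simp only [hr, hC, Int.cast_zero, zero_mul, Real.cos_zero, mul_one, zpow_zero, one_mul]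
    rw [hαπ, ← hαπ]
    field_simp
    ring
  -- identify the terms
  have hterm : ∀ k : ℕ, r (((k+1:ℕ)):ℤ) + r (-(((k+1:ℕ)):ℤ)) =
      Real.sin (b*x) * ((-1 : ℝ) ^ ((k + 1) + 1) * Real.cos (a * (k + 1) * π / b) *
        (2 * b * x / (((k + 1 : ℝ) * π) ^ 2 - (b * x) ^ 2))) := by
    intro k
    have hden : (((k+1 : ℝ)) * π) ^ 2 - (b*x)^2 ≠ 0 := by
      intro h
      have h' : ((k+1:ℝ)*π - b*x) * ((k+1:ℝ)*π + b*x) = 0 := by nlinarith [h]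
      rcases mul_eq_zero.1 h' with h'' | h''
      · exact hx ((k:ℤ)+1) (by push_cast; linarith)
      · exact hx (-((k:ℤ)+1)) (by push_cast; linarith)
    have hden2 : α^2 - ((k:ℝ)+1)^2 ≠ 0 := by
      have heq : α^2 - ((k:ℝ)+1)^2 = ((b*x)^2 - (((k+1:ℝ))*π)^2)/π^2 := by
        rw [hαdef]; field_simp
      rw [heq]
      apply div_ne_zero _ (by positivity)
      intro h; apply hden; linarith
    simp only [hr, hC]
    push_cast
    rw [hαπ]
    rw [show -((k:ℝ)+1) * t₀ = -(((k:ℝ)+1) * t₀) from by ring, Real.cos_neg]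
    rw [show ((k:ℝ)+1) * t₀ = ((k:ℝ)+1) * (a*π/b) from rfl]
    rw [show ((k:ℝ)+1) * (a*π/b) = a * ((k:ℝ)+1) * π / b from by ring]
    rw [zpow_neg, show ((-1:ℝ) ^ (((k:ℕ):ℤ)+1))⁻¹ = (-1:ℝ)^(((k:ℕ):ℤ)+1) from by
      rw [← inv_zpow, inv_neg, inv_one]]
    rw [show (((k:ℕ):ℤ)+1) = (((k+1:ℕ)):ℤ) from by push_cast; ring, zpow_natCast]
    have hfrac : α / (π*(α^2 - ((k:ℝ)+1)^2)) = -(b*x) / ((((k+1:ℝ))*π)^2 - (b*x)^2) := by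
      rw [div_eq_div_iff (by
          intro h
          rcases mul_eq_zero.1 h with h' | h'
          · exact hπ.ne' h'
          · exact hden2 h') hden]
      rw [hαdef]
      field_simp
      ring
    push_cast at hfrac ⊢
    rw [pow_succ (-1:ℝ) (k+1)]
    linear_combination (2 * (-1:ℝ)^(k+1) * Real.sin (b*x)
      * Real.cos (a*((k:ℝ)+1)*π/b)) * hfrac
  -- conclude
  refine ⟨(Real.cos (a*x) - Real.sin (b*x)/(b*x)) / Real.sin (b*x), ?_, ?_⟩
  · have h2 := hrsum3.div_const (Real.sin (b*x))
    have hfe : (fun k : ℕ => (r (((k+1:ℕ)):ℤ) + r (-(((k+1:ℕ)):ℤ)))/Real.sin (b*x))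
        = fun k : ℕ => (-1 : ℝ) ^ ((k + 1) + 1) * Real.cos (a * (k + 1) * π / b) *
            (2 * b * x / (((k + 1 : ℝ) * π) ^ 2 - (b * x) ^ 2)) := by
      funext k
      rw [hterm k, mul_comm, mul_div_assoc, div_self hsin, mul_one]
    have h2' := hfe ▸ h2
    have h3 : (Real.cos (a*x) + r 0 - (r (((0:ℕ)):ℤ) + r (-(((0:ℕ)):ℤ))))/Real.sin (b*x)
        = (Real.cos (a*x) - Real.sin (b*x)/(b*x)) / Real.sin (b*x) := by
      norm_num [hr0]
    rw [h3] at h2'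
    exact h2'.tendsto_sum_nat
  · field_simp
    have hs' : Real.sin (x*b) ≠ 0 := by rwa [mul_comm] at hsin
    rw [sub_div, div_self hs']
    ring
end

section
/- For every real a with −π < a < π, the series Σ_{n=1}^∞ (-1)^{n−1} sin(na)/n converges and equals a/2. -/
open Real Filter Finset

/-- For `-π < a < π`, `Σ_{n=1}^∞ (-1)^(n-1) sin (n a) / n = a / 2`. -/
theorem sum_neg_pow_sin_div (a : ℝ) (ha : -π < a) (ha' : a < π) :
    Tendsto (fun N : ℕ => ∑ n ∈ Finset.range N,
        (-1 : ℝ) ^ n * Real.sin ((n + 1) * a) / (n + 1))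
      atTop (nhds (a / 2)) := by
  set b : ℝ := π - a with hb
  have hs : 0 < Real.sin (b / 2) := by
    apply Real.sin_pos_of_pos_of_lt_pi <;> simp only [hb] <;> linarith
  have hcos2 : 0 < Real.cos (a / 2) := by
    apply Real.cos_pos_of_mem_Ioo
    constructor <;> [linarith; linarith]
  -- rewrite (-1)^n * sin((n+1)a) as sin((n+1)b)
  have key : ∀ n : ℕ, (-1 : ℝ) ^ n * Real.sin ((n + 1) * a) = Real.sin ((n + 1) * b) := by
    intro n
    have h : ((n : ℝ) + 1) * b = (n + 1) * π - (n + 1) * a := by rw [hb]; ring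
    rw [h, Real.sin_sub]
    have h1 : Real.sin ((n + 1 : ℕ) * π) = 0 := Real.sin_nat_mul_pi (n + 1)
    have h2 : Real.cos ((n + 1 : ℕ) * π) = (-1 : ℝ) ^ (n + 1) := by
      simpa using Real.cos_nat_mul_pi_sub 0 (n + 1)
    push_cast at h1 h2
    rw [h1, h2]
    ring
  -- bounded partial sums
  have hbdd : ∀ n : ℕ, ‖∑ i ∈ range n, (-1 : ℝ) ^ i * Real.sin ((i + 1) * a)‖
      ≤ 1 / Real.sin (b / 2) := by
    intro n
    set g : ℕ → ℝ := fun i => Real.cos (((i : ℝ) + 1 / 2) * b) with hg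
    have tele : ∀ i : ℕ, g i - g (i + 1) = 2 * Real.sin (b / 2) * Real.sin ((i + 1) * b) := by
      intro i
      simp only [hg]
      push_cast
      rw [Real.cos_sub_cos]
      rw [show (((i : ℝ) + 1 / 2) * b + ((i : ℝ) + 1 + 1 / 2) * b) / 2 = ((i : ℝ) + 1) * b by
          ring,
        show (((i : ℝ) + 1 / 2) * b - ((i : ℝ) + 1 + 1 / 2) * b) / 2 = -(b / 2) by ring,
        Real.sin_neg]
      ring
    have hsum : ∑ i ∈ range n, (-1 : ℝ) ^ i * Real.sin ((i + 1) * a)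
        = (g 0 - g n) / (2 * Real.sin (b / 2)) := by
      rw [eq_div_iff (by positivity), ← Finset.sum_range_sub' g n, Finset.sum_mul]
      refine Finset.sum_congr rfl fun i _ => ?_
      rw [key i, tele i]
      ring
    rw [hsum, Real.norm_eq_abs, abs_div, abs_of_pos (by positivity : (0:ℝ) < 2 * Real.sin (b/2)),
      div_le_div_iff₀ (by positivity) hs, one_mul]
    have h0 : |g 0 - g n| ≤ 2 := by
      calc |g 0 - g n| ≤ |g 0| + |g n| := abs_sub (g 0) (g n)
        _ ≤ 1 + 1 := add_le_add (Real.abs_cos_le_one _) (Real.abs_cos_le_one _)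
        _ = 2 := by norm_num
    nlinarith [hs]
  -- convergence of the series to some limit l
  obtain ⟨l, hl⟩ : ∃ l, Tendsto (fun N : ℕ => ∑ n ∈ Finset.range N,
      (-1 : ℝ) ^ n * Real.sin ((n + 1) * a) / (n + 1)) atTop (nhds l) := by
    have hanti : Antitone fun n : ℕ => (1 : ℝ) / (n + 1) := by
      intro m n hmn
      apply div_le_div_of_nonneg_left one_pos.le (by positivity)
      exact_mod_cast add_le_add_left (Nat.cast_le.mpr hmn) 1
    have h0 : Tendsto (fun n : ℕ => (1 : ℝ) / (n + 1)) atTop (nhds 0) :=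
      tendsto_one_div_add_atTop_nhds_zero_nat
    have hcs := hanti.cauchySeq_series_mul_of_tendsto_zero_of_bounded h0 hbdd
    have hcau : CauchySeq fun N : ℕ => ∑ n ∈ Finset.range N,
        (-1 : ℝ) ^ n * Real.sin ((n + 1) * a) / (n + 1) := by
      convert hcs using 2 with N
      refine Finset.sum_congr rfl fun i _ => ?_
      simp only [smul_eq_mul]
      ring
    exact cauchySeq_tendsto_of_complete hcau
  -- Abel's limit theorem
  have habel := Real.tendsto_tsum_powerSeries_nhdsWithin_lt hl
  -- identify the Abel limit with a/2
  have habel2 : Tendsto (fun x : ℝ =>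
      ∑' n : ℕ, ((-1 : ℝ) ^ n * Real.sin ((n + 1) * a) / (n + 1)) * x ^ n)
      (nhdsWithin 1 (Set.Iio 1)) (nhds (a / 2)) := by
    have heq : ∀ x : ℝ, x ∈ Set.Ioo (0 : ℝ) 1 →
        ∑' n : ℕ, ((-1 : ℝ) ^ n * Real.sin ((n + 1) * a) / (n + 1)) * x ^ n
          = (Complex.log (1 + x * Complex.exp (a * Complex.I))).im / x := by
      intro x hx
      have hxnorm : ‖(x : ℂ) * Complex.exp (a * Complex.I)‖ < 1 := by
        rw [norm_mul, Complex.norm_exp_ofReal_mul_I, mul_one, Complex.norm_real,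
          Real.norm_eq_abs, abs_of_pos hx.1]
        exact hx.2
      have hlog := Complex.hasSum_taylorSeries_log hxnorm
      have him := Complex.imCLM.hasSum hlog
      have hterm : ∀ n : ℕ,
          Complex.imCLM ((-1 : ℂ) ^ (n + 1) * ((x : ℂ) * Complex.exp (a * Complex.I)) ^ n / n)
            = (-1 : ℝ) ^ (n + 1) * x ^ n * Real.sin (n * a) / n := by
        intro n
        rw [mul_pow, ← Complex.ofReal_pow, ← Complex.exp_nat_mul]
        have h3 : ((n : ℂ) * (a * Complex.I)) = ((n * a : ℝ) : ℂ) * Complex.I := by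
          push_cast; ring
        rw [h3, Complex.exp_mul_I]
        simp only [Complex.imCLM_apply]
        rcases Nat.eq_zero_or_pos n with rfl | hn
        · simp
        have hne : (n : ℂ) ≠ 0 := Nat.cast_ne_zero.mpr hn.ne'
        rw [div_eq_mul_inv, div_eq_mul_inv, ← Complex.ofReal_natCast, ← Complex.ofReal_inv]
        have hneg : (-1 : ℂ) ^ (n + 1) = (((-1 : ℝ) ^ (n + 1) : ℝ) : ℂ) := by push_cast; ring
        rw [hneg, ← Complex.ofReal_cos, ← Complex.ofReal_sin]
        simp only [Complex.add_im, Complex.mul_im, Complex.mul_re, Complex.ofReal_re,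
          Complex.ofReal_im, Complex.I_re, Complex.I_im]
        ring
      rw [funext hterm] at him
      have h00 : ((-1 : ℝ) ^ (0 + 1) * x ^ 0 * Real.sin ((0 : ℕ) * a) / (0 : ℕ)) = 0 := by simp
      have hshift : HasSum (fun n : ℕ => (-1 : ℝ) ^ (n + 1 + 1) * x ^ (n + 1)
          * Real.sin ((n + 1) * a) / (n + 1))
          ((Complex.log (1 + x * Complex.exp (a * Complex.I))).im) := by
        have h4 := (hasSum_nat_add_iff' 1).mpr him
        simp only [Finset.range_one, Finset.sum_singleton] at h4
        rw [h00, sub_zero] at h4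
        convert h4 using 2 with n
        · rfl
        push_cast
        rfl
        rfl
      have hdiv := hshift.div_const x
      have hfinal : HasSum (fun n : ℕ => ((-1 : ℝ) ^ n * Real.sin ((n + 1) * a) / (n + 1)) * x ^ n)
          ((Complex.log (1 + x * Complex.exp (a * Complex.I))).im / x) := by
        convert hdiv using 2 with n
        · rfl
        have hx0 : x ≠ 0 := hx.1.ne'
        have hn0 : ((n : ℝ) + 1) ≠ 0 := by positivity
        field_simp
        ring
      exact hfinal.tsum_eq
    have hmem : (1 + ((1 : ℝ) : ℂ) * Complex.exp (a * Complex.I)) ∈ Complex.slitPlane := by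
      left
      rw [Complex.exp_mul_I, ← Complex.ofReal_cos, ← Complex.ofReal_sin]
      simp only [Complex.ofReal_one, one_mul, Complex.add_re, Complex.one_re, Complex.add_re,
        Complex.mul_re, Complex.ofReal_re, Complex.ofReal_im, Complex.I_re, Complex.I_im]
      have hca : Real.cos a = 2 * Real.cos (a / 2) ^ 2 - 1 := by
        have := Real.cos_two_mul (a / 2)
        rw [show 2 * (a / 2) = a by ring] at this
        linarith
      nlinarith [hcos2]
    have harg : (Complex.log (1 + ((1 : ℝ) : ℂ) * Complex.exp (a * Complex.I))).im = a / 2 := by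
      rw [Complex.log_im]
      have hrepr : (1 + ((1 : ℝ) : ℂ) * Complex.exp (a * Complex.I))
          = ((2 * Real.cos (a / 2) : ℝ) : ℂ)
            * (Complex.cos ((a / 2 : ℝ) : ℂ) + Complex.sin ((a / 2 : ℝ) : ℂ) * Complex.I) := by
        rw [Complex.exp_mul_I, ← Complex.ofReal_cos, ← Complex.ofReal_sin,
          ← Complex.ofReal_cos, ← Complex.ofReal_sin]
        have hca : Real.cos a = 2 * Real.cos (a / 2) ^ 2 - 1 := by
          have := Real.cos_two_mul (a / 2)
          rw [show 2 * (a / 2) = a by ring] at this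
          linarith
        have hsa : Real.sin a = 2 * Real.sin (a / 2) * Real.cos (a / 2) := by
          have := Real.sin_two_mul (a / 2)
          rw [show 2 * (a / 2) = a by ring] at this
          linarith
        apply Complex.ext <;>
          simp only [Complex.add_re, Complex.add_im, Complex.one_re, Complex.one_im,
            Complex.mul_re, Complex.mul_im, Complex.ofReal_re, Complex.ofReal_im,
            Complex.I_re, Complex.I_im, Complex.cos_ofReal_re, Complex.cos_ofReal_im,
            Complex.sin_ofReal_re, Complex.sin_ofReal_im, Complex.ofReal_one, one_mul] <;>
          simp only [hca, hsa] <;> ring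
      rw [hrepr]
      exact Complex.arg_mul_cos_add_sin_mul_I (by positivity)
        ⟨by linarith, by linarith [Real.pi_pos]⟩
    have hcont : Tendsto (fun x : ℝ => (Complex.log (1 + x * Complex.exp (a * Complex.I))).im / x)
        (nhdsWithin 1 (Set.Iio 1)) (nhds (a / 2)) := by
      have hF : ContinuousAt (fun x : ℝ =>
          (Complex.log (1 + x * Complex.exp (a * Complex.I))).im / x) 1 := by
        apply ContinuousAt.div
        · have hG : ContinuousAt
              (fun x : ℝ => (1 : ℂ) + (x : ℂ) * Complex.exp (a * Complex.I)) 1 := by fun_prop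
          exact Complex.continuous_im.continuousAt.comp
            (ContinuousAt.comp (g := Complex.log)
              (f := fun x : ℝ => (1 : ℂ) + (x : ℂ) * Complex.exp (a * Complex.I))
              (x := (1 : ℝ)) (continuousAt_clog hmem) hG)
        · exact continuousAt_id
        · norm_num
      have := hF.continuousWithinAt (s := Set.Iio 1)
      have h5 := this.tendsto
      rw [show (Complex.log (1 + ((1:ℝ) : ℂ) * Complex.exp (a * Complex.I))).im / (1:ℝ)
          = a / 2 by rw [harg]; norm_num] at h5
      exact h5
    refine Tendsto.congr' ?_ hcont
    filter_upwards [Ioo_mem_nhdsLT_of_mem (by norm_num : (1:ℝ) ∈ Set.Ioc 0 1)] with x hx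
    exact (heq x hx).symm
  have hlval : l = a / 2 := tendsto_nhds_unique habel habel2
  exact hlval ▸ hl
end

section
/- Let s be a real number with 0 < s < 1 and let u > 0 be real. Then the improper integral ∫_0^∞ z^{s−1}·cos(uz) dz, understood as the limit as T → ∞ of ∫_0^T z^{s−1}·cos(uz) dz, exists and equals (Γ(s)/u^s)·cos(sπ/2). -/
open Real Filter intervalIntegral

section EulerAux
open Set MeasureTheory


lemma aux_exp_int {c : ℝ} (hc : 0 < c) :
    ∫ y in Ioi (0:ℝ), Real.exp (-(c * y)) = 1 / c := by
  simpa using Real.integral_rpow_mul_exp_neg_mul_Ioi zero_lt_one hc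

lemma aux_intOn_kernel {a r : ℝ} (ha : 0 < a) (hr : 0 < r) :
    IntegrableOn (fun t : ℝ => t ^ (a - 1) * Real.exp (-(r * t))) (Ioi 0) := by
  have h1 : IntegrableOn (fun x : ℝ => Real.exp (-x) * x ^ (a - 1)) (Ioi 0) :=
    Real.GammaIntegral_convergent ha
  rw [← mul_zero r, ← integrableOn_Ioi_comp_mul_left_iff _ _ hr] at h1
  refine IntegrableOn.congr_fun (h1.const_mul ((r : ℝ) ^ (a - 1))⁻¹)
    (fun t ht => ?_) measurableSet_Ioi
  have ht' : (0:ℝ) < t := ht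
  rw [mul_rpow hr.le ht'.le]
  field_simp [(Real.rpow_pos_of_pos hr (a-1)).ne']

set_option maxHeartbeats 1000000 in
lemma aux_B (s u : ℝ) (hs0 : 0 < s) (hs1 : s < 1) (hu : 0 < u) :
    IntegrableOn (fun t : ℝ => t ^ (1-s) / (t^2+u^2)) (Ioi 0) ∧
    ∫ t in Ioi (0:ℝ), t ^ (1-s) / (t^2+u^2)
      = Real.Gamma s * Real.Gamma (1-s) * Real.cos (s*π/2) * u ^ (-s) := by
  have hd : ∀ t : ℝ, 0 < t^2 + u^2 := fun t => by positivity
  set ν := volume.restrict (Ioi (0:ℝ)) with hν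
  set f : ℝ → ℝ → ℝ := fun t y => t ^ (1-s) * Real.exp (-((t^2+u^2) * y)) with hf
  -- measurability
  have hmeas : Measurable (Function.uncurry f) := by
    rw [hf]; unfold Function.uncurry; fun_prop
  -- for each y > 0, integrable in t
  have hslice : ∀ y : ℝ, y ∈ Ioi (0:ℝ) → Integrable (fun t => f t y) ν := by
    intro y hy
    have h0 : IntegrableOn (fun t : ℝ => t ^ (1-s) * Real.exp (-y * t ^ (2:ℝ))) (Ioi 0) :=
      integrableOn_rpow_mul_exp_neg_mul_rpow (by linarith) two_pos hy
    refine IntegrableOn.congr_fun (h0.mul_const (Real.exp (-(u^2*y))))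
      (fun t ht => ?_) measurableSet_Ioi
    have ht' : (0:ℝ) < t := ht
    rw [hf]
    simp only []
    rw [Real.rpow_two, mul_assoc, ← Real.exp_add]
    ring_nf
  -- value of the t-integral of the norm, for y > 0
  have hval : ∀ y : ℝ, y ∈ Ioi (0:ℝ) →
      ∫ t, ‖f t y‖ ∂ν = ((1/2) * Real.Gamma ((2-s)/2)) *
        (y ^ (s/2 - 1) * Real.exp (-(u^2 * y))) := by
    intro y hy
    have hy' : (0:ℝ) < y := hy
    have h1 : ∫ t, ‖f t y‖ ∂ν = ∫ t in Ioi (0:ℝ), (t ^ (1-s) * Real.exp (-y * t ^ (2:ℝ)))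
        * Real.exp (-(u^2*y)) := by
      refine setIntegral_congr_fun measurableSet_Ioi (fun t ht => ?_)
      have ht' : (0:ℝ) < t := ht
      rw [Real.norm_eq_abs, abs_of_nonneg (by positivity)]
      rw [hf]; simp only []
      rw [Real.rpow_two, mul_assoc, ← Real.exp_add]
      ring_nf
    rw [h1, MeasureTheory.integral_mul_const,
      integral_rpow_mul_exp_neg_mul_rpow two_pos (by linarith) hy']
    rw [show (-(1-s+1)/2 : ℝ) = s/2 - 1 by ring, show ((1-s+1)/2 : ℝ) = (2-s)/2 by ring]
    ring
  -- integrability on the product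
  have hInt : Integrable (Function.uncurry f) (ν.prod ν) := by
    rw [MeasureTheory.integrable_prod_iff' hmeas.aestronglyMeasurable]
    constructor
    · exact (MeasureTheory.ae_restrict_iff' measurableSet_Ioi).2
        (Filter.Eventually.of_forall hslice)
    · refine MeasureTheory.Integrable.congr
        ((aux_intOn_kernel (a := s/2) (r := u^2) (by linarith) (by positivity)).const_mul
          ((1/2) * Real.Gamma ((2-s)/2))) ?_
      refine (MeasureTheory.ae_restrict_iff' measurableSet_Ioi).2
        (Filter.Eventually.of_forall fun y hy => ?_)
      simp only [Function.uncurry]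
      exact (hval y hy).symm
  -- swap
  have hswap := MeasureTheory.integral_integral_swap (f := f) hInt
  -- LHS of swap equals our integral I
  have hL : (∫ t, ∫ y, f t y ∂ν ∂ν) = ∫ t in Ioi (0:ℝ), t ^ (1-s) / (t^2+u^2) := by
    refine setIntegral_congr_fun measurableSet_Ioi (fun t ht => ?_)
    rw [hf]; simp only []
    rw [MeasureTheory.integral_const_mul, aux_exp_int (hd t)]
    ring
  -- RHS of swap
  have hR : (∫ y, ∫ t, f t y ∂ν ∂ν)
      = ((1/2) * Real.Gamma ((2-s)/2)) * ((1/u^2) ^ (s/2) * Real.Gamma (s/2)) := by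
    have h2 : (∫ y, ∫ t, f t y ∂ν ∂ν) = ∫ y in Ioi (0:ℝ),
        ((1/2) * Real.Gamma ((2-s)/2)) * (y ^ (s/2 - 1) * Real.exp (-(u^2 * y))) := by
      refine setIntegral_congr_fun measurableSet_Ioi (fun y hy => ?_)
      rw [← hval y hy]
      refine MeasureTheory.integral_congr_ae ?_
      refine (MeasureTheory.ae_restrict_iff' measurableSet_Ioi).2
        (Filter.Eventually.of_forall fun t ht => ?_)
      have ht' : (0:ℝ) < t := ht
      have : (0:ℝ) ≤ f t y := by rw [hf]; positivity
      simp only [Real.norm_eq_abs, abs_of_nonneg this]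
    rw [h2, MeasureTheory.integral_const_mul,
      Real.integral_rpow_mul_exp_neg_mul_Ioi (by linarith : (0:ℝ) < s/2) (by positivity)]
  -- integrability conclusion
  have hIntI : IntegrableOn (fun t : ℝ => t ^ (1-s) / (t^2+u^2)) (Ioi 0) := by
    have h4 := hInt.integral_prod_left
    refine MeasureTheory.Integrable.congr h4 ?_
    refine (MeasureTheory.ae_restrict_iff' measurableSet_Ioi).2
      (Filter.Eventually.of_forall fun t ht => ?_)
    simp only [Function.uncurry, hf]
    rw [MeasureTheory.integral_const_mul, aux_exp_int (hd t)]
    ring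
  refine ⟨hIntI, ?_⟩
  rw [← hL, hswap, hR]
  -- final arithmetic
  have h3 : (1/u^2 : ℝ) ^ (s/2) = u ^ (-s) := by
    rw [one_div, ← Real.rpow_two, ← Real.rpow_neg_one (u ^ (2:ℝ)),
      ← Real.rpow_mul hu.le, ← Real.rpow_mul hu.le]
    norm_num
    rw [show (-(2*(s/2)):ℝ) = -s by ring]
  rw [h3]
  have hsin2 : Real.sin (π * (s/2)) ≠ 0 := by
    refine ne_of_gt (Real.sin_pos_of_pos_of_lt_pi (by positivity) ?_)
    nlinarith [Real.pi_pos]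
  have hsin1 : Real.sin (π * s) ≠ 0 := by
    refine ne_of_gt (Real.sin_pos_of_pos_of_lt_pi (by positivity) ?_)
    nlinarith [Real.pi_pos]
  have hrefl2 : Real.Gamma (s/2) * Real.Gamma (1 - s/2) = π / Real.sin (π * (s/2)) :=
    Real.Gamma_mul_Gamma_one_sub (s/2)
  have hrefl1 : Real.Gamma s * Real.Gamma (1 - s) = π / Real.sin (π * s) :=
    Real.Gamma_mul_Gamma_one_sub s
  have hcos : Real.cos (s * π / 2) = Real.cos (π * (s/2)) := by ring_nf
  have hdouble : Real.sin (π * s) = 2 * Real.sin (π * (s/2)) * Real.cos (π * (s/2)) := by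
    rw [show π * s = 2 * (π * (s/2)) by ring, Real.sin_two_mul]
  have h22 : ((2-s)/2 : ℝ) = 1 - s/2 := by ring
  rw [h22, hcos]
  rw [show (1:ℝ)/2 * Real.Gamma (1 - s/2) * (u ^ (-s) * Real.Gamma (s/2))
      = (Real.Gamma (s/2) * Real.Gamma (1 - s/2)) * u ^ (-s) / 2 by ring,
    hrefl2]
  rw [show Real.Gamma s * Real.Gamma (1-s) * Real.cos (π * (s/2)) * u ^ (-s)
      = (Real.Gamma s * Real.Gamma (1-s)) * Real.cos (π * (s/2)) * u ^ (-s) by ring,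
    hrefl1, hdouble]
  have hcosne : Real.cos (π * (s/2)) ≠ 0 := by
    refine ne_of_gt (Real.cos_pos_of_mem_Ioo ?_)
    constructor <;> nlinarith [Real.pi_pos]
  have hc2 : Real.cos (π * s * (1/2)) ≠ 0 := by
    rw [show (π*s*(1/2):ℝ) = π*(s/2) by ring]; exact hcosne
  have hss : Real.sin (π * s / 2) ≠ 0 := by
    rw [show (π*s/2:ℝ) = π*(s/2) by ring]; exact hsin2
  have hcc : Real.cos (π * s / 2) ≠ 0 := by
    rw [show (π*s/2:ℝ) = π*(s/2) by ring]; exact hcosne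
  field_simp


lemma aux_exp_cos {t u : ℝ} (hd : 0 < t ^ 2 + u ^ 2) (T : ℝ) :
    ∫ z in (0:ℝ)..T, Real.exp (-(t * z)) * Real.cos (u * z)
      = (t + Real.exp (-(t * T)) * (u * Real.sin (u * T) - t * Real.cos (u * T)))
          / (t ^ 2 + u ^ 2) := by
  have key : ∀ z : ℝ, HasDerivAt
      (fun z => Real.exp (-(t * z)) * (u * Real.sin (u * z) - t * Real.cos (u * z))
        / (t ^ 2 + u ^ 2))
      (Real.exp (-(t * z)) * Real.cos (u * z)) z := by
    intro z
    have hu1 : HasDerivAt (fun z : ℝ => u * z) u z := by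
      simpa using (hasDerivAt_id z).const_mul u
    have ht1 : HasDerivAt (fun z : ℝ => -(t * z)) (-t) z := by
      simpa [Pi.neg_def] using ((hasDerivAt_id z).const_mul t).neg
    have he : HasDerivAt (fun z : ℝ => Real.exp (-(t * z)))
        (Real.exp (-(t * z)) * (-t)) z := ht1.exp
    have hs : HasDerivAt (fun z : ℝ => u * Real.sin (u * z))
        (u * (Real.cos (u * z) * u)) z := (hu1.sin).const_mul u
    have hc : HasDerivAt (fun z : ℝ => t * Real.cos (u * z))
        (t * (-Real.sin (u * z) * u)) z := (hu1.cos).const_mul t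
    have h := ((he.mul (hs.sub hc)).div_const (t ^ 2 + u ^ 2))
    refine (h.congr_deriv ?_).congr_of_eventuallyEq (Filter.Eventually.of_forall fun x => ?_)
    · simp only [Pi.sub_apply]
      rw [div_eq_iff hd.ne']
      ring
    · rfl
  rw [intervalIntegral.integral_eq_sub_of_hasDerivAt (fun z _ => key z)
    (((Real.continuous_exp.comp ((continuous_const.mul continuous_id).neg)).mul
      (Real.continuous_cos.comp (continuous_const.mul continuous_id))).intervalIntegrable 0 T)]
  rw [mul_zero, mul_zero, Real.sin_zero, Real.cos_zero, neg_zero, Real.exp_zero]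
  field_simp
  ring

lemma aux_q2 (s u T : ℝ) (hs0 : 0 < s) (hs1 : s < 1) (hu : 0 < u) (hT : 0 < T) :
    IntegrableOn (fun t : ℝ => t ^ (-s) * Real.exp (-(t*T)) *
        (u * Real.sin (u*T) - t * Real.cos (u*T)) / (t^2+u^2)) (Ioi 0) ∧
    |∫ t in Ioi (0:ℝ), t ^ (-s) * Real.exp (-(t*T)) *
        (u * Real.sin (u*T) - t * Real.cos (u*T)) / (t^2+u^2)|
      ≤ (3/(2*u)) * ((1/T) ^ (1-s) * Real.Gamma (1-s)) := by
  set q2 : ℝ → ℝ := fun t => t ^ (-s) * Real.exp (-(t*T)) *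
      (u * Real.sin (u*T) - t * Real.cos (u*T)) / (t^2+u^2) with hq2
  have hG : IntegrableOn (fun t : ℝ => (3/(2*u)) * (t ^ ((1-s)-1) * Real.exp (-(T*t)))) (Ioi 0) :=
    (aux_intOn_kernel (by linarith) hT).const_mul _
  have hbound : ∀ t : ℝ, t ∈ Ioi (0:ℝ) →
      ‖q2 t‖ ≤ (3/(2*u)) * (t ^ ((1-s)-1) * Real.exp (-(T*t))) := by
    intro t ht
    have ht' : (0:ℝ) < t := ht
    have hd : (0:ℝ) < t^2+u^2 := by positivity
    have hS : |u * Real.sin (u*T) - t * Real.cos (u*T)| ≤ u + t := by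
      refine (abs_sub _ _).trans ?_
      rw [abs_mul, abs_mul, abs_of_pos hu, abs_of_pos ht']
      have h1 := Real.abs_sin_le_one (u*T)
      have h2 := Real.abs_cos_le_one (u*T)
      nlinarith
    have hq : ‖q2 t‖ = t ^ (-s) * Real.exp (-(t*T)) *
        |u * Real.sin (u*T) - t * Real.cos (u*T)| / (t^2+u^2) := by
      rw [hq2, Real.norm_eq_abs, abs_div, abs_of_pos hd, abs_mul,
        abs_of_nonneg (by positivity : (0:ℝ) ≤ t ^ (-s) * Real.exp (-(t*T)))]
    rw [hq]
    have key : t ^ (-s) * Real.exp (-(t*T)) * |u * Real.sin (u*T) - t * Real.cos (u*T)| / (t^2+u^2)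
        ≤ t ^ (-s) * Real.exp (-(t*T)) * (3/(2*u)) := by
      rw [div_le_iff₀ hd]
      have hpos : (0:ℝ) ≤ t ^ (-s) * Real.exp (-(t*T)) := by positivity
      have h3 : 2*u*(u + t) ≤ 3*(t^2+u^2) := by nlinarith [sq_nonneg (t - u)]
      have h4 : |u * Real.sin (u*T) - t * Real.cos (u*T)| * (2*u) ≤ (3/(2*u)) * (t^2+u^2) * (2*u) := by
        calc |u * Real.sin (u*T) - t * Real.cos (u*T)| * (2*u) ≤ (u+t) * (2*u) := by
              exact mul_le_mul_of_nonneg_right hS (by positivity)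
          _ ≤ 3*(t^2+u^2) := by linarith
          _ = (3/(2*u)) * (t^2+u^2) * (2*u) := by field_simp
      have h5 := le_of_mul_le_mul_right (by linarith : |u * Real.sin (u*T) - t * Real.cos (u*T)| * (2*u) ≤ (3/(2*u)) * (t^2+u^2) * (2*u)) (by positivity : (0:ℝ) < 2*u)
      calc t ^ (-s) * Real.exp (-(t*T)) * |u * Real.sin (u*T) - t * Real.cos (u*T)|
          ≤ t ^ (-s) * Real.exp (-(t*T)) * ((3/(2*u)) * (t^2+u^2)) :=
            mul_le_mul_of_nonneg_left h5 hpos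
        _ = t ^ (-s) * Real.exp (-(t*T)) * (3/(2*u)) * (t^2+u^2) := by ring
    refine key.trans (le_of_eq ?_)
    rw [show ((1-s)-1 : ℝ) = -s by ring, mul_comm T t]
    ring
  have hmeas : AEStronglyMeasurable q2 (volume.restrict (Ioi 0)) := by
    have : Measurable q2 := by rw [hq2]; fun_prop
    exact this.aestronglyMeasurable
  have hint : IntegrableOn q2 (Ioi 0) := by
    refine Integrable.mono' hG hmeas ?_
    exact (MeasureTheory.ae_restrict_iff' measurableSet_Ioi).2 (Filter.Eventually.of_forall hbound)
  refine ⟨hint, ?_⟩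
  have h6 : ‖∫ t in Ioi (0:ℝ), q2 t‖ ≤ ∫ t in Ioi (0:ℝ), (3/(2*u)) * (t ^ ((1-s)-1) * Real.exp (-(T*t))) := by
    refine MeasureTheory.norm_integral_le_of_norm_le hG ?_
    exact (MeasureTheory.ae_restrict_iff' measurableSet_Ioi).2 (Filter.Eventually.of_forall hbound)
  rw [MeasureTheory.integral_const_mul, Real.integral_rpow_mul_exp_neg_mul_Ioi (by linarith) hT] at h6
  exact (Real.norm_eq_abs _ ▸ h6)

end EulerAux

set_option maxHeartbeats 1000000 in
open Set MeasureTheory in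
/-- Euler: `∫_0^∞ z^(s-1) cos (u z) dz = Γ(s)/u^s · cos (sπ/2)` (as an improper
limit of integrals over `[0, T]`) for `0 < s < 1` and `u > 0`. -/
theorem integral_rpow_mul_cos (s u : ℝ) (hs0 : 0 < s) (hs1 : s < 1) (hu : 0 < u) :
    Tendsto (fun T : ℝ => ∫ z in (0 : ℝ)..T, z ^ (s - 1) * Real.cos (u * z))
      atTop (nhds (Real.Gamma s / u ^ s * Real.cos (s * π / 2))) := by
  have hd : ∀ t : ℝ, 0 < t^2 + u^2 := fun t => by positivity
  have h1s : (0:ℝ) < 1 - s := by linarith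
  have hΓ1 : 0 < Real.Gamma (1-s) := Real.Gamma_pos_of_pos h1s
  set ν := volume.restrict (Ioi (0:ℝ)) with hν
  set I : ℝ := ∫ t in Ioi (0:ℝ), t ^ (1-s) / (t^2+u^2) with hI
  set R : ℝ → ℝ := fun T => ∫ t in Ioi (0:ℝ), t ^ (-s) * Real.exp (-(t*T)) *
      (u * Real.sin (u*T) - t * Real.cos (u*T)) / (t^2+u^2) with hR
  -- key identity
  have key : ∀ T : ℝ, 0 < T →
      (∫ z in (0:ℝ)..T, z ^ (s-1) * Real.cos (u*z)) = (I + R T) / Real.Gamma (1-s) := by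
    intro T hT
    set g : ℝ → ℝ → ℝ := fun z t => (t ^ (-s) * Real.exp (-(t*z))) * Real.cos (u*z) with hg
    set μT := volume.restrict (Ioc (0:ℝ) T) with hμT
    have hmeas : Measurable (Function.uncurry g) := by
      rw [hg]; unfold Function.uncurry; fun_prop
    -- kernel value for z > 0
    have hker : ∀ z : ℝ, 0 < z →
        ∫ t, (t ^ (-s) * Real.exp (-(t*z))) ∂ν = (1/z) ^ (1-s) * Real.Gamma (1-s) := by
      intro z hz
      rw [← Real.integral_rpow_mul_exp_neg_mul_Ioi h1s hz]
      refine setIntegral_congr_fun measurableSet_Ioi (fun t ht => ?_)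
      rw [show ((1-s)-1 : ℝ) = -s by ring, mul_comm t z]
    -- sections integrable in t
    have hslice : ∀ z : ℝ, z ∈ Ioc (0:ℝ) T → Integrable (fun t => g z t) ν := by
      intro z hz
      have h0 := (aux_intOn_kernel h1s hz.1).mul_const (Real.cos (u*z))
      refine IntegrableOn.congr_fun h0 (fun t ht => ?_) measurableSet_Ioi
      rw [hg]; simp only []
      rw [show ((1-s)-1 : ℝ) = -s by ring, mul_comm z t]
    -- norm integral over t, for z > 0
    have hnorm : ∀ z : ℝ, 0 < z →
        ∫ t, ‖g z t‖ ∂ν = |Real.cos (u*z)| * ((1/z) ^ (1-s) * Real.Gamma (1-s)) := by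
      intro z hz
      rw [← hker z hz, ← MeasureTheory.integral_const_mul]
      refine setIntegral_congr_fun measurableSet_Ioi (fun t ht => ?_)
      have ht' : (0:ℝ) < t := ht
      rw [hg]; simp only []
      rw [Real.norm_eq_abs, abs_mul, abs_of_nonneg (by positivity : (0:ℝ) ≤ t ^ (-s) * Real.exp (-(t*z)))]
      ring
    -- integrability on product
    have hInt : Integrable (Function.uncurry g) (μT.prod ν) := by
      rw [MeasureTheory.integrable_prod_iff hmeas.aestronglyMeasurable]
      constructor
      · exact (MeasureTheory.ae_restrict_iff' measurableSet_Ioc).2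
          (Filter.Eventually.of_forall hslice)
      · have hbig : IntegrableOn (fun z : ℝ => Real.Gamma (1-s) * z ^ (s-1)) (Ioc 0 T) := by
          have := (intervalIntegral.intervalIntegrable_rpow' (a := 0) (b := T)
            (by linarith : (-1:ℝ) < s - 1)).const_mul (Real.Gamma (1-s))
          rwa [intervalIntegrable_iff_integrableOn_Ioc_of_le hT.le] at this
        refine Integrable.mono' hbig ?_ ?_
        · exact ((hmeas.norm.stronglyMeasurable).integral_prod_right' (ν := ν)).aestronglyMeasurable
        · refine (MeasureTheory.ae_restrict_iff' measurableSet_Ioc).2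
            (Filter.Eventually.of_forall fun z hz => ?_)
          simp only [Function.uncurry]
          rw [Real.norm_eq_abs, abs_of_nonneg (MeasureTheory.integral_nonneg
            (fun t => norm_nonneg _)), hnorm z hz.1]
          have hz' : (0:ℝ) < z := hz.1
          have h7 : (1/z : ℝ) ^ (1-s) = z ^ (s-1) := by
            rw [one_div, ← Real.rpow_neg_one z, ← Real.rpow_mul hz'.le]
            norm_num
          rw [h7]
          have hc1 := abs_cos_le_one (u*z)
          have hzpow : (0:ℝ) ≤ z ^ (s-1) := (Real.rpow_pos_of_pos hz' _).le
          calc |Real.cos (u*z)| * (z^(s-1) * Real.Gamma (1-s))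
              ≤ z^(s-1) * Real.Gamma (1-s) :=
                mul_le_of_le_one_left (mul_nonneg hzpow hΓ1.le) hc1
            _ = Real.Gamma (1-s) * z^(s-1) := mul_comm _ _
    -- Fubini
    have hswap := MeasureTheory.integral_integral_swap (f := g) hInt
    -- LHS of swap = Γ(1-s) * interval integral
    have hL : (∫ z, ∫ t, g z t ∂ν ∂μT)
        = Real.Gamma (1-s) * ∫ z in (0:ℝ)..T, z ^ (s-1) * Real.cos (u*z) := by
      rw [intervalIntegral.integral_of_le hT.le, ← MeasureTheory.integral_const_mul]
      refine setIntegral_congr_fun measurableSet_Ioc (fun z hz => ?_)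
      have hz' : (0:ℝ) < z := hz.1
      rw [hg]; simp only []
      rw [MeasureTheory.integral_mul_const, hker z hz']
      have h7 : (1/z : ℝ) ^ (1-s) = z ^ (s-1) := by
        rw [one_div, ← Real.rpow_neg_one z, ← Real.rpow_mul hz'.le]
        norm_num
      rw [h7]; ring
    -- RHS of swap = I + R T
    have hRr : (∫ t, ∫ z, g z t ∂μT ∂ν) = I + R T := by
      have hinner : ∀ t : ℝ, t ∈ Ioi (0:ℝ) →
          (∫ z, g z t ∂μT) = t ^ (1-s) / (t^2+u^2)
            + t ^ (-s) * Real.exp (-(t*T)) * (u * Real.sin (u*T) - t * Real.cos (u*T)) / (t^2+u^2) := by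
        intro t ht
        have ht' : (0:ℝ) < t := ht
        have : (∫ z, g z t ∂μT) = ∫ z in (0:ℝ)..T, t ^ (-s) * (Real.exp (-(t*z)) * Real.cos (u*z)) := by
          rw [intervalIntegral.integral_of_le hT.le]
          refine setIntegral_congr_fun measurableSet_Ioc (fun z hz => ?_)
          rw [hg]; simp only []; ring
        rw [this, intervalIntegral.integral_const_mul, aux_exp_cos (hd t) T]
        have ht1 : t ^ (-s) * t = t ^ (1-s) := by
          rw [show (1-s : ℝ) = -s + 1 by ring, Real.rpow_add ht', Real.rpow_one]
        rw [← ht1]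
        ring
      rw [MeasureTheory.integral_congr_ae ((MeasureTheory.ae_restrict_iff' measurableSet_Ioi).2
        (Filter.Eventually.of_forall hinner))]
      rw [MeasureTheory.integral_add (aux_B s u hs0 hs1 hu).1 (aux_q2 s u T hs0 hs1 hu hT).1]
    rw [hL, hRr] at hswap
    rw [← hswap, mul_div_cancel_left₀ _ hΓ1.ne']
  -- remainder tends to zero
  have hR0 : Tendsto R atTop (nhds 0) := by
    have hbnd : ∀ᶠ T in atTop, ‖R T‖ ≤ (3/(2*u)) * Real.Gamma (1-s) * T ^ (s-1) := by
      filter_upwards [eventually_gt_atTop 0] with T hT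
      have h8 := (aux_q2 s u T hs0 hs1 hu hT).2
      have h7 : (1/T : ℝ) ^ (1-s) = T ^ (s-1) := by
        rw [one_div, ← Real.rpow_neg_one T, ← Real.rpow_mul hT.le]; norm_num
      rw [Real.norm_eq_abs]
      calc |R T| ≤ (3/(2*u)) * ((1/T) ^ (1-s) * Real.Gamma (1-s)) := h8
        _ = (3/(2*u)) * Real.Gamma (1-s) * T ^ (s-1) := by rw [h7]; ring
    have hg0 : Tendsto (fun T : ℝ => (3/(2*u)) * Real.Gamma (1-s) * T ^ (s-1)) atTop (nhds 0) := by
      have h9 := (tendsto_rpow_neg_atTop (by linarith : (0:ℝ) < 1 - s)).const_mul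
        ((3/(2*u)) * Real.Gamma (1-s))
      rw [mul_zero] at h9
      refine h9.congr (fun T => ?_)
      rw [show -(1-s) = s-1 by ring]
    exact squeeze_zero_norm' hbnd hg0
  have hfin : Tendsto (fun T => (I + R T) / Real.Gamma (1-s)) atTop
      (nhds ((I + 0) / Real.Gamma (1-s))) := (tendsto_const_nhds.add hR0).div_const _
  have heq : (fun T => (I + R T) / Real.Gamma (1-s))
      =ᶠ[atTop] fun T : ℝ => ∫ z in (0:ℝ)..T, z ^ (s-1) * Real.cos (u*z) := by
    filter_upwards [eventually_gt_atTop 0] with T hT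
    exact (key T hT).symm
  have hfin2 := hfin.congr' heq
  have hval : (I + 0) / Real.Gamma (1-s) = Real.Gamma s / u ^ s * Real.cos (s * π / 2) := by
    rw [add_zero, hI, (aux_B s u hs0 hs1 hu).2, Real.rpow_neg hu.le]
    field_simp
  rwa [hval] at hfin2
end

section
/- Let k and l be positive integers with k < l, and let s be a real number with 0 < s < 1. Then Σ_{n=0}^∞ (1/((2n+1)l − k)^s − 1/((2n+1)l + k)^s) = ((π/l)^s/(sin(sπ/2)·Γ(s))) · Σ_{n=1}^∞ (-1)^{n+1}·sin(nkπ/l)/n^{1−s}, where the series on the right converges (conditionally) and the series on the left converges absolutely. -/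
open Real Filter Finset
open HurwitzZeta

/-- MVT bound for differences of complex powers of real numbers. -/
lemma mal_cpow_diff_bound {x y : ℝ} (hx : 0 < x) (hxy : x ≤ y) {w : ℂ} (hw : 0 ≤ w.re) :
    ‖(x:ℂ) ^ (-w) - (y:ℂ) ^ (-w)‖ ≤ ‖w‖ * x ^ (-w.re - 1) * (y - x) := by
  have key : ∀ t ∈ Set.Icc x y, HasDerivWithinAt (fun u : ℝ => (u:ℂ) ^ (-w))
      (-w * (t:ℂ) ^ (-w - 1)) (Set.Icc x y) t := by
    intro t ht
    have ht0 : (0:ℝ) < t := lt_of_lt_of_le hx ht.1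
    have h1 : HasDerivAt (fun z : ℂ => z ^ (-w)) (-w * (t:ℂ) ^ (-w - 1)) (t:ℂ) := by
      have := (hasDerivAt_id (t:ℂ)).cpow_const
        (c := -w) (by simp [Complex.mem_slitPlane_iff, ht0])
      simpa using this
    exact h1.comp_ofReal.hasDerivWithinAt
  have bound : ∀ t ∈ Set.Icc x y, ‖-w * (t:ℂ) ^ (-w - 1)‖ ≤ ‖w‖ * x ^ (-w.re - 1) := by
    intro t ht
    have ht0 : (0:ℝ) < t := lt_of_lt_of_le hx ht.1
    rw [norm_mul, norm_neg]
    gcongr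
    rw [Complex.norm_cpow_eq_rpow_re_of_pos ht0]
    have : (-w - 1).re = -w.re - 1 := by simp
    rw [this]
    exact Real.rpow_le_rpow_of_nonpos hx ht.1 (by linarith)
  have := (convex_Icc x y).norm_image_sub_le_of_norm_hasDerivWithin_le key bound
    (Set.left_mem_Icc.mpr hxy) (Set.right_mem_Icc.mpr hxy)
  calc ‖(x:ℂ) ^ (-w) - (y:ℂ) ^ (-w)‖ = ‖(y:ℂ) ^ (-w) - (x:ℂ) ^ (-w)‖ := norm_sub_rev _ _
    _ ≤ ‖w‖ * x ^ (-w.re - 1) * ‖y - x‖ := this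
    _ = ‖w‖ * x ^ (-w.re - 1) * (y - x) := by
        rw [Real.norm_eq_abs, abs_of_nonneg (by linarith)]

lemma mal_summable_aux {p : ℝ} (hp : 0 < p) :
    Summable (fun n : ℕ => ((n:ℝ) + 1) ^ (-p - 1)) := by
  have h1 : Summable (fun n : ℕ => 1 / (n:ℝ) ^ (p + 1)) :=
    Real.summable_one_div_nat_rpow.mpr (by linarith)
  have h2 := (summable_nat_add_iff 1).mpr h1
  refine h2.congr fun n => ?_
  rw [Nat.cast_add, Nat.cast_one, one_div, ← Real.rpow_neg (by positivity)]
  ring_nf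

/-- Abel summation identity. -/
lemma mal_abel_sum (c b : ℕ → ℂ) (N : ℕ) :
    ∑ n ∈ range N, c n * b n
      = (∑ n ∈ range N, (∑ i ∈ range (n + 1), c i) * (b n - b (n + 1)))
        + (∑ i ∈ range N, c i) * b N := by
  induction N with
  | zero => simp
  | succ N ih =>
      rw [sum_range_succ (f := fun n => c n * b n), sum_range_succ
        (f := fun n => (∑ i ∈ range (n + 1), c i) * (b n - b (n + 1))), ih]
      have hS : ∑ i ∈ range (N + 1), c i = (∑ i ∈ range N, c i) + c N :=
        sum_range_succ c N
      rw [hS]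
      ring

lemma mal_sin_partial_bound {θ : ℝ} (h1 : 0 < θ) (h2 : θ < 2 * π) :
    ∃ C : ℝ, 0 ≤ C ∧ ∀ N : ℕ, |∑ n ∈ range N, Real.sin (((n:ℝ) + 1) * θ)| ≤ C := by
  set z : ℂ := Complex.exp (θ * Complex.I) with hz
  have hz1 : z ≠ 1 := by
    intro h
    obtain ⟨n, hn⟩ := Complex.exp_eq_one_iff.mp h
    have hθ : θ = n * (2 * π) := by
      have := congrArg Complex.im hn
      simpa using this
    rcases le_or_gt (n:ℝ) 0 with h' | h'
    · nlinarith [Real.pi_pos]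
    · have : (1:ℝ) ≤ n := by exact_mod_cast (by exact_mod_cast h' : (0:ℤ) < n)
      nlinarith [Real.pi_pos]
  have habs : ‖z‖ = 1 := Complex.norm_exp_ofReal_mul_I θ
  have hzne : ‖z - 1‖ ≠ 0 := by
    simpa [sub_eq_zero] using hz1
  refine ⟨2 / ‖z - 1‖, by positivity, fun N => ?_⟩
  have him : (∑ n ∈ range N, Real.sin (((n:ℝ) + 1) * θ)) = (∑ n ∈ range N, z ^ (n + 1)).im := by
    rw [Complex.im_sum]
    refine Finset.sum_congr rfl fun n _ => ?_
    have : z ^ (n + 1) = Complex.exp ((((n:ℝ) + 1) * θ : ℝ) * Complex.I) := by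
      rw [hz, ← Complex.exp_nat_mul]
      congr 1
      push_cast
      ring
    rw [this, Complex.exp_ofReal_mul_I_im]
  have hgeom : ∑ n ∈ range N, z ^ (n + 1) = z * ((z ^ N - 1) / (z - 1)) := by
    rw [← geom_sum_eq hz1, Finset.mul_sum]
    exact Finset.sum_congr rfl fun n _ => (pow_succ' z n)
  rw [him]
  calc |(∑ n ∈ range N, z ^ (n + 1)).im| ≤ ‖∑ n ∈ range N, z ^ (n + 1)‖ :=
        Complex.abs_im_le_norm _
    _ = ‖z‖ * (‖z ^ N - 1‖ / ‖z - 1‖) := by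
        rw [hgeom, norm_mul, norm_div]
    _ ≤ 1 * (2 / ‖z - 1‖) := by
        rw [habs]
        gcongr
        calc ‖z ^ N - 1‖ ≤ ‖z ^ N‖ + 1 := by
              simpa using norm_sub_le (z ^ N) 1
          _ ≤ 2 := by rw [norm_pow, habs, one_pow]; norm_num
    _ = 2 / ‖z - 1‖ := one_mul _

noncomputable def malG (a : ℝ) (s : ℂ) : ℂ :=
  ∑' n : ℕ, (1 / ((n:ℂ) + a) ^ s - 1 / ((n:ℂ) + 1 - a) ^ s) / 2

lemma malG_term_eq (a : ℝ) (ha : 0 < a) (ha' : a ≤ 1 / 2) (s : ℂ) (n : ℕ) :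
    (1 / ((n:ℂ) + a) ^ s - 1 / ((n:ℂ) + 1 - a) ^ s) / 2
      = ((((n:ℝ) + a : ℝ) : ℂ) ^ (-s) - (((n:ℝ) + 1 - a : ℝ) : ℂ) ^ (-s)) / 2 := by
  have e1 : ((n:ℂ) + a) = (((n:ℝ) + a : ℝ) : ℂ) := by push_cast; ring
  have e2 : ((n:ℂ) + 1 - a) = (((n:ℝ) + 1 - a : ℝ) : ℂ) := by push_cast; ring
  rw [e1, e2, Complex.cpow_neg, Complex.cpow_neg, one_div, one_div]

lemma malG_term_bound {a : ℝ} (ha : 0 < a) (ha' : a ≤ 1 / 2) {s : ℂ} (hs : 0 < s.re) (n : ℕ) :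
    ‖(1 / ((n:ℂ) + a) ^ s - 1 / ((n:ℂ) + 1 - a) ^ s) / 2‖
      ≤ ‖s‖ * a ^ (-s.re - 1) * ((n:ℝ) + 1) ^ (-s.re - 1) := by
  rw [malG_term_eq a ha ha' s n]
  have hx : (0:ℝ) < (n:ℝ) + a := by positivity
  have hxy : (n:ℝ) + a ≤ (n:ℝ) + 1 - a := by linarith
  have h1 := mal_cpow_diff_bound hx hxy (w := s) hs.le
  have h2 : ((n:ℝ) + a) ^ (-s.re - 1) ≤ a ^ (-s.re - 1) * ((n:ℝ) + 1) ^ (-s.re - 1) := by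
    have hle : a * ((n:ℝ) + 1) ≤ (n:ℝ) + a := by nlinarith [Nat.cast_nonneg (α := ℝ) n]
    calc ((n:ℝ) + a) ^ (-s.re - 1) ≤ (a * ((n:ℝ) + 1)) ^ (-s.re - 1) :=
          Real.rpow_le_rpow_of_nonpos (by positivity) hle (by linarith)
      _ = a ^ (-s.re - 1) * ((n:ℝ) + 1) ^ (-s.re - 1) :=
          Real.mul_rpow ha.le (by positivity)
  have h3 : ((n:ℝ) + 1 - a) - ((n:ℝ) + a) ≤ 1 := by linarith
  calc ‖((((n:ℝ) + a : ℝ) : ℂ) ^ (-s) - (((n:ℝ) + 1 - a : ℝ) : ℂ) ^ (-s)) / 2‖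
      ≤ ‖(((n:ℝ) + a : ℝ) : ℂ) ^ (-s) - (((n:ℝ) + 1 - a : ℝ) : ℂ) ^ (-s)‖ := by
        rw [norm_div]
        simp only [Complex.norm_ofNat]
        nlinarith [norm_nonneg ((((n:ℝ) + a : ℝ) : ℂ) ^ (-s) - (((n:ℝ) + 1 - a : ℝ) : ℂ) ^ (-s))]
    _ ≤ ‖s‖ * ((n:ℝ) + a) ^ (-s.re - 1) * (((n:ℝ) + 1 - a) - ((n:ℝ) + a)) := h1
    _ ≤ ‖s‖ * ((n:ℝ) + a) ^ (-s.re - 1) * 1 := by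
        gcongr
    _ = ‖s‖ * ((n:ℝ) + a) ^ (-s.re - 1) := mul_one _
    _ ≤ ‖s‖ * (a ^ (-s.re - 1) * ((n:ℝ) + 1) ^ (-s.re - 1)) := by
        gcongr
    _ = ‖s‖ * a ^ (-s.re - 1) * ((n:ℝ) + 1) ^ (-s.re - 1) := by ring
lemma malG_summable {a : ℝ} (ha : 0 < a) (ha' : a ≤ 1 / 2) {s : ℂ} (hs : 0 < s.re) :
    Summable (fun n : ℕ => (1 / ((n:ℂ) + a) ^ s - 1 / ((n:ℂ) + 1 - a) ^ s) / 2) := by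
  refine Summable.of_norm_bounded ((mal_summable_aux hs).mul_left
    (‖s‖ * a ^ (-s.re - 1))) fun n => ?_
  simpa [mul_assoc] using malG_term_bound ha ha' hs n

lemma malG_differentiableOn {a : ℝ} (ha : 0 < a) (ha' : a ≤ 1 / 2) :
    DifferentiableOn ℂ (malG a) {z : ℂ | 0 < z.re} := by
  intro s₀ hs₀
  have hδ : 0 < s₀.re / 2 := by exact half_pos hs₀
  set δ : ℝ := s₀.re / 2 with hδdef
  have hball : DifferentiableOn ℂ (malG a) (Metric.ball s₀ δ) := by
    refine Complex.differentiableOn_tsum_of_summable_norm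
      (u := fun n => (‖s₀‖ + δ) * a ^ (-(s₀.re + δ) - 1) * ((n:ℝ) + 1) ^ (-δ - 1))
      ((mal_summable_aux hδ).mul_left ((‖s₀‖ + δ) * a ^ (-(s₀.re + δ) - 1))) (fun n => ?_)
      Metric.isOpen_ball (fun n w hw => ?_)
    · -- differentiability of each term
      have h1 : ((n:ℂ) + a) ≠ 0 := by
        intro h
        have := congrArg Complex.re h
        simp at this
        nlinarith [Nat.cast_nonneg (α := ℝ) n]
      have h2 : ((n:ℂ) + 1 - a) ≠ 0 := by
        intro h
        have := congrArg Complex.re h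
        simp at this
        nlinarith [Nat.cast_nonneg (α := ℝ) n]
      have hd : ∀ c : ℂ, c ≠ 0 → Differentiable ℂ (fun z : ℂ => 1 / c ^ z) := by
        intro c hc
        intro x
        exact (differentiableAt_const 1).div (differentiableAt_id.const_cpow (Or.inl hc))
          (by simp [Complex.cpow_eq_zero_iff, hc])
      exact (((hd _ h1).sub (hd _ h2)).div_const 2).differentiableOn
    · -- bound
      have hwre : δ < w.re := by
        have := Complex.abs_re_le_norm (s₀ - w)
        have hd' : dist w s₀ < δ := Metric.mem_ball.mp hw
        rw [Complex.dist_eq] at hd'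
        have : |s₀.re - w.re| ≤ ‖s₀ - w‖ := by
          simpa using Complex.abs_re_le_norm (s₀ - w)
        have h3 : ‖s₀ - w‖ < δ := by rwa [norm_sub_rev]
        have := abs_lt.mp (lt_of_le_of_lt this h3)
        simp only [hδdef] at this ⊢
        linarith [this.1, this.2]
      have hwre' : w.re ≤ s₀.re + δ := by
        have hd' : dist w s₀ < δ := Metric.mem_ball.mp hw
        rw [Complex.dist_eq] at hd'
        have : |w.re - s₀.re| ≤ ‖w - s₀‖ := by
          simpa using Complex.abs_re_le_norm (w - s₀)
        have := abs_lt.mp (lt_of_le_of_lt this hd')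
        linarith [this.1, this.2]
      have hwn : ‖w‖ ≤ ‖s₀‖ + δ := by
        have : ‖w‖ - ‖s₀‖ ≤ ‖w - s₀‖ := by
          simpa using norm_sub_norm_le w s₀
        have hd' : dist w s₀ < δ := Metric.mem_ball.mp hw
        rw [dist_eq_norm] at hd'
        linarith
      have hw0 : 0 < w.re := lt_trans hδ hwre
      calc ‖(1 / ((n:ℂ) + a) ^ w - 1 / ((n:ℂ) + 1 - a) ^ w) / 2‖
          ≤ ‖w‖ * a ^ (-w.re - 1) * ((n:ℝ) + 1) ^ (-w.re - 1) := malG_term_bound ha ha' hw0 n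
        _ ≤ (‖s₀‖ + δ) * a ^ (-(s₀.re + δ) - 1) * ((n:ℝ) + 1) ^ (-δ - 1) := by
            have e1 : a ^ (-w.re - 1) ≤ a ^ (-(s₀.re + δ) - 1) :=
              Real.rpow_le_rpow_of_exponent_ge ha (by linarith) (by linarith)
            have e2 : ((n:ℝ) + 1) ^ (-w.re - 1) ≤ ((n:ℝ) + 1) ^ (-δ - 1) :=
              Real.rpow_le_rpow_of_exponent_le (by simp [Nat.cast_nonneg]) (by linarith)
            have p1 : (0:ℝ) ≤ a ^ (-w.re - 1) := by positivity
            have p2 : (0:ℝ) ≤ ((n:ℝ) + 1) ^ (-w.re - 1) := by positivity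
            have p3 : (0:ℝ) ≤ ‖s₀‖ + δ := by positivity
            have p4 : (0:ℝ) ≤ a ^ (-(s₀.re + δ) - 1) := by positivity
            gcongr
  exact (hball.differentiableAt (Metric.ball_mem_nhds _ hδ)).differentiableWithinAt

lemma malG_eq_hurwitz {a : ℝ} (ha : 0 < a) (ha' : a ≤ 1 / 2) :
    Set.EqOn (malG a) (hurwitzZetaOdd a) {z : ℂ | 0 < z.re} := by
  have hO : IsOpen {z : ℂ | 0 < z.re} := by
    exact isOpen_lt continuous_const Complex.continuous_re
  have hO1 : IsOpen {z : ℂ | 1 < z.re} := by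
    exact isOpen_lt continuous_const Complex.continuous_re
  refine AnalyticOnNhd.eqOn_of_preconnected_of_eventuallyEq
    (f := malG a) (g := hurwitzZetaOdd a)
    ((malG_differentiableOn ha ha').analyticOnNhd hO)
    (((differentiable_hurwitzZetaOdd a).differentiableOn).analyticOnNhd hO)
    ((convex_halfSpace_re_gt 0).isPreconnected) (z₀ := 2) (by norm_num [Set.mem_setOf_eq]) ?_
  have hmem : {z : ℂ | 1 < z.re} ∈ nhds (2:ℂ) :=
    hO1.mem_nhds (by norm_num [Set.mem_setOf_eq])
  filter_upwards [hmem] with z hz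
  exact (hasSum_nat_hurwitzZetaOdd_of_mem_Icc ⟨ha.le, by linarith⟩ hz).tsum_eq
noncomputable def malS (a : ℝ) (n : ℕ) : ℝ :=
  ∑ i ∈ range n, Real.sin (((i:ℝ) + 1) * (2 * π * a))

noncomputable def malF (a : ℝ) (w : ℂ) : ℂ :=
  ∑' n : ℕ, (malS a (n + 1) : ℂ) * (((n:ℂ) + 1) ^ (-w) - ((n:ℂ) + 2) ^ (-w))

lemma malF_base_eq (n : ℕ) (w : ℂ) :
    ((n:ℂ) + 1) ^ (-w) - ((n:ℂ) + 2) ^ (-w)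
      = ((((n:ℝ) + 1 : ℝ)) : ℂ) ^ (-w) - ((((n:ℝ) + 2 : ℝ)) : ℂ) ^ (-w) := by
  norm_num

lemma malF_term_bound {a C : ℝ} (hC : ∀ N, |malS a N| ≤ C) {w : ℂ} (hw : 0 < w.re) (n : ℕ) :
    ‖(malS a (n + 1) : ℂ) * (((n:ℂ) + 1) ^ (-w) - ((n:ℂ) + 2) ^ (-w))‖
      ≤ C * ‖w‖ * ((n:ℝ) + 1) ^ (-w.re - 1) := by
  rw [norm_mul, malF_base_eq, Complex.norm_real]
  have h1 : ‖((((n:ℝ) + 1 : ℝ)) : ℂ) ^ (-w) - ((((n:ℝ) + 2 : ℝ)) : ℂ) ^ (-w)‖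
      ≤ ‖w‖ * ((n:ℝ) + 1) ^ (-w.re - 1) * (((n:ℝ) + 2) - ((n:ℝ) + 1)) :=
    mal_cpow_diff_bound (by positivity) (by linarith) hw.le
  have h2 : (((n:ℝ) + 2) - ((n:ℝ) + 1)) = 1 := by ring
  rw [h2, mul_one] at h1
  calc ‖(malS a (n + 1) : ℝ)‖ * ‖((((n:ℝ) + 1 : ℝ)) : ℂ) ^ (-w) - ((((n:ℝ) + 2 : ℝ)) : ℂ) ^ (-w)‖
      ≤ C * (‖w‖ * ((n:ℝ) + 1) ^ (-w.re - 1)) := by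
        have := hC (n + 1)
        have h0 : (0:ℝ) ≤ C := le_trans (abs_nonneg _) (hC 0)
        exact mul_le_mul (by rwa [Real.norm_eq_abs]) h1 (norm_nonneg _) h0
    _ = C * ‖w‖ * ((n:ℝ) + 1) ^ (-w.re - 1) := by ring

lemma malF_summable {a C : ℝ} (hC : ∀ N, |malS a N| ≤ C) {w : ℂ} (hw : 0 < w.re) :
    Summable (fun n : ℕ => (malS a (n + 1) : ℂ) * (((n:ℂ) + 1) ^ (-w) - ((n:ℂ) + 2) ^ (-w))) := by
  refine Summable.of_norm_bounded ((mal_summable_aux hw).mul_left (C * ‖w‖)) fun n => ?_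
  simpa [mul_assoc] using malF_term_bound hC hw n

lemma malF_partial_tendsto {a C : ℝ} (hC : ∀ N, |malS a N| ≤ C) {w : ℂ} (hw : 0 < w.re) :
    Tendsto (fun N : ℕ => ∑ n ∈ range N,
        (Real.sin (((n:ℝ) + 1) * (2 * π * a)) : ℂ) * ((n:ℂ) + 1) ^ (-w))
      atTop (nhds (malF a w)) := by
  set c : ℕ → ℂ := fun n => (Real.sin (((n:ℝ) + 1) * (2 * π * a)) : ℂ) with hc
  set b : ℕ → ℂ := fun n => ((n:ℂ) + 1) ^ (-w) with hb
  have hSc : ∀ n, (∑ i ∈ range n, c i) = (malS a n : ℂ) := by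
    intro n
    simp [hc, malS, Complex.ofReal_sum]
  have hbb : ∀ n : ℕ, b (n + 1) = ((n:ℂ) + 2) ^ (-w) := by
    intro n
    simp only [hb]
    norm_num
    ring_nf
  have habel : ∀ N, (∑ n ∈ range N, c n * b n)
      = (∑ n ∈ range N, (malS a (n + 1) : ℂ) * (((n:ℂ) + 1) ^ (-w) - ((n:ℂ) + 2) ^ (-w)))
        + (malS a N : ℂ) * b N := by
    intro N
    rw [mal_abel_sum c b N, hSc]
    congr 1
    refine Finset.sum_congr rfl fun n _ => ?_
    rw [hSc, hbb]
  have hT : Tendsto (fun N : ℕ => ∑ n ∈ range N,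
      (malS a (n + 1) : ℂ) * (((n:ℂ) + 1) ^ (-w) - ((n:ℂ) + 2) ^ (-w)))
      atTop (nhds (malF a w)) :=
    (malF_summable hC hw).hasSum.tendsto_sum_nat
  have hzero : Tendsto (fun N : ℕ => (malS a N : ℂ) * b N) atTop (nhds 0) := by
    apply squeeze_zero_norm (a := fun N : ℕ => C * ((N:ℝ) + 1) ^ (-w.re))
    · intro N
      rw [norm_mul, Complex.norm_real, Real.norm_eq_abs]
      have h1 : ‖b N‖ = ((N:ℝ) + 1) ^ (-w.re) := by
        show ‖((N:ℂ) + 1) ^ (-w)‖ = ((N:ℝ) + 1) ^ (-w.re)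
        have e : ((N:ℂ) + 1) = (((N:ℝ) + 1 : ℝ) : ℂ) := by push_cast; ring
        rw [e,
          Complex.norm_cpow_eq_rpow_re_of_pos (by positivity)]
        norm_num
      rw [h1]
      have h0 : (0:ℝ) ≤ ((N:ℝ) + 1) ^ (-w.re) := by positivity
      exact mul_le_mul_of_nonneg_right (hC N) h0
    · have hnat : Tendsto (fun N : ℕ => ((N:ℝ) + 1)) atTop atTop :=
        tendsto_atTop_add_const_right _ 1 tendsto_natCast_atTop_atTop
      have := ((tendsto_rpow_neg_atTop hw).comp hnat).const_mul C
      simpa using this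
  have := hT.add hzero
  rw [add_zero] at this
  exact Tendsto.congr (fun N => (habel N).symm) this
lemma malF_differentiableOn {a C : ℝ} (hC : ∀ N, |malS a N| ≤ C) :
    DifferentiableOn ℂ (malF a) {z : ℂ | 0 < z.re} := by
  intro w₀ hw₀
  have hδ : 0 < w₀.re / 2 := half_pos hw₀
  set δ : ℝ := w₀.re / 2 with hδdef
  have hball : DifferentiableOn ℂ (malF a) (Metric.ball w₀ δ) := by
    refine Complex.differentiableOn_tsum_of_summable_norm
      (u := fun n => (C * (‖w₀‖ + δ)) * ((n:ℝ) + 1) ^ (-δ - 1))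
      ((mal_summable_aux hδ).mul_left (C * (‖w₀‖ + δ))) (fun n => ?_)
      Metric.isOpen_ball (fun n w hw => ?_)
    · have h1 : ((n:ℂ) + 1) ≠ 0 := by
        intro h
        have := congrArg Complex.re h
        simp at this
        nlinarith [Nat.cast_nonneg (α := ℝ) n]
      have h2 : ((n:ℂ) + 2) ≠ 0 := by
        intro h
        have := congrArg Complex.re h
        simp at this
        nlinarith [Nat.cast_nonneg (α := ℝ) n]
      have hd : ∀ c : ℂ, c ≠ 0 → Differentiable ℂ (fun z : ℂ => c ^ (-z)) := by
        intro c hc x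
        exact DifferentiableAt.const_cpow (differentiable_neg x) (Or.inl hc)
      exact (((hd _ h1).sub (hd _ h2)).const_mul _).differentiableOn
    · have hwre : δ < w.re := by
        have hd' : dist w w₀ < δ := Metric.mem_ball.mp hw
        rw [Complex.dist_eq] at hd'
        have h4 : |w.re - w₀.re| ≤ ‖w - w₀‖ := by
          simpa using Complex.abs_re_le_norm (w - w₀)
        have := abs_lt.mp (lt_of_le_of_lt h4 hd')
        simp only [hδdef] at this ⊢
        linarith [this.1, this.2]
      have hwn : ‖w‖ ≤ ‖w₀‖ + δ := by
        have h5 : ‖w‖ - ‖w₀‖ ≤ ‖w - w₀‖ := by simpa using norm_sub_norm_le w w₀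
        have hd' : dist w w₀ < δ := Metric.mem_ball.mp hw
        rw [dist_eq_norm] at hd'
        linarith
      have hw0 : 0 < w.re := lt_trans hδ hwre
      have hC0 : (0:ℝ) ≤ C := le_trans (abs_nonneg _) (hC 0)
      calc ‖(malS a (n + 1) : ℂ) * (((n:ℂ) + 1) ^ (-w) - ((n:ℂ) + 2) ^ (-w))‖
          ≤ C * ‖w‖ * ((n:ℝ) + 1) ^ (-w.re - 1) := malF_term_bound hC hw0 n
        _ ≤ C * (‖w₀‖ + δ) * ((n:ℝ) + 1) ^ (-δ - 1) := by
            have e2 : ((n:ℝ) + 1) ^ (-w.re - 1) ≤ ((n:ℝ) + 1) ^ (-δ - 1) :=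
              Real.rpow_le_rpow_of_exponent_le (by simp [Nat.cast_nonneg]) (by linarith)
            have p2 : (0:ℝ) ≤ ((n:ℝ) + 1) ^ (-w.re - 1) := by positivity
            gcongr
        _ = (C * (‖w₀‖ + δ)) * ((n:ℝ) + 1) ^ (-δ - 1) := by ring
  exact (hball.differentiableAt (Metric.ball_mem_nhds _ hδ)).differentiableWithinAt

lemma malF_eq_sinZeta {a C : ℝ} (ha : 0 < a) (ha' : a ≤ 1 / 2)
    (hC : ∀ N, |malS a N| ≤ C) :
    Set.EqOn (malF a) (sinZeta a) {z : ℂ | 0 < z.re} := by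
  have hO : IsOpen {z : ℂ | 0 < z.re} := isOpen_lt continuous_const Complex.continuous_re
  have hO1 : IsOpen {z : ℂ | 1 < z.re} := isOpen_lt continuous_const Complex.continuous_re
  refine AnalyticOnNhd.eqOn_of_preconnected_of_eventuallyEq
    (f := malF a) (g := sinZeta a)
    ((malF_differentiableOn hC).analyticOnNhd hO)
    (((differentiableAt_sinZeta a).differentiableOn).analyticOnNhd hO)
    ((convex_halfSpace_re_gt 0).isPreconnected) (z₀ := 2) (by norm_num [Set.mem_setOf_eq]) ?_
  have hmem : {z : ℂ | 1 < z.re} ∈ nhds (2:ℂ) :=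
    hO1.mem_nhds (by norm_num [Set.mem_setOf_eq])
  filter_upwards [hmem] with w hw
  have hw1 : (1:ℝ) < w.re := hw
  have hw0 : 0 < w.re := by linarith
  -- partial sums of the sinZeta Dirichlet series tend to sinZeta a w
  have hsum := (hasSum_nat_sinZeta a hw1).tendsto_sum_nat
  have hshift : Tendsto (fun N : ℕ => ∑ n ∈ range (N + 1),
      (Real.sin (2 * π * a * n) : ℂ) / (n : ℂ) ^ w) atTop (nhds (sinZeta a w)) :=
    hsum.comp (tendsto_add_atTop_nat 1)
  have heq : ∀ N : ℕ, (∑ n ∈ range (N + 1), (Real.sin (2 * π * a * n) : ℂ) / (n : ℂ) ^ w)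
      = ∑ n ∈ range N, (Real.sin (((n:ℝ) + 1) * (2 * π * a)) : ℂ) * ((n:ℂ) + 1) ^ (-w) := by
    intro N
    rw [Finset.sum_range_succ']
    have h0 : (Real.sin (2 * π * a * (0:ℕ)) : ℂ) / ((0:ℕ) : ℂ) ^ w = 0 := by
      norm_num
    rw [h0, add_zero]
    refine Finset.sum_congr rfl fun n _ => ?_
    have e1 : (2 * π * a * ((n + 1 : ℕ) : ℝ)) = ((n:ℝ) + 1) * (2 * π * a) := by
      push_cast; ring
    have e2 : (((n + 1 : ℕ) : ℂ)) = (n:ℂ) + 1 := by push_cast; ring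
    rw [show (2 * π * a * ((n + 1 : ℕ) : ℝ)) = ((n:ℝ) + 1) * (2 * π * a) from e1, e2,
      Complex.cpow_neg, div_eq_mul_inv]
  have htend2 : Tendsto (fun N : ℕ => ∑ n ∈ range N,
      (Real.sin (((n:ℝ) + 1) * (2 * π * a)) : ℂ) * ((n:ℂ) + 1) ^ (-w))
      atTop (nhds (sinZeta a w)) := by
    exact Tendsto.congr heq hshift
  exact tendsto_nhds_unique (malF_partial_tendsto hC hw0) htend2
set_option maxHeartbeats 1600000 in
/-- Malmstén's functional equation (first form). -/
theorem malmsten_functional_equation_one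
    (k l : ℕ) (hk : 0 < k) (hkl : k < l) (s : ℝ) (hs0 : 0 < s) (hs1 : s < 1) :
    Summable (fun n : ℕ =>
        1 / ((2 * (n : ℝ) + 1) * l - k) ^ s - 1 / ((2 * (n : ℝ) + 1) * l + k) ^ s) ∧
    ∃ R : ℝ,
      Tendsto (fun N : ℕ => ∑ n ∈ Finset.range N,
          (-1 : ℝ) ^ n * Real.sin ((n + 1) * k * π / l) / ((n : ℝ) + 1) ^ (1 - s))
        atTop (nhds R) ∧
      (∑' n : ℕ,
          (1 / ((2 * (n : ℝ) + 1) * l - k) ^ s - 1 / ((2 * (n : ℝ) + 1) * l + k) ^ s))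
        = (π / l) ^ s / (Real.sin (s * π / 2) * Real.Gamma s) * R := by
  have hl : (0:ℝ) < l := by exact_mod_cast hk.trans hkl
  have hkR : (0:ℝ) < k := by exact_mod_cast hk
  have hklR : (k:ℝ) < l := by exact_mod_cast hkl
  set a : ℝ := ((l:ℝ) - k) / (2 * l) with ha_def
  have ha : 0 < a := by
    apply div_pos <;> linarith
  have ha' : a ≤ 1 / 2 := by
    rw [ha_def, div_le_div_iff₀ (by linarith) (by norm_num)]
    linarith
  have ha1 : a < 1 := lt_of_le_of_lt ha' (by norm_num)
  -- bound on partial sums of sines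
  obtain ⟨C, hC0, hC⟩ := mal_sin_partial_bound (θ := 2 * π * a)
    (by positivity) (by nlinarith [Real.pi_pos])
  have hCS : ∀ N, |malS a N| ≤ C := fun N => hC N
  -- real and complex term functions
  set gr : ℕ → ℝ := fun n =>
    (((n:ℝ) + a) ^ (-s) - ((n:ℝ) + 1 - a) ^ (-s)) / 2 with hgr_def
  set g : ℕ → ℂ := fun n =>
    (1 / ((n:ℂ) + a) ^ (s:ℂ) - 1 / ((n:ℂ) + 1 - a) ^ (s:ℂ)) / 2 with hg_def
  have hsre : (0:ℝ) < ((s:ℂ)).re := by simpa using hs0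
  have hg_real : ∀ n, g n = ((gr n : ℝ) : ℂ) := by
    intro n
    simp only [hg_def]
    rw [malG_term_eq a ha ha' (s:ℂ) n]
    have e1 : ((((n:ℝ) + a : ℝ)) : ℂ) ^ (-(s:ℂ)) = ((((n:ℝ) + a) ^ (-s) : ℝ) : ℂ) := by
      rw [Complex.ofReal_cpow (by positivity), Complex.ofReal_neg]
    have e2 : ((((n:ℝ) + 1 - a : ℝ)) : ℂ) ^ (-(s:ℂ)) = ((((n:ℝ) + 1 - a) ^ (-s) : ℝ) : ℂ) := by
      rw [Complex.ofReal_cpow (by nlinarith [Nat.cast_nonneg (α := ℝ) n]), Complex.ofReal_neg]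
    rw [e1, e2, hgr_def]
    push_cast
    ring
  have hg_sum : Summable g := malG_summable ha ha' hsre
  have hgr_sum : Summable gr := by
    have h1 := hg_sum.hasSum.mapL Complex.reCLM
    refine h1.summable.congr fun n => ?_
    rw [hg_real n]
    simp
  have hgr_tsum : ∑' n, gr n = (malG a (s:ℂ)).re := by
    have h1 := hg_sum.hasSum.mapL Complex.reCLM
    have h2 : HasSum gr ((malG a (s:ℂ)).re) := by
      refine (h1.congr_fun fun n => ?_)
      rw [hg_real n]
      simp
    exact h2.tsum_eq
  -- identify the left-hand terms
  have hterm : ∀ n : ℕ,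
      1 / ((2 * (n : ℝ) + 1) * l - k) ^ s - 1 / ((2 * (n : ℝ) + 1) * l + k) ^ s
        = (2 * (l:ℝ)) ^ (-s) * 2 * gr n := by
    intro n
    have e1 : (2 * (n : ℝ) + 1) * l - k = 2 * l * ((n:ℝ) + a) := by
      rw [ha_def]
      field_simp
      ring
    have e2 : (2 * (n : ℝ) + 1) * l + k = 2 * l * ((n:ℝ) + 1 - a) := by
      rw [ha_def]
      field_simp
      ring
    have p1 : (0:ℝ) ≤ (n:ℝ) + a := by positivity
    have p2 : (0:ℝ) ≤ (n:ℝ) + 1 - a := by nlinarith [Nat.cast_nonneg (α := ℝ) n]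
    rw [e1, e2, Real.mul_rpow (by positivity) p1, Real.mul_rpow (by positivity) p2]
    simp only [hgr_def]
    rw [Real.rpow_neg (by positivity : (0:ℝ) ≤ 2 * (l:ℝ)), Real.rpow_neg p1, Real.rpow_neg p2]
    rw [one_div, one_div, mul_inv, mul_inv]
    ring
  have hsum : Summable (fun n : ℕ =>
      1 / ((2 * (n : ℝ) + 1) * l - k) ^ s - 1 / ((2 * (n : ℝ) + 1) * l + k) ^ s) := by
    refine (hgr_sum.mul_left ((2 * (l:ℝ)) ^ (-s) * 2)).congr fun n => (hterm n).symm
  refine ⟨hsum, ?_⟩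
  -- the right-hand series
  set w : ℂ := 1 - (s:ℂ) with hw_def
  have hwre : 0 < w.re := by
    rw [hw_def]
    simp [hs1]
  set A : ℕ → ℂ := fun N => ∑ n ∈ range N,
    (Real.sin (((n:ℝ) + 1) * (2 * π * a)) : ℂ) * ((n:ℂ) + 1) ^ (-w) with hA_def
  set P : ℕ → ℝ := fun N => ∑ n ∈ Finset.range N,
    (-1 : ℝ) ^ n * Real.sin ((n + 1) * k * π / l) / ((n : ℝ) + 1) ^ (1 - s) with hP_def
  have hsin : ∀ n : ℕ, Real.sin (((n:ℝ) + 1) * (2 * π * a))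
      = (-1 : ℝ) ^ n * Real.sin (((n:ℝ) + 1) * k * π / l) := by
    intro n
    have e1 : ((n:ℝ) + 1) * (2 * π * a)
        = ((n + 1 : ℕ):ℝ) * π - ((n:ℝ) + 1) * k * π / l := by
      rw [ha_def]
      field_simp
      push_cast; ring
    rw [e1, Real.sin_nat_mul_pi_sub]
    rw [pow_succ]
    ring
  have hAP : ∀ N, ((P N : ℝ) : ℂ) = A N := by
    intro N
    rw [hP_def, hA_def, Complex.ofReal_sum]
    refine Finset.sum_congr rfl fun n _ => ?_
    have hb : ((n:ℂ) + 1) ^ (-w) = ((((n:ℝ) + 1) ^ (-(1 - s)) : ℝ) : ℂ) := by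
      have e : ((n:ℂ) + 1) = ((((n:ℝ) + 1) : ℝ) : ℂ) := by push_cast; ring
      have ew : -w = ((-(1 - s) : ℝ) : ℂ) := by rw [hw_def]; push_cast; ring
      rw [e, ew, ← Complex.ofReal_cpow (by positivity)]
    rw [hb, hsin n, ← Complex.ofReal_mul]
    congr 1
    rw [Real.rpow_neg (by positivity)]
    field_simp
  have hA_tendsto : Tendsto A atTop (nhds (malF a w)) := malF_partial_tendsto hCS hwre
  set R : ℝ := (malF a w).re with hR_def
  have hP_tendsto : Tendsto P atTop (nhds R) := by
    have h1 : Tendsto (fun N => (A N).re) atTop (nhds R) :=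
      (Complex.continuous_re.tendsto _).comp hA_tendsto
    refine h1.congr fun N => ?_
    rw [← hAP N]
    simp
  have hF_real : malF a w = ((R : ℝ) : ℂ) := by
    have h1 : Tendsto (fun N => ((P N : ℝ) : ℂ)) atTop (nhds ((R : ℝ) : ℂ)) :=
      (Complex.continuous_ofReal.tendsto _).comp hP_tendsto
    have h2 : Tendsto (fun N => ((P N : ℝ) : ℂ)) atTop (nhds (malF a w)) := by
      refine hA_tendsto.congr fun N => (hAP N).symm
    exact tendsto_nhds_unique h2 h1
  refine ⟨R, hP_tendsto, ?_⟩
  -- now the functional equation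
  have hmem : (s:ℂ) ∈ {z : ℂ | 0 < z.re} := hsre
  have hmemw : w ∈ {z : ℂ | 0 < z.re} := hwre
  have hG : malG a (s:ℂ) = hurwitzZetaOdd (a : UnitAddCircle) (s:ℂ) :=
    malG_eq_hurwitz ha ha' hmem
  have hFs : malF a w = sinZeta (a : UnitAddCircle) w := malF_eq_sinZeta ha ha' hCS hmemw
  have hsne : ∀ n : ℕ, (s:ℂ) ≠ -(n:ℂ) := by
    intro n h
    have := congrArg Complex.re h
    simp at this
    have : s = -(n:ℝ) := by exact_mod_cast this
    have : (0:ℝ) ≤ (n:ℝ) := Nat.cast_nonneg n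
    linarith [hs0]
  have hfe := sinZeta_one_sub (a : UnitAddCircle) hsne
  -- real constant d
  set d : ℝ := 2 * (2 * π) ^ (-s) * Real.Gamma s * Real.sin (π * s / 2) with hd_def
  have hd_pos : 0 < d := by
    have h1 : (0:ℝ) < (2 * π) ^ (-s) := by positivity
    have h2 : 0 < Real.Gamma s := Real.Gamma_pos_of_pos hs0
    have h3 : 0 < Real.sin (π * s / 2) := by
      apply Real.sin_pos_of_pos_of_lt_pi
      · positivity
      · nlinarith [Real.pi_pos]
    positivity
  have hd_cast : ((d:ℝ) : ℂ) = 2 * (2 * (π:ℂ)) ^ (-(s:ℂ)) * Complex.Gamma (s:ℂ)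
      * Complex.sin ((π:ℂ) * (s:ℂ) / 2) := by
    rw [hd_def]
    rw [Complex.ofReal_mul, Complex.ofReal_mul, Complex.ofReal_mul,
      Complex.ofReal_cpow (by positivity : (0:ℝ) ≤ 2 * π), ← Complex.Gamma_ofReal,
      Complex.ofReal_sin]
    push_cast
    ring_nf
  -- deduce hurwitzZetaOdd value
  have hhz : hurwitzZetaOdd (a : UnitAddCircle) (s:ℂ) = ((R / d : ℝ) : ℂ) := by
    have h1 : ((R : ℝ) : ℂ) = ((d : ℝ) : ℂ) * hurwitzZetaOdd (a : UnitAddCircle) (s:ℂ) := by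
      rw [← hF_real, hFs, hw_def, hfe, hd_cast]
    have hdc : ((d : ℝ) : ℂ) ≠ 0 := by
      simpa using hd_pos.ne'
    rw [Complex.ofReal_div, eq_div_iff hdc, h1]
    ring
  have htsum : (∑' n : ℕ,
      (1 / ((2 * (n : ℝ) + 1) * l - k) ^ s - 1 / ((2 * (n : ℝ) + 1) * l + k) ^ s))
      = (2 * (l:ℝ)) ^ (-s) * 2 * (R / d) := by
    rw [tsum_congr hterm, tsum_mul_left]
    congr 1
    rw [hgr_tsum, hG, hhz]
    simp
  rw [htsum]
  have hsin_eq : Real.sin (s * π / 2) = Real.sin (π * s / 2) := by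
    congr 1
    ring
  rw [hsin_eq, hd_def]
  have hrne : (π / (l:ℝ)) ^ s = (2 * π) ^ s / (2 * (l:ℝ)) ^ s := by
    rw [← Real.div_rpow (by positivity) (by positivity)]
    congr 1
    field_simp
  rw [Real.rpow_neg (by positivity : (0:ℝ) ≤ 2 * (l:ℝ)),
    Real.rpow_neg (by positivity : (0:ℝ) ≤ 2 * π), hrne]
  have hne1 : (2 * (l:ℝ)) ^ s ≠ 0 := by positivity
  have hne2 : (2 * π) ^ s ≠ 0 := by positivity
  have hne3 : Real.Gamma s ≠ 0 := (Real.Gamma_pos_of_pos hs0).ne'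
  have hne4 : Real.sin (π * s / 2) ≠ 0 := by
    have : 0 < Real.sin (π * s / 2) := by
      apply Real.sin_pos_of_pos_of_lt_pi
      · positivity
      · nlinarith [Real.pi_pos]
    exact this.ne'
  field_simp
end

section
/- Let k and l be positive integers with k < l, and let s be a real number with 0 < s < 1. Then Σ_{n=0}^∞ (1/(2nl + k)^s − 1/((2n+2)l − k)^s) = ((π/l)^s/(sin(sπ/2)·Γ(s))) · Σ_{n=1}^∞ sin(nkπ/l)/n^{1−s}, where the series on the right converges (conditionally) and the series on the left converges absolutely. -/
open Real Filter Finset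

namespace MalmstenAux

open Complex

/-- Norm bound for a difference of complex powers of positive reals. -/
lemma cpow_diff_norm_le {x y : ℝ} (hx : 0 < x) (hxy : x ≤ y) {s : ℂ} (hs : 0 < s.re) :
    ‖(x : ℂ) ^ (-s) - (y : ℂ) ^ (-s)‖ ≤ ‖s‖ * x ^ (-s.re - 1) * (y - x) := by
  have key : ∀ t ∈ Set.Icc x y, HasDerivWithinAt (fun t : ℝ => (t : ℂ) ^ (-s))
      (-s * (t : ℂ) ^ (-s - 1)) (Set.Icc x y) t := by
    intro t ht
    have ht0 : 0 < t := lt_of_lt_of_le hx ht.1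
    have h1 : HasDerivAt (fun z : ℂ => z ^ (-s)) (-s * (t : ℂ) ^ (-s - 1)) (t : ℂ) := by
      have := (Complex.hasStrictDerivAt_cpow_const (c := -s)
        (Complex.ofReal_mem_slitPlane.2 ht0)).hasDerivAt
      simpa [neg_mul] using this
    exact (h1.comp_ofReal).hasDerivWithinAt
  have bound : ∀ t ∈ Set.Icc x y, ‖-s * (t : ℂ) ^ (-s - 1)‖ ≤ ‖s‖ * x ^ (-s.re - 1) := by
    intro t ht
    have ht0 : 0 < t := lt_of_lt_of_le hx ht.1
    rw [norm_mul, norm_neg,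
      Complex.norm_cpow_eq_rpow_re_of_pos ht0]
    have : t ^ ((-s - 1).re) ≤ x ^ (-s.re - 1) := by
      have : (-s - 1).re = -s.re - 1 := by simp
      rw [this]
      exact Real.rpow_le_rpow_of_nonpos hx ht.1 (by linarith)
    exact mul_le_mul_of_nonneg_left this (norm_nonneg s)
  have := (convex_Icc x y).norm_image_sub_le_of_norm_hasDerivWithin_le key bound
    (Set.left_mem_Icc.2 hxy) (Set.right_mem_Icc.2 hxy)
  calc ‖(x : ℂ) ^ (-s) - (y : ℂ) ^ (-s)‖ = ‖(y : ℂ) ^ (-s) - (x : ℂ) ^ (-s)‖ := by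
        rw [norm_sub_rev]
    _ ≤ ‖s‖ * x ^ (-s.re - 1) * ‖y - x‖ := this
    _ = ‖s‖ * x ^ (-s.re - 1) * (y - x) := by
        rw [Real.norm_eq_abs, _root_.abs_of_nonneg (by linarith : (0:ℝ) ≤ y - x)]


noncomputable section

/-- The grouped Hurwitz-zeta-odd term. -/
def oddTerm (a : ℝ) (n : ℕ) (w : ℂ) : ℂ :=
  ((n + a : ℝ) : ℂ) ^ (-w) - ((n + 1 - a : ℝ) : ℂ) ^ (-w)

lemma oddTerm_norm_le {a : ℝ} (ha0 : 0 < a) (ha1 : a ≤ 1 / 2) (n : ℕ) {w : ℂ}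
    (hw : 0 < w.re) : ‖oddTerm a n w‖ ≤ ‖w‖ * ((n : ℝ) + a) ^ (-w.re - 1) := by
  have hx : 0 < (n : ℝ) + a := by positivity
  have hxy : (n : ℝ) + a ≤ (n : ℝ) + 1 - a := by linarith
  have := cpow_diff_norm_le hx hxy hw
  calc ‖oddTerm a n w‖ ≤ ‖w‖ * ((n : ℝ) + a) ^ (-w.re - 1) * (((n : ℝ) + 1 - a) - ((n : ℝ) + a)) :=
        this
    _ ≤ ‖w‖ * ((n : ℝ) + a) ^ (-w.re - 1) * 1 := by
        apply mul_le_mul_of_nonneg_left (by linarith) (by positivity)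
    _ = ‖w‖ * ((n : ℝ) + a) ^ (-w.re - 1) := mul_one _

lemma oddTerm_differentiable {a : ℝ} (ha0 : 0 < a) (ha1 : a ≤ 1 / 2) (n : ℕ) :
    Differentiable ℂ (oddTerm a n) := by
  have h1 : ((n + a : ℝ) : ℂ) ≠ 0 := by
    simp only [ne_eq, Complex.ofReal_eq_zero]
    positivity
  have h2 : ((n + 1 - a : ℝ) : ℂ) ≠ 0 := by
    simp only [ne_eq, Complex.ofReal_eq_zero]
    intro h
    have : 0 < (n : ℝ) + 1 - a := by linarith
    linarith
  exact (differentiable_neg.const_cpow (Or.inl h1)).sub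
    (differentiable_neg.const_cpow (Or.inl h2))

lemma summable_aux {r : ℝ} (hr : 0 < r) : Summable (fun n : ℕ => ((n : ℝ) + 1) ^ (-r - 1)) := by
  have h := Real.summable_nat_rpow (p := -r - 1) |>.2 (by linarith)
  have := (_root_.summable_nat_add_iff 1).2 h
  refine this.congr fun n => ?_
  push_cast
  ring_nf

/-- The tail of the odd series, summed over `n ≥ 1`. -/
def F1 (a : ℝ) (w : ℂ) : ℂ := ∑' n : ℕ, oddTerm a (n + 1) w

def Fodd (a : ℝ) (w : ℂ) : ℂ := oddTerm a 0 w + F1 a w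

lemma oddTerm_succ_norm_le {a : ℝ} (ha0 : 0 < a) (ha1 : a ≤ 1 / 2) (n : ℕ) {w : ℂ}
    {r M : ℝ} (hr : 0 < r) (hwr : r ≤ w.re) (hwM : ‖w‖ ≤ M) :
    ‖oddTerm a (n + 1) w‖ ≤ M * ((n : ℝ) + 1) ^ (-r - 1) := by
  have hw : 0 < w.re := lt_of_lt_of_le hr hwr
  have h1 : (0 : ℝ) < (n : ℝ) + 1 := by positivity
  have hb : ((n : ℝ) + 1) ≤ ((n + 1 : ℕ) : ℝ) + a := by push_cast; linarith
  have key : (((n + 1 : ℕ) : ℝ) + a) ^ (-w.re - 1) ≤ ((n : ℝ) + 1) ^ (-r - 1) := by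
    calc (((n + 1 : ℕ) : ℝ) + a) ^ (-w.re - 1) ≤ ((n : ℝ) + 1) ^ (-w.re - 1) :=
          Real.rpow_le_rpow_of_nonpos h1 hb (by linarith)
      _ ≤ ((n : ℝ) + 1) ^ (-r - 1) :=
          Real.rpow_le_rpow_of_exponent_le (by linarith [h1]) (by linarith)
  calc ‖oddTerm a (n + 1) w‖ ≤ ‖w‖ * (((n + 1 : ℕ) : ℝ) + a) ^ (-w.re - 1) :=
        oddTerm_norm_le ha0 ha1 (n + 1) hw
    _ ≤ M * ((n : ℝ) + 1) ^ (-r - 1) := by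
        apply mul_le_mul hwM key (by positivity) (le_trans (norm_nonneg w) hwM)

lemma F1_differentiableAt {a : ℝ} (ha0 : 0 < a) (ha1 : a ≤ 1 / 2) {w₀ : ℂ}
    (hw₀ : 0 < w₀.re) : DifferentiableAt ℂ (F1 a) w₀ := by
  set r : ℝ := w₀.re / 2 with hr_def
  have hr : 0 < r := by positivity
  set M : ℝ := ‖w₀‖ + 1 with hM_def
  set U : Set ℂ := {w : ℂ | r < w.re} ∩ Metric.ball 0 M with hU_def
  have hUo : IsOpen U := ((isOpen_lt continuous_const Complex.continuous_re).inter
    Metric.isOpen_ball)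
  have hw₀U : w₀ ∈ U := by
    constructor
    · simp only [Set.mem_setOf_eq]; linarith
    · simp only [Metric.mem_ball, dist_zero_right]; simp [hM_def]
  have : DifferentiableOn ℂ (F1 a) U := by
    unfold F1
    apply differentiableOn_tsum_of_summable_norm
      ((summable_aux hr).mul_left M)
      (fun n => ((oddTerm_differentiable ha0 ha1 (n + 1)).differentiableOn)) hUo
    intro n w hw
    exact oddTerm_succ_norm_le ha0 ha1 n hr (le_of_lt hw.1)
      (by
        have := hw.2
        simp only [Metric.mem_ball, dist_zero_right] at this
        exact le_of_lt this)
  exact (this.differentiableAt (hUo.mem_nhds hw₀U))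

lemma Fodd_differentiableAt {a : ℝ} (ha0 : 0 < a) (ha1 : a ≤ 1 / 2) {w₀ : ℂ}
    (hw₀ : 0 < w₀.re) : DifferentiableAt ℂ (Fodd a) w₀ :=
  ((oddTerm_differentiable ha0 ha1 0).differentiableAt).add (F1_differentiableAt ha0 ha1 hw₀)

lemma F1_summable {a : ℝ} (ha0 : 0 < a) (ha1 : a ≤ 1 / 2) {w : ℂ} (hw : 0 < w.re) :
    Summable (fun n : ℕ => oddTerm a (n + 1) w) := by
  apply Summable.of_norm_bounded (g := fun n : ℕ => ‖w‖ * ((n : ℝ) + 1) ^ (-(w.re / 2) - 1))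
    ((summable_aux (by linarith : (0:ℝ) < w.re / 2)).mul_left ‖w‖)
  intro n
  exact oddTerm_succ_norm_le ha0 ha1 n (by linarith : (0:ℝ) < w.re / 2) (by linarith)
    le_rfl

lemma hasSum_oddTerm {a : ℝ} (ha0 : 0 < a) (ha1 : a ≤ 1 / 2) {w : ℂ} (hw : 1 < w.re) :
    HasSum (fun n : ℕ => oddTerm a n w) (2 * HurwitzZeta.hurwitzZetaOdd a w) := by
  have ha : a ∈ Set.Icc (0 : ℝ) 1 := ⟨le_of_lt ha0, by linarith⟩
  have h := (HurwitzZeta.hasSum_nat_hurwitzZetaOdd_of_mem_Icc ha hw).mul_left 2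
  refine h.congr_fun fun n => ?_
  have e1 : ((n : ℂ) + a) = (((n : ℝ) + a : ℝ) : ℂ) := by push_cast; ring
  have e2 : ((n : ℂ) + 1 - a) = (((n : ℝ) + 1 - a : ℝ) : ℂ) := by push_cast; ring
  rw [mul_div_cancel₀ _ (two_ne_zero), oddTerm, e1, e2, Complex.cpow_neg, Complex.cpow_neg,
    one_div, one_div]

lemma Fodd_eq_of_one_lt {a : ℝ} (ha0 : 0 < a) (ha1 : a ≤ 1 / 2) {w : ℂ} (hw : 1 < w.re) :
    Fodd a w = 2 * HurwitzZeta.hurwitzZetaOdd a w := by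
  have h := hasSum_oddTerm ha0 ha1 hw
  rw [Fodd, F1, ← Summable.tsum_eq_zero_add h.summable, h.tsum_eq]

lemma Fodd_eq {a : ℝ} (ha0 : 0 < a) (ha1 : a ≤ 1 / 2) {w : ℂ} (hw : 0 < w.re) :
    Fodd a w = 2 * HurwitzZeta.hurwitzZetaOdd a w := by
  set U : Set ℂ := {w : ℂ | 0 < w.re} with hU_def
  have hUo : IsOpen U := isOpen_lt continuous_const Complex.continuous_re
  have hUc : IsPreconnected U := (convex_halfSpace_re_gt 0).isPreconnected
  have hFd : DifferentiableOn ℂ (Fodd a) U :=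
    fun z hz => (Fodd_differentiableAt ha0 ha1 hz).differentiableWithinAt
  have hF : AnalyticOnNhd ℂ (Fodd a) U := hFd.analyticOnNhd hUo
  have hG : AnalyticOnNhd ℂ (fun w => 2 * HurwitzZeta.hurwitzZetaOdd a w) U :=
    (((HurwitzZeta.differentiable_hurwitzZetaOdd a).const_mul 2).differentiableOn).analyticOnNhd
      hUo
  have h2 : (2 : ℂ) ∈ U := by simp [hU_def]
  have heq : Fodd a =ᶠ[nhds (2 : ℂ)] (fun w => 2 * HurwitzZeta.hurwitzZetaOdd a w) := by
    have hopen : IsOpen {w : ℂ | 1 < w.re} := isOpen_lt continuous_const Complex.continuous_re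
    filter_upwards [hopen.mem_nhds (by simp : (2:ℂ) ∈ {w : ℂ | 1 < w.re})] with z hz
    exact Fodd_eq_of_one_lt ha0 ha1 hz
  exact hF.eqOn_of_preconnected_of_eventuallyEq hG hUc h2 heq hw


section SinSide

variable (k l : ℕ)

/-- The sine coefficients. -/
def sc (n : ℕ) : ℝ := Real.sin (n * k * π / l)

lemma sc_periodic (hl : 0 < l) (n : ℕ) : sc k l (n + 2 * l) = sc k l n := by
  have hl' : (l : ℝ) ≠ 0 := by positivity
  have : ((n + 2 * l : ℕ) : ℝ) * k * π / l = (n : ℝ) * k * π / l + k * (2 * π) := by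
    push_cast
    field_simp
  rw [sc, this, Real.sin_add_nat_mul_two_pi, sc]

lemma sc_sum_zero (hk : 0 < k) (hkl : k < l) :
    ∑ j ∈ range (2 * l), sc k l j = 0 := by
  have hl : 0 < l := lt_trans hk hkl
  have hl' : (l : ℝ) ≠ 0 := by positivity
  set θ : ℝ := k * π / l with hθ
  have hθ0 : 0 < θ := by
    apply div_pos (by positivity) (by positivity)
  have hθπ : θ < π := by
    rw [hθ, div_lt_iff₀ (by positivity)]
    have : (k : ℝ) < l := by exact_mod_cast hkl
    nlinarith [Real.pi_pos]
  set z : ℂ := Complex.exp (θ * Complex.I) with hz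
  have hz1 : z ≠ 1 := by
    intro h
    rw [hz, Complex.exp_eq_one_iff] at h
    obtain ⟨m, hm⟩ := h
    have hm' : (θ : ℂ) * Complex.I = ((2 * π * m : ℝ) : ℂ) * Complex.I := by
      rw [hm]; push_cast; ring
    have hθm : θ = 2 * π * m := by
      exact_mod_cast mul_right_cancel₀ Complex.I_ne_zero hm'
    rcases le_or_gt (m : ℝ) 0 with h0 | h0
    · nlinarith [Real.pi_pos]
    · have : (1 : ℝ) ≤ m := by exact_mod_cast (by exact_mod_cast h0 : (0 : ℤ) < m)
      nlinarith [Real.pi_pos]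
  have hz2l : z ^ (2 * l) = 1 := by
    rw [hz, ← Complex.exp_nat_mul]
    have hlC : (l : ℂ) ≠ 0 := by exact_mod_cast hl'
    have : (2 * l : ℕ) * ((θ : ℂ) * Complex.I) = ((k : ℕ) : ℤ) * (2 * π * Complex.I) := by
      push_cast [hθ]
      field_simp
    rw [this]
    exact Complex.exp_int_mul_two_pi_mul_I _
  have hgeom : ∑ j ∈ range (2 * l), z ^ j = 0 := by
    rw [geom_sum_eq hz1, hz2l, sub_self, zero_div]
  have him : ∀ j : ℕ, sc k l j = (z ^ j).im := by
    intro j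
    rw [hz, ← Complex.exp_nat_mul, sc]
    have : (j : ℂ) * ((θ : ℝ) * Complex.I) = ((j * θ : ℝ) : ℂ) * Complex.I := by push_cast; ring
    rw [this, Complex.exp_ofReal_mul_I_im, hθ]
    congr 1
    field_simp
  calc ∑ j ∈ range (2 * l), sc k l j = ∑ j ∈ range (2 * l), (z ^ j).im := by
        exact Finset.sum_congr rfl fun j _ => him j
    _ = (∑ j ∈ range (2 * l), z ^ j).im := by rw [Complex.im_sum]
    _ = 0 := by rw [hgeom]; rfl

lemma sc_add_mul (hl : 0 < l) (m j : ℕ) : sc k l (m * (2 * l) + j) = sc k l j := by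
  induction m with
  | zero => simp
  | succ m ih =>
    have : (m + 1) * (2 * l) + j = (m * (2 * l) + j) + 2 * l := by ring
    rw [this, sc_periodic k l hl, ih]

lemma sc_block_sum_zero (hk : 0 < k) (hkl : k < l) (m : ℕ) :
    ∑ j ∈ range (2 * l), sc k l (m * (2 * l) + j) = 0 := by
  have hl : 0 < l := lt_trans hk hkl
  calc ∑ j ∈ range (2 * l), sc k l (m * (2 * l) + j)
      = ∑ j ∈ range (2 * l), sc k l j := Finset.sum_congr rfl fun j _ => sc_add_mul k l hl m j
    _ = 0 := sc_sum_zero k l hk hkl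

lemma sc_abs_le (n : ℕ) : |sc k l n| ≤ 1 := abs_le.2 ⟨Real.neg_one_le_sin _, Real.sin_le_one _⟩

/-- Complex term of the sine Dirichlet series. -/
def sinTerm (n : ℕ) (w : ℂ) : ℂ := (sc k l n : ℂ) * (n : ℂ) ^ (-w)

/-- A block of `2 * l` consecutive terms. -/
def sinBlock (m : ℕ) (w : ℂ) : ℂ := ∑ j ∈ range (2 * l), sinTerm k l (m * (2 * l) + j) w

lemma sinTerm_differentiable (n : ℕ) (hn : n ≠ 0) : Differentiable ℂ (sinTerm k l n) := by
  have h1 : ((n : ℕ) : ℂ) ≠ 0 := by exact_mod_cast hn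
  exact (differentiable_neg.const_cpow (Or.inl h1)).const_mul _

lemma sinBlock_differentiable (hl : 0 < l) (m : ℕ) : Differentiable ℂ (sinBlock k l m) := by
  apply Differentiable.fun_sum
  intro j hj
  rcases Nat.eq_zero_or_pos (m * (2 * l) + j) with h | h
  · have heq : sinTerm k l (m * (2 * l) + j) = fun _ => (0 : ℂ) := by
      funext w
      simp [sinTerm, h, sc]
    rw [heq]
    exact differentiable_const 0
  · exact sinTerm_differentiable k l _ h.ne'


lemma sinBlock_rewrite (hk : 0 < k) (hkl : k < l) (m : ℕ) (w : ℂ) :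
    sinBlock k l m w = ∑ j ∈ range (2 * l), (sc k l (m * (2 * l) + j) : ℂ) *
      ((((m * (2 * l) + j : ℕ) : ℝ) : ℂ) ^ (-w) - (((m * (2 * l) : ℕ) : ℝ) : ℂ) ^ (-w)) := by
  have h0 : ∑ j ∈ range (2 * l), (sc k l (m * (2 * l) + j) : ℂ) *
      (((m * (2 * l) : ℕ) : ℝ) : ℂ) ^ (-w) = 0 := by
    rw [← Finset.sum_mul]
    have : ∑ j ∈ range (2 * l), (sc k l (m * (2 * l) + j) : ℂ) =
        ((∑ j ∈ range (2 * l), sc k l (m * (2 * l) + j) : ℝ) : ℂ) := by push_cast; rfl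
    rw [this, sc_block_sum_zero k l hk hkl m, Complex.ofReal_zero, zero_mul]
  rw [Finset.sum_congr rfl (fun j _ => mul_sub (sc k l (m * (2 * l) + j) : ℂ) _ _),
    Finset.sum_sub_distrib, h0, sub_zero]
  refine Finset.sum_congr rfl fun j _ => ?_
  rw [sinTerm]
  norm_num

lemma sinBlock_norm_le (hk : 0 < k) (hkl : k < l) (m : ℕ) {w : ℂ} (hw : 0 < w.re) :
    ‖sinBlock k l (m + 1) w‖ ≤
      (2 * l) * ((2 * l) * ‖w‖ * ((m : ℝ) + 1) ^ (-w.re - 1)) := by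
  have hl : 0 < l := lt_trans hk hkl
  have hM : (0 : ℝ) < ((m + 1) * (2 * l) : ℕ) := by positivity
  rw [sinBlock_rewrite k l hk hkl (m + 1) w]
  apply le_trans (norm_sum_le _ _)
  have hterm : ∀ j ∈ range (2 * l),
      ‖(sc k l ((m + 1) * (2 * l) + j) : ℂ) *
        (((((m + 1) * (2 * l) + j : ℕ) : ℝ) : ℂ) ^ (-w) -
          ((((m + 1) * (2 * l) : ℕ) : ℝ) : ℂ) ^ (-w))‖ ≤
        (2 * l) * ‖w‖ * ((m : ℝ) + 1) ^ (-w.re - 1) := by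
    intro j hj
    have hj2l : j < 2 * l := Finset.mem_range.1 hj
    rw [norm_mul]
    have h1 : ‖((sc k l ((m + 1) * (2 * l) + j) : ℝ) : ℂ)‖ ≤ 1 := by
      rw [Complex.norm_real, Real.norm_eq_abs]
      exact sc_abs_le k l _
    have h2 : ‖((((m + 1) * (2 * l) + j : ℕ) : ℝ) : ℂ) ^ (-w) -
        ((((m + 1) * (2 * l) : ℕ) : ℝ) : ℂ) ^ (-w)‖ ≤
        (2 * l) * ‖w‖ * ((m : ℝ) + 1) ^ (-w.re - 1) := by
      rw [norm_sub_rev]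
      have hle : (((m + 1) * (2 * l) : ℕ) : ℝ) ≤ (((m + 1) * (2 * l) + j : ℕ) : ℝ) := by
        exact_mod_cast Nat.le_add_right _ _
      apply le_trans (cpow_diff_norm_le hM hle hw)
      have hbase : ((m : ℝ) + 1) ≤ (((m + 1) * (2 * l) : ℕ) : ℝ) := by
        have hl1 : (1 : ℝ) ≤ l := by exact_mod_cast hl
        push_cast
        nlinarith
      have hbase' : (((m + 1) * (2 * l) : ℕ) : ℝ) ^ (-w.re - 1) ≤ ((m : ℝ) + 1) ^ (-w.re - 1) :=
        Real.rpow_le_rpow_of_nonpos (by positivity) hbase (by linarith)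
      have hgap : ((((m + 1) * (2 * l) + j : ℕ) : ℝ) - (((m + 1) * (2 * l) : ℕ) : ℝ)) ≤ 2 * l := by
        push_cast
        have : (j : ℝ) < 2 * l := by exact_mod_cast hj2l
        linarith
      calc ‖w‖ * (((m + 1) * (2 * l) : ℕ) : ℝ) ^ (-w.re - 1) *
            ((((m + 1) * (2 * l) + j : ℕ) : ℝ) - (((m + 1) * (2 * l) : ℕ) : ℝ))
          ≤ ‖w‖ * ((m : ℝ) + 1) ^ (-w.re - 1) * (2 * l) := by
            apply mul_le_mul (mul_le_mul_of_nonneg_left hbase' (norm_nonneg w)) hgap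
              (sub_nonneg.2 hle) (by positivity)
        _ = (2 * l) * ‖w‖ * ((m : ℝ) + 1) ^ (-w.re - 1) := by ring
    calc ‖((sc k l ((m + 1) * (2 * l) + j) : ℝ) : ℂ)‖ * ‖_ - _‖
        ≤ 1 * ((2 * l) * ‖w‖ * ((m : ℝ) + 1) ^ (-w.re - 1)) :=
          mul_le_mul h1 h2 (norm_nonneg _) zero_le_one
      _ = (2 * l) * ‖w‖ * ((m : ℝ) + 1) ^ (-w.re - 1) := one_mul _
  calc ∑ j ∈ range (2 * l), ‖(sc k l ((m + 1) * (2 * l) + j) : ℂ) *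
        (((((m + 1) * (2 * l) + j : ℕ) : ℝ) : ℂ) ^ (-w) -
          ((((m + 1) * (2 * l) : ℕ) : ℝ) : ℂ) ^ (-w))‖
      ≤ (range (2 * l)).card • ((2 * l) * ‖w‖ * ((m : ℝ) + 1) ^ (-w.re - 1)) :=
        Finset.sum_le_card_nsmul _ _ _ hterm
    _ = (2 * l) * ((2 * l) * ‖w‖ * ((m : ℝ) + 1) ^ (-w.re - 1)) := by
        simp only [Finset.card_range, nsmul_eq_mul]
        push_cast
        ring


/-- Tail of the blocked sine series. -/
def G1 (w : ℂ) : ℂ := ∑' m : ℕ, sinBlock k l (m + 1) w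

def Gs (w : ℂ) : ℂ := sinBlock k l 0 w + G1 k l w

lemma sinBlock_succ_norm_le' (hk : 0 < k) (hkl : k < l) (m : ℕ) {w : ℂ} {r M : ℝ}
    (hr : 0 < r) (hwr : r ≤ w.re) (hwM : ‖w‖ ≤ M) :
    ‖sinBlock k l (m + 1) w‖ ≤ (4 * l ^ 2 * M) * ((m : ℝ) + 1) ^ (-r - 1) := by
  have hw : 0 < w.re := lt_of_lt_of_le hr hwr
  have h1 : (0 : ℝ) < (m : ℝ) + 1 := by positivity
  have key : ((m : ℝ) + 1) ^ (-w.re - 1) ≤ ((m : ℝ) + 1) ^ (-r - 1) :=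
    Real.rpow_le_rpow_of_exponent_le (by linarith) (by linarith)
  calc ‖sinBlock k l (m + 1) w‖ ≤ (2 * l) * ((2 * l) * ‖w‖ * ((m : ℝ) + 1) ^ (-w.re - 1)) :=
        sinBlock_norm_le k l hk hkl m hw
    _ = (4 * l ^ 2) * (‖w‖ * ((m : ℝ) + 1) ^ (-w.re - 1)) := by ring
    _ ≤ (4 * l ^ 2) * (M * ((m : ℝ) + 1) ^ (-r - 1)) := by
        apply mul_le_mul_of_nonneg_left _ (by positivity)
        apply mul_le_mul hwM key (by positivity) (le_trans (norm_nonneg w) hwM)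
    _ = (4 * l ^ 2 * M) * ((m : ℝ) + 1) ^ (-r - 1) := by ring

lemma G1_differentiableAt (hk : 0 < k) (hkl : k < l) {w₀ : ℂ} (hw₀ : 0 < w₀.re) :
    DifferentiableAt ℂ (G1 k l) w₀ := by
  have hl : 0 < l := lt_trans hk hkl
  set r : ℝ := w₀.re / 2 with hr_def
  have hr : 0 < r := by positivity
  set M : ℝ := ‖w₀‖ + 1 with hM_def
  set U : Set ℂ := {w : ℂ | r < w.re} ∩ Metric.ball 0 M with hU_def
  have hUo : IsOpen U := ((isOpen_lt continuous_const Complex.continuous_re).inter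
    Metric.isOpen_ball)
  have hw₀U : w₀ ∈ U := by
    constructor
    · simp only [Set.mem_setOf_eq]; linarith
    · simp only [Metric.mem_ball, dist_zero_right]; simp [hM_def]
  have : DifferentiableOn ℂ (G1 k l) U := by
    unfold G1
    apply differentiableOn_tsum_of_summable_norm
      ((summable_aux hr).mul_left (4 * l ^ 2 * M))
      (fun m => (sinBlock_differentiable k l hl (m + 1)).differentiableOn) hUo
    intro m w hw
    exact sinBlock_succ_norm_le' k l hk hkl m hr (le_of_lt hw.1)
      (by
        have := hw.2
        simp only [Metric.mem_ball, dist_zero_right] at this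
        exact le_of_lt this)
  exact this.differentiableAt (hUo.mem_nhds hw₀U)

lemma Gs_differentiableAt (hk : 0 < k) (hkl : k < l) {w₀ : ℂ} (hw₀ : 0 < w₀.re) :
    DifferentiableAt ℂ (Gs k l) w₀ :=
  ((sinBlock_differentiable k l (lt_trans hk hkl) 0).differentiableAt).add
    (G1_differentiableAt k l hk hkl hw₀)

lemma sinBlock_summable (hk : 0 < k) (hkl : k < l) {w : ℂ} (hw : 0 < w.re) :
    Summable (fun m : ℕ => sinBlock k l (m + 1) w) := by
  apply Summable.of_norm_bounded
    (g := fun m : ℕ => (4 * l ^ 2 * ‖w‖) * ((m : ℝ) + 1) ^ (-(w.re / 2) - 1))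
    ((summable_aux (by linarith : (0:ℝ) < w.re / 2)).mul_left _)
  intro m
  exact sinBlock_succ_norm_le' k l hk hkl m (by linarith : (0:ℝ) < w.re / 2) (by linarith) le_rfl

lemma hasSum_sinTerm (hk : 0 < k) (hkl : k < l) {w : ℂ} (hw : 1 < w.re) :
    HasSum (fun n : ℕ => sinTerm k l n w)
      (HurwitzZeta.sinZeta (((k : ℝ) / (2 * l) : ℝ) : UnitAddCircle) w) := by
  have hl : 0 < l := lt_trans hk hkl
  have hl' : (l : ℝ) ≠ 0 := by positivity
  have h := HurwitzZeta.hasSum_nat_sinZeta ((k : ℝ) / (2 * l)) hw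
  refine h.congr_fun fun n => ?_
  rw [sinTerm, sc]
  have harg : (n : ℝ) * k * π / l = 2 * π * ((k : ℝ) / (2 * l)) * n := by
    field_simp
  rw [harg, Complex.cpow_neg, ← div_eq_mul_inv]

lemma hasSum_sinBlock (hk : 0 < k) (hkl : k < l) {w : ℂ} (hw : 1 < w.re) :
    HasSum (fun m : ℕ => sinBlock k l m w) (HurwitzZeta.sinZeta (((k : ℝ) / (2 * l) : ℝ) : UnitAddCircle) w) := by
  have hl : 0 < l := lt_trans hk hkl
  haveI : NeZero (2 * l) := ⟨by omega⟩
  have h := hasSum_sinTerm k l hk hkl hw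
  have h2 := ((Nat.divModEquiv (2 * l)).symm.hasSum_iff).2 h
  have h3 := h2.prod_fiberwise (g := fun m => ∑ j : Fin (2 * l),
      sinTerm k l (m * (2 * l) + (j : ℕ)) w)
    (fun m => hasSum_fintype _)
  refine h3.congr_fun fun m => ?_
  rw [sinBlock, ← Fin.sum_univ_eq_sum_range]

lemma Gs_eq_of_one_lt (hk : 0 < k) (hkl : k < l) {w : ℂ} (hw : 1 < w.re) :
    Gs k l w = HurwitzZeta.sinZeta (((k : ℝ) / (2 * l) : ℝ) : UnitAddCircle) w := by
  have h := hasSum_sinBlock k l hk hkl hw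
  rw [Gs, G1, ← Summable.tsum_eq_zero_add h.summable, h.tsum_eq]

lemma Gs_eq (hk : 0 < k) (hkl : k < l) {w : ℂ} (hw : 0 < w.re) :
    Gs k l w = HurwitzZeta.sinZeta (((k : ℝ) / (2 * l) : ℝ) : UnitAddCircle) w := by
  set U : Set ℂ := {w : ℂ | 0 < w.re} with hU_def
  have hUo : IsOpen U := isOpen_lt continuous_const Complex.continuous_re
  have hUc : IsPreconnected U := (convex_halfSpace_re_gt 0).isPreconnected
  have hFd : DifferentiableOn ℂ (Gs k l) U :=
    fun z hz => (Gs_differentiableAt k l hk hkl hz).differentiableWithinAt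
  have hF : AnalyticOnNhd ℂ (Gs k l) U := hFd.analyticOnNhd hUo
  have hG : AnalyticOnNhd ℂ (HurwitzZeta.sinZeta (((k : ℝ) / (2 * l) : ℝ) : UnitAddCircle)) U :=
    ((HurwitzZeta.differentiableAt_sinZeta (((k : ℝ) / (2 * l) : ℝ) : UnitAddCircle)).differentiableOn).analyticOnNhd
      hUo
  have h2 : (2 : ℂ) ∈ U := by simp [hU_def]
  have heq : Gs k l =ᶠ[nhds (2 : ℂ)] HurwitzZeta.sinZeta (((k : ℝ) / (2 * l) : ℝ) : UnitAddCircle) := by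
    have hopen : IsOpen {w : ℂ | 1 < w.re} := isOpen_lt continuous_const Complex.continuous_re
    filter_upwards [hopen.mem_nhds (by simp : (2:ℂ) ∈ {w : ℂ | 1 < w.re})] with z hz
    exact Gs_eq_of_one_lt k l hk hkl hz
  exact hF.eqOn_of_preconnected_of_eventuallyEq hG hUc h2 heq hw

end SinSide

lemma oddTerm_ofReal {a : ℝ} (ha0 : 0 < a) (ha1 : a ≤ 1 / 2) (n : ℕ) (s : ℝ) :
    oddTerm a n (s : ℂ) = ((((n : ℝ) + a) ^ (-s) - ((n : ℝ) + 1 - a) ^ (-s) : ℝ) : ℂ) := by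
  have h1 : (0 : ℝ) ≤ (n : ℝ) + a := by positivity
  have h2 : (0 : ℝ) ≤ (n : ℝ) + 1 - a := by linarith
  have hneg : -(s : ℂ) = ((-s : ℝ) : ℂ) := by push_cast; ring
  rw [oddTerm, hneg, ← Complex.ofReal_cpow h1, ← Complex.ofReal_cpow h2]
  push_cast
  ring

lemma sinTerm_ofReal (k l n : ℕ) (x : ℝ) :
    sinTerm k l n (x : ℂ) = ((sc k l n * (n : ℝ) ^ (-x) : ℝ) : ℂ) := by
  have hneg : -(x : ℂ) = ((-x : ℝ) : ℂ) := by push_cast; ring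
  have hb : ((n : ℕ) : ℂ) = (((n : ℝ)) : ℂ) := by push_cast; rfl
  rw [sinTerm, hneg, hb, ← Complex.ofReal_cpow (Nat.cast_nonneg n)]
  push_cast
  ring

end

end MalmstenAux

open MalmstenAux HurwitzZeta Complex in
/-- Malmstén's functional equation (second form). -/
theorem malmsten_functional_equation_two
    (k l : ℕ) (hk : 0 < k) (hkl : k < l) (s : ℝ) (hs0 : 0 < s) (hs1 : s < 1) :
    Summable (fun n : ℕ =>
        1 / (2 * (n : ℝ) * l + k) ^ s - 1 / ((2 * (n : ℝ) + 2) * l - k) ^ s) ∧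
    ∃ R : ℝ,
      Tendsto (fun N : ℕ => ∑ n ∈ Finset.range N,
          Real.sin ((n + 1) * k * π / l) / ((n : ℝ) + 1) ^ (1 - s))
        atTop (nhds R) ∧
      (∑' n : ℕ,
          (1 / (2 * (n : ℝ) * l + k) ^ s - 1 / ((2 * (n : ℝ) + 2) * l - k) ^ s))
        = (π / l) ^ s / (Real.sin (s * π / 2) * Real.Gamma s) * R := by
  have hl : 0 < l := hk.trans hkl
  have hlR : (0 : ℝ) < l := by exact_mod_cast hl
  have hkR : (0 : ℝ) < k := by exact_mod_cast hk
  have hklR : (k : ℝ) < l := by exact_mod_cast hkl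
  set a : ℝ := (k : ℝ) / (2 * l) with ha_def
  have ha0 : 0 < a := by positivity
  have ha1 : a ≤ 1 / 2 := by
    rw [ha_def, div_le_iff₀ (by positivity)]
    linarith
  -- the real grouped Hurwitz series
  set f : ℕ → ℝ := fun n => ((n : ℝ) + a) ^ (-s) - ((n : ℝ) + 1 - a) ^ (-s) with hf_def
  have hofReal : ∀ n : ℕ, oddTerm a n (s : ℂ) = ((f n : ℝ) : ℂ) := fun n =>
    oddTerm_ofReal ha0 ha1 n s
  have hsre : (0 : ℝ) < ((s : ℂ)).re := by simpa using hs0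
  have hsum_f : Summable f := by
    apply Summable.of_norm_bounded
      (g := fun n : ℕ => (s * a ^ (-s - 1)) * ((n : ℝ) + 1) ^ (-s - 1))
      ((summable_aux hs0).mul_left _)
    intro n
    have h1 := oddTerm_norm_le ha0 ha1 n hsre
    rw [hofReal n, Complex.norm_real] at h1
    have hnorm_s : ‖(s : ℂ)‖ = s := by
      rw [Complex.norm_real, Real.norm_eq_abs, abs_of_pos hs0]
    rw [hnorm_s] at h1
    have hre : -((s : ℂ)).re - 1 = -s - 1 := by simp
    rw [hre] at h1
    have hbase : a * ((n : ℝ) + 1) ≤ (n : ℝ) + a := by nlinarith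
    have h2 : ((n : ℝ) + a) ^ (-s - 1) ≤ (a * ((n : ℝ) + 1)) ^ (-s - 1) :=
      Real.rpow_le_rpow_of_nonpos (by positivity) hbase (by linarith)
    have h3 : (a * ((n : ℝ) + 1)) ^ (-s - 1) = a ^ (-s - 1) * ((n : ℝ) + 1) ^ (-s - 1) :=
      Real.mul_rpow (le_of_lt ha0) (by positivity)
    calc ‖f n‖ ≤ s * ((n : ℝ) + a) ^ (-s - 1) := h1
      _ ≤ s * (a ^ (-s - 1) * ((n : ℝ) + 1) ^ (-s - 1)) := by
          rw [← h3]
          exact mul_le_mul_of_nonneg_left h2 (le_of_lt hs0)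
      _ = (s * a ^ (-s - 1)) * ((n : ℝ) + 1) ^ (-s - 1) := by ring
  have hterm_eq : ∀ n : ℕ, 1 / (2 * (n : ℝ) * l + k) ^ s - 1 / ((2 * (n : ℝ) + 2) * l - k) ^ s
      = (2 * l : ℝ) ^ (-s) * f n := by
    intro n
    have e1 : 2 * (n : ℝ) * l + k = (2 * l) * ((n : ℝ) + a) := by
      rw [ha_def]; field_simp
    have e2 : (2 * (n : ℝ) + 2) * l - k = (2 * l) * ((n : ℝ) + 1 - a) := by
      rw [ha_def]; field_simp
    have hp1 : (0 : ℝ) ≤ (n : ℝ) + a := by positivity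
    have hp2 : (0 : ℝ) ≤ (n : ℝ) + 1 - a := by linarith
    simp only [hf_def]
    rw [e1, e2, Real.mul_rpow (by positivity) hp1, Real.mul_rpow (by positivity) hp2,
      Real.rpow_neg (by positivity : (0:ℝ) ≤ 2 * (l:ℝ)), Real.rpow_neg hp1, Real.rpow_neg hp2,
      one_div, one_div, mul_inv, mul_inv]
    ring
  have hsum_lhs : Summable (fun n : ℕ =>
      1 / (2 * (n : ℝ) * l + k) ^ s - 1 / ((2 * (n : ℝ) + 2) * l - k) ^ s) :=
    ((hsum_f.mul_left ((2 * l : ℝ) ^ (-s))).congr fun n => (hterm_eq n).symm)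
  refine ⟨hsum_lhs, ?_⟩
  set A : ℝ := ∑' n, f n with hA_def
  -- link with Fodd
  have hFA : Fodd a (s : ℂ) = ((A : ℝ) : ℂ) := by
    have hshift : Summable fun n => f (n + 1) := (_root_.summable_nat_add_iff 1).2 hsum_f
    have hF1 : F1 a (s : ℂ) = ((∑' n : ℕ, f (n + 1) : ℝ) : ℂ) := by
      rw [F1, Complex.ofReal_tsum]
      exact tsum_congr fun n => hofReal (n + 1)
    rw [Fodd, hF1, hofReal 0, hA_def, Summable.tsum_eq_zero_add hsum_f, Complex.ofReal_add]
  have hA2 : ((A : ℝ) : ℂ) = 2 * hurwitzZetaOdd a (s : ℂ) := by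
    rw [← hFA]
    exact Fodd_eq ha0 ha1 hsre
  -- the sine side
  set x : ℝ := 1 - s with hx_def
  have hx0 : 0 < x := by rw [hx_def]; linarith
  have hxre : (0 : ℝ) < ((x : ℂ)).re := by simpa using hx0
  set g : ℕ → ℝ := fun n => sc k l n * (n : ℝ) ^ (-x) with hg_def
  have hg_ofReal : ∀ n : ℕ, sinTerm k l n (x : ℂ) = ((g n : ℝ) : ℂ) := fun n =>
    sinTerm_ofReal k l n x
  set B : ℕ → ℝ := fun m => ∑ j ∈ Finset.range (2 * l), g (m * (2 * l) + j) with hB_def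
  have hB_ofReal : ∀ m : ℕ, sinBlock k l m (x : ℂ) = ((B m : ℝ) : ℂ) := by
    intro m
    rw [sinBlock, hB_def]
    push_cast
    exact Finset.sum_congr rfl fun j _ => hg_ofReal _
  have hsumB1 : Summable fun m => B (m + 1) := by
    have h := (sinBlock_summable k l hk hkl hxre).map Complex.reCLM Complex.continuous_re
    refine h.congr fun m => ?_
    simp only [Function.comp, Complex.reCLM_apply]
    rw [hB_ofReal (m + 1), Complex.ofReal_re]
  have hsumB : Summable B := (_root_.summable_nat_add_iff 1).1 hsumB1
  set RB : ℝ := ∑' m, B m with hRB_def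
  have hRBC : ((RB : ℝ) : ℂ) = Gs k l (x : ℂ) := by
    have hG1 : G1 k l (x : ℂ) = ((∑' m : ℕ, B (m + 1) : ℝ) : ℂ) := by
      rw [G1, Complex.ofReal_tsum]
      exact tsum_congr fun m => hB_ofReal (m + 1)
    rw [Gs, hG1, hB_ofReal 0, hRB_def, Summable.tsum_eq_zero_add hsumB, Complex.ofReal_add]
  -- partial sums converge to RB
  set P : ℕ → ℝ := fun N => ∑ n ∈ Finset.range N, g n with hP_def
  have hP_block : ∀ m : ℕ, P (m * (2 * l)) = ∑ i ∈ Finset.range m, B i := by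
    intro m
    induction m with
    | zero => simp [hP_def]
    | succ m ih =>
      have hsplit : (m + 1) * (2 * l) = m * (2 * l) + 2 * l := by ring
      have h1 : P ((m + 1) * (2 * l)) = P (m * (2 * l)) +
          ∑ j ∈ Finset.range (2 * l), g (m * (2 * l) + j) := by
        rw [hsplit]
        exact Finset.sum_range_add g (m * (2 * l)) (2 * l)
      rw [h1, ih, Finset.sum_range_succ]
  have hT : Tendsto (fun m : ℕ => ∑ i ∈ Finset.range m, B i) atTop (nhds RB) :=
    hsumB.hasSum.tendsto_sum_nat
  have hq : Tendsto (fun N : ℕ => N / (2 * l)) atTop atTop := by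
    apply Filter.tendsto_atTop_atTop.2
    intro b
    exact ⟨2 * l * b, fun N hN => (Nat.le_div_iff_mul_le (by omega)).2
      (by rw [Nat.mul_comm]; exact hN)⟩
  have herr : Tendsto (fun N : ℕ => P N - ∑ i ∈ Finset.range (N / (2 * l)), B i)
      atTop (nhds 0) := by
    apply squeeze_zero_norm' (a := fun N : ℕ =>
      (2 * l : ℝ) * (((N / (2 * l) : ℕ) : ℝ) + 1) ^ (-x))
    · filter_upwards [Filter.eventually_ge_atTop (2 * l)] with N hN
      set q : ℕ := N / (2 * l) with hq_def
      have hq1 : 1 ≤ q := by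
        rw [hq_def]
        exact (Nat.one_le_div_iff (by omega)).2 hN
      have hNeq : q * (2 * l) + N % (2 * l) = N := Nat.div_add_mod' N (2 * l)
      have hPN : P N = P (q * (2 * l)) + ∑ j ∈ Finset.range (N % (2 * l)),
          g (q * (2 * l) + j) := by
        have h := Finset.sum_range_add g (q * (2 * l)) (N % (2 * l))
        rw [hNeq] at h
        exact h
      rw [hPN, hP_block q, add_sub_cancel_left]
      have hterm : ∀ j ∈ Finset.range (N % (2 * l)),
          ‖g (q * (2 * l) + j)‖ ≤ ((q : ℝ) + 1) ^ (-x) := by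
        intro j hj
        set n : ℕ := q * (2 * l) + j with hn_def
        have hnq : (q : ℝ) + 1 ≤ (n : ℝ) := by
          have : q + 1 ≤ n := by
            rw [hn_def]
            have : 2 * l ≥ 2 := by omega
            nlinarith
          exact_mod_cast this
        have hn0 : (0 : ℝ) < (q : ℝ) + 1 := by positivity
        have h1 : (n : ℝ) ^ (-x) ≤ ((q : ℝ) + 1) ^ (-x) :=
          Real.rpow_le_rpow_of_nonpos hn0 hnq (by linarith)
        have h2 : ‖g n‖ ≤ (n : ℝ) ^ (-x) := by
          rw [hg_def, Real.norm_eq_abs, abs_mul,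
            _root_.abs_of_nonneg (Real.rpow_nonneg (Nat.cast_nonneg n) _)]
          calc |sc k l n| * (n : ℝ) ^ (-x) ≤ 1 * (n : ℝ) ^ (-x) :=
                mul_le_mul_of_nonneg_right (sc_abs_le k l n)
                  (Real.rpow_nonneg (Nat.cast_nonneg n) _)
            _ = (n : ℝ) ^ (-x) := one_mul _
        exact le_trans h2 h1
      calc ‖∑ j ∈ Finset.range (N % (2 * l)), g (q * (2 * l) + j)‖
          ≤ ∑ j ∈ Finset.range (N % (2 * l)), ‖g (q * (2 * l) + j)‖ := norm_sum_le _ _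
        _ ≤ (Finset.range (N % (2 * l))).card • (((q : ℝ) + 1) ^ (-x)) :=
            Finset.sum_le_card_nsmul _ _ _ hterm
        _ ≤ (2 * l : ℝ) * (((q : ℕ) : ℝ) + 1) ^ (-x) := by
            simp only [Finset.card_range, nsmul_eq_mul]
            apply mul_le_mul_of_nonneg_right _ (Real.rpow_nonneg (by positivity) _)
            have : N % (2 * l) ≤ 2 * l := le_of_lt (Nat.mod_lt N (by omega))
            exact_mod_cast this
    · have h1 : Tendsto (fun N : ℕ => ((N / (2 * l) : ℕ) : ℝ) + 1) atTop atTop :=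
        tendsto_atTop_add_const_right _ 1 (tendsto_natCast_atTop_atTop.comp hq)
      have h2 := (tendsto_rpow_neg_atTop hx0).comp h1
      have h3 := h2.const_mul (2 * l : ℝ)
      simpa using h3
  have hPlim : Tendsto P atTop (nhds RB) := by
    have h1 : Tendsto (fun N : ℕ => ∑ i ∈ Finset.range (N / (2 * l)), B i) atTop (nhds RB) :=
      hT.comp hq
    have h2 := h1.add herr
    rw [add_zero] at h2
    refine h2.congr fun N => ?_
    ring
  -- identify RB with the statement's partial sums
  have hS_eq : ∀ N : ℕ, (∑ n ∈ Finset.range N,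
      Real.sin (((n : ℝ) + 1) * k * π / l) / ((n : ℝ) + 1) ^ (1 - s)) = P (N + 1) := by
    intro N
    show _ = ∑ n ∈ Finset.range (N + 1), g n
    rw [Finset.sum_range_succ']
    have hg0 : g 0 = 0 := by
      simp [hg_def, sc]
    rw [hg0, add_zero]
    refine Finset.sum_congr rfl fun i _ => ?_
    simp only [hg_def, sc]
    have hc : ((i + 1 : ℕ) : ℝ) = (i : ℝ) + 1 := by push_cast; ring
    rw [hc, ← hx_def, Real.rpow_neg (by positivity), div_eq_mul_inv]
  have hS_lim : Tendsto (fun N : ℕ => ∑ n ∈ Finset.range N,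
      Real.sin (((n : ℝ) + 1) * k * π / l) / ((n : ℝ) + 1) ^ (1 - s)) atTop (nhds RB) := by
    have := hPlim.comp (tendsto_add_atTop_nat 1)
    refine this.congr fun N => (hS_eq N).symm
  refine ⟨RB, hS_lim, ?_⟩
  -- now the functional equation
  have hs_ne : ∀ n : ℕ, (s : ℂ) ≠ -(n : ℂ) := by
    intro n h
    have h2 : (s : ℂ) = ((-(n : ℝ) : ℝ) : ℂ) := by rw [h]; push_cast; ring
    have h3 : s = -(n : ℝ) := Complex.ofReal_inj.1 h2
    have h4 : (0 : ℝ) ≤ (n : ℝ) := Nat.cast_nonneg n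
    linarith
  have hfe := sinZeta_one_sub (a : UnitAddCircle) (s := (s : ℂ)) hs_ne
  have hxc : ((x : ℝ) : ℂ) = 1 - (s : ℂ) := by rw [hx_def]; push_cast; ring
  have hGs : ((RB : ℝ) : ℂ) = sinZeta (a : UnitAddCircle) (1 - (s : ℂ)) := by
    rw [hRBC, ← hxc, Gs_eq k l hk hkl hxre, ha_def]
  have hRB_val : RB = (2 * π) ^ (-s) * Real.Gamma s * Real.sin (π * s / 2) * A := by
    have hc1 : ((2 * (π : ℝ) : ℝ) : ℂ) ^ (-(s : ℂ)) = (((2 * π : ℝ) ^ (-s) : ℝ) : ℂ) := by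
      rw [Complex.ofReal_cpow (by positivity), Complex.ofReal_neg]
    have key : ((RB : ℝ) : ℂ) = ((((2 * π) ^ (-s) * Real.Gamma s * Real.sin (π * s / 2) * A
        : ℝ)) : ℂ) := by
      rw [hGs, hfe]
      have h2 : hurwitzZetaOdd (a : UnitAddCircle) (s : ℂ) = ((A : ℝ) : ℂ) / 2 := by
        rw [hA2]; ring
      rw [h2]
      have hπ : ((π : ℝ) : ℂ) * (s : ℂ) / 2 = (((π * s / 2 : ℝ)) : ℂ) := by push_cast; ring
      rw [hπ, ← Complex.ofReal_sin, Complex.Gamma_ofReal]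
      have h2π : (2 * ((π : ℝ) : ℂ)) = ((2 * π : ℝ) : ℂ) := by push_cast; ring
      rw [h2π, hc1]
      push_cast
      ring
    exact Complex.ofReal_inj.1 key
  -- final algebra
  have htsum : (∑' n : ℕ, (1 / (2 * (n : ℝ) * l + k) ^ s
      - 1 / ((2 * (n : ℝ) + 2) * l - k) ^ s)) = (2 * l : ℝ) ^ (-s) * A := by
    rw [tsum_congr hterm_eq, tsum_mul_left]
  rw [htsum, hRB_val]
  have hsin_eq : Real.sin (s * π / 2) = Real.sin (π * s / 2) := by ring_nf
  have hsinpos : 0 < Real.sin (π * s / 2) := by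
    apply Real.sin_pos_of_pos_of_lt_pi (by positivity)
    nlinarith [Real.pi_pos]
  have hgam : 0 < Real.Gamma s := Real.Gamma_pos_of_pos hs0
  have hkey : (π / l) ^ s * (2 * π : ℝ) ^ (-s) = (2 * (l : ℝ)) ^ (-s) := by
    have h1 : (π / l) ^ s * (2 * (l : ℝ)) ^ s = (2 * π) ^ s := by
      rw [← Real.mul_rpow (by positivity) (by positivity)]
      congr 1
      field_simp
    have h2l : (0 : ℝ) < (2 * (l : ℝ)) ^ s := Real.rpow_pos_of_pos (by positivity) s
    have hπl : (0 : ℝ) < (π / l) ^ s := Real.rpow_pos_of_pos (by positivity) s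
    rw [Real.rpow_neg (by positivity : (0:ℝ) ≤ 2 * π),
      Real.rpow_neg (by positivity : (0:ℝ) ≤ 2 * (l : ℝ)), ← h1]
    rw [mul_inv, ← mul_assoc, mul_inv_cancel₀ (ne_of_gt hπl), one_mul]
  have hfinal : (π / l) ^ s / (Real.sin (π * s / 2) * Real.Gamma s) *
      ((2 * π) ^ (-s) * Real.Gamma s * Real.sin (π * s / 2) * A) =
      ((π / l) ^ s * (2 * π) ^ (-s)) * A := by
    field_simp
  rw [hsin_eq, hfinal, hkey]
end

section
/- Let s be a real number with 0 < s < 1. Then η(1 − s) = ((2^s − 1)/(1 − 2^{s−1})) · π^{−s} · cos(sπ/2) · Γ(s) · η(s), where η(t) = Σ_{n=1}^∞ (-1)^{n+1}/n^t denotes the Dirichlet eta function (the series converges for every real t > 0). -/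
open Real Filter Finset

noncomputable def etaFC (k : ℕ) (z : ℂ) : ℂ :=
  ((2 * k + 1 : ℕ) : ℂ) ^ (-z) - ((2 * k + 2 : ℕ) : ℂ) ^ (-z)

noncomputable def etaH (z : ℂ) : ℂ := ∑' k : ℕ, etaFC k z

lemma norm_etaFC_le {z : ℂ} (hz : 0 < z.re) (k : ℕ) :
    ‖etaFC k z‖ ≤ ‖z‖ * (2 * (k : ℝ) + 1) ^ (-z.re - 1) := by
  set a : ℝ := 2 * (k : ℝ) + 1 with ha
  have ha1 : (1 : ℝ) ≤ a := by
    have hk : (0 : ℝ) ≤ (k : ℝ) := k.cast_nonneg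
    simp only [ha]; linarith
  have key : ∀ x ∈ Set.Icc a (a + 1),
      HasDerivWithinAt (fun x : ℝ => ((x : ℂ)) ^ (-z)) (-z * (x : ℂ) ^ (-z - 1))
        (Set.Icc a (a + 1)) x := by
    intro x hx
    have hx0 : (0 : ℝ) < x := lt_of_lt_of_le one_pos (ha1.trans hx.1)
    have hslit : ((x : ℝ) : ℂ) ∈ Complex.slitPlane := Complex.ofReal_mem_slitPlane.2 hx0
    exact ((Complex.hasStrictDerivAt_cpow_const hslit).hasDerivAt.comp_ofReal).hasDerivWithinAt
  have bound : ∀ x ∈ Set.Icc a (a + 1),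
      ‖-z * (x : ℂ) ^ (-z - 1)‖ ≤ ‖z‖ * a ^ (-z.re - 1) := by
    intro x hx
    have hx0 : (0 : ℝ) < x := lt_of_lt_of_le one_pos (ha1.trans hx.1)
    rw [norm_mul, norm_neg,
      Complex.norm_cpow_eq_rpow_re_of_pos hx0]
    have he : (-z - 1).re = -z.re - 1 := by simp
    rw [he]
    refine mul_le_mul_of_nonneg_left ?_ (norm_nonneg z)
    exact Real.rpow_le_rpow_of_nonpos (by linarith) hx.1 (by linarith)
  have hmem1 : a ∈ Set.Icc a (a + 1) := Set.left_mem_Icc.2 (by linarith)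
  have hmem2 : a + 1 ∈ Set.Icc a (a + 1) := Set.right_mem_Icc.2 (by linarith)
  have := (convex_Icc a (a + 1)).norm_image_sub_le_of_norm_hasDerivWithin_le key bound hmem2 hmem1
  have hcast1 : ((2 * k + 1 : ℕ) : ℂ) = ((a : ℝ) : ℂ) := by push_cast [ha]; ring
  have hcast2 : ((2 * k + 2 : ℕ) : ℂ) = (((a + 1 : ℝ)) : ℂ) := by push_cast [ha]; ring
  have hnorm : ‖(a : ℝ) - (a + 1)‖ = 1 := by simp
  rw [etaFC, hcast1, hcast2]
  calc ‖((a : ℝ) : ℂ) ^ (-z) - (((a + 1 : ℝ)) : ℂ) ^ (-z)‖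
      ≤ ‖z‖ * a ^ (-z.re - 1) * ‖(a : ℝ) - (a + 1)‖ := this
    _ = ‖z‖ * a ^ (-z.re - 1) := by rw [hnorm, mul_one]

lemma summable_etaBound (c : ℝ) {e : ℝ} (he : e < -1) :
    Summable (fun k : ℕ => c * (2 * (k : ℝ) + 1) ^ e) := by
  apply Summable.mul_left c
  have h1 : Summable (fun n : ℕ => ((n : ℝ) + 1) ^ e) := by
    have h0 : Summable (fun n : ℕ => ((n : ℝ)) ^ e) := Real.summable_nat_rpow.mpr he
    have := (summable_nat_add_iff 1).mpr h0
    simpa using this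
  refine Summable.of_nonneg_of_le (fun k => Real.rpow_nonneg (by positivity) e)
    (fun k => ?_) h1
  exact Real.rpow_le_rpow_of_nonpos (by positivity) (by push_cast; linarith) (by linarith)

lemma etaH_diffAt {z₀ : ℂ} (h : 0 < z₀.re) : DifferentiableAt ℂ etaH z₀ := by
  set ε := z₀.re / 2 with hε
  set R := ‖z₀‖ + 1 with hR
  set S := {w : ℂ | ε < w.re} ∩ Metric.ball 0 R with hS
  have hSopen : IsOpen S :=
    (isOpen_lt continuous_const Complex.continuous_re).inter Metric.isOpen_ball
  have hz₀S : z₀ ∈ S := by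
    constructor
    · simp only [Set.mem_setOf_eq, hε]; linarith
    · simp only [Metric.mem_ball, dist_zero_right, hR]; linarith
  have hu : Summable (fun k : ℕ => R * (2 * (k : ℝ) + 1) ^ (-ε - 1)) :=
    summable_etaBound R (by simp only [hε]; linarith)
  have hdiff : ∀ k : ℕ, DifferentiableOn ℂ (etaFC k) S := by
    intro k w hw
    apply DifferentiableAt.differentiableWithinAt
    have h1 : ((2 * k + 1 : ℕ) : ℂ) ≠ 0 := Nat.cast_ne_zero.2 (by omega)
    have h2 : ((2 * k + 2 : ℕ) : ℂ) ≠ 0 := Nat.cast_ne_zero.2 (by omega)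
    exact ((differentiableAt_id.neg).const_cpow (Or.inl h1)).sub
      ((differentiableAt_id.neg).const_cpow (Or.inl h2))
  have hbound : ∀ k : ℕ, ∀ w ∈ S, ‖etaFC k w‖ ≤ R * (2 * (k : ℝ) + 1) ^ (-ε - 1) := by
    intro k w hw
    have hε0 : 0 < ε := by simp only [hε]; linarith
    have hw1 : 0 < w.re := lt_trans hε0 hw.1
    refine (norm_etaFC_le hw1 k).trans ?_
    have h1 : ‖w‖ ≤ R := by
      have := hw.2
      simp only [Metric.mem_ball, dist_zero_right] at this
      linarith
    have hbase : (1 : ℝ) ≤ 2 * (k : ℝ) + 1 := by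
      have hk : (0 : ℝ) ≤ (k : ℝ) := k.cast_nonneg
      linarith
    have hwre : ε < w.re := hw.1
    have h2 : (2 * (k : ℝ) + 1) ^ (-w.re - 1) ≤ (2 * (k : ℝ) + 1) ^ (-ε - 1) :=
      Real.rpow_le_rpow_of_exponent_le hbase (by linarith)
    exact mul_le_mul h1 h2 (Real.rpow_nonneg (by positivity) _) (by positivity)
  have hd := Complex.differentiableOn_tsum_of_summable_norm hu hdiff hSopen hbound
  exact (hd.differentiableAt (hSopen.mem_nhds hz₀S) : DifferentiableAt ℂ _ z₀)

lemma etaH_eq_of_one_lt {z : ℂ} (hz : 1 < z.re) :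
    etaH z = (1 - (2 : ℂ) ^ ((1 : ℂ) - z)) * riemannZeta z := by
  have hz0 : z ≠ 0 := by
    intro h; rw [h, Complex.zero_re] at hz; linarith
  set a : ℕ → ℂ := fun n => (n : ℂ) ^ (-z) with ha
  have hsum : Summable a := by
    have := Complex.summable_one_div_nat_cpow.mpr hz
    simpa [ha, Complex.cpow_neg, one_div] using this
  have hzeta : ∑' n, a n = riemannZeta z := by
    rw [zeta_eq_tsum_one_div_nat_cpow hz]
    exact tsum_congr fun n => by simp only [ha, Complex.cpow_neg, one_div]
  have h2 : ∀ k : ℕ, a (2 * k) = (2 : ℂ) ^ (-z) * a k := by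
    intro k
    simp only [ha]
    rw [show ((2 * k : ℕ) : ℂ) = ((2 : ℝ) : ℂ) * ((k : ℝ) : ℂ) by push_cast; ring,
      Complex.mul_cpow_ofReal_nonneg (by norm_num) k.cast_nonneg]
    norm_num
  have heven : HasSum (fun k => a (2 * k)) ((2 : ℂ) ^ (-z) * riemannZeta z) := by
    have h := hsum.hasSum.mul_left ((2 : ℂ) ^ (-z))
    rw [hzeta] at h
    simpa only [h2] using h
  have hso : Summable (fun k => a (2 * k + 1)) :=
    hsum.comp_injective (fun x y h => by omega)
  have hall : HasSum a (riemannZeta z) := hzeta ▸ hsum.hasSum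
  have hodd : HasSum (fun k => a (2 * k + 1))
      (riemannZeta z - (2 : ℂ) ^ (-z) * riemannZeta z) := by
    have h3 := HasSum.even_add_odd heven hso.hasSum
    have h4 : riemannZeta z = (2 : ℂ) ^ (-z) * riemannZeta z + ∑' k, a (2 * k + 1) :=
      hall.unique h3
    have h5 : ∑' k, a (2 * k + 1) = riemannZeta z - (2 : ℂ) ^ (-z) * riemannZeta z := by
      rw [eq_sub_iff_add_eq, add_comm, ← h4]
    rw [← h5]
    exact hso.hasSum
  have hshift : HasSum (fun k => a (2 * k + 2)) ((2 : ℂ) ^ (-z) * riemannZeta z) := by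
    have hse : Summable (fun k => a (2 * k)) := heven.summable
    have hs1 : Summable (fun k : ℕ => a (2 * (k + 1))) :=
      (summable_nat_add_iff (f := fun k => a (2 * k)) 1).mpr hse
    have ha0 : a 0 = 0 := by
      simp only [ha, Nat.cast_zero]
      exact Complex.zero_cpow (neg_ne_zero.mpr hz0)
    have ht := Summable.tsum_eq_zero_add hse
    rw [ha0, zero_add, heven.tsum_eq] at ht
    have h6 : (fun k : ℕ => a (2 * (k + 1))) = fun k : ℕ => a (2 * k + 2) := by
      funext k; rw [show 2 * (k + 1) = 2 * k + 2 by ring]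
    have := hs1.hasSum
    rw [← ht] at this
    rw [← h6]
    exact this
  have hfinal : HasSum (fun k => etaFC k z)
      (riemannZeta z - (2 : ℂ) ^ (-z) * riemannZeta z - (2 : ℂ) ^ (-z) * riemannZeta z) := by
    have h := hodd.sub hshift
    have : (fun k => a (2 * k + 1) - a (2 * k + 2)) = fun k => etaFC k z := by
      funext k; simp only [etaFC, ha]
    rwa [this] at h
  rw [etaH, hfinal.tsum_eq]
  rw [show (1 : ℂ) - z = 1 + (-z) by ring, Complex.cpow_add _ _ two_ne_zero,
    Complex.cpow_one]
  ring

lemma etaH_eq_strip {z : ℂ} (h0 : 0 < z.re) (h1 : z.re < 1) :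
    etaH z = (1 - (2 : ℂ) ^ ((1 : ℂ) - z)) * riemannZeta z := by
  set Z : ℂ → ℂ := fun w => (1 - (2 : ℂ) ^ ((1 : ℂ) - w)) * riemannZeta w with hZ
  have hZdiff : ∀ w : ℂ, w ≠ 1 → DifferentiableAt ℂ Z w := by
    intro w hw
    exact ((differentiableAt_const _).sub
      (((differentiableAt_const _).sub differentiableAt_id).const_cpow
        (Or.inl two_ne_zero))).mul (differentiableAt_riemannZeta hw)
  have hre : IsOpen {w : ℂ | 0 < w.re} := isOpen_lt continuous_const Complex.continuous_re
  have hHdo : DifferentiableOn ℂ etaH {w : ℂ | 0 < w.re} :=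
    fun w hw => (etaH_diffAt hw).differentiableWithinAt
  have hHan : AnalyticOnNhd ℂ etaH {w : ℂ | 0 < w.re} := hHdo.analyticOnNhd hre
  have hne1 : IsOpen {w : ℂ | 0 < w.re ∧ w ≠ 1} := by
    have : {w : ℂ | 0 < w.re ∧ w ≠ 1} = {w : ℂ | 0 < w.re} ∩ {(1 : ℂ)}ᶜ := by
      ext w; simp [Set.mem_setOf_eq]
    rw [this]
    exact hre.inter isOpen_compl_singleton
  have hZdo : DifferentiableOn ℂ Z {w : ℂ | 0 < w.re ∧ w ≠ 1} :=
    fun w hw => (hZdiff w hw.2).differentiableWithinAt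
  have hZan : AnalyticOnNhd ℂ Z {w : ℂ | 0 < w.re ∧ w ≠ 1} := hZdo.analyticOnNhd hne1
  -- upper quadrant
  set B : Set ℂ := {w : ℂ | 0 < w.re} ∩ {w : ℂ | 0 < w.im} with hB
  have hBopen : IsOpen B := hre.inter (isOpen_lt continuous_const Complex.continuous_im)
  have hBconv : Convex ℝ B := (convex_halfSpace_re_gt 0).inter (convex_halfSpace_im_gt 0)
  have hBsub1 : B ⊆ {w : ℂ | 0 < w.re} := Set.inter_subset_left
  have hBsub2 : B ⊆ {w : ℂ | 0 < w.re ∧ w ≠ 1} := by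
    intro w hw
    refine ⟨hw.1, ?_⟩
    intro h
    have : w.im = 0 := by rw [h]; simp
    have h2 : (0 : ℝ) < w.im := hw.2
    linarith
  have hmem : (2 + Complex.I : ℂ) ∈ B := by
    constructor <;> simp [Complex.add_re, Complex.add_im]
  have hfg : etaH =ᶠ[nhds (2 + Complex.I : ℂ)] Z := by
    refine Filter.eventuallyEq_of_mem
      ((isOpen_lt continuous_const Complex.continuous_re).mem_nhds
        (show 1 < (2 + Complex.I : ℂ).re by simp [Complex.add_re])) ?_
    intro w hw
    exact etaH_eq_of_one_lt hw
  have step1 : Set.EqOn etaH Z B :=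
    (hHan.mono hBsub1).eqOn_of_preconnected_of_eventuallyEq (hZan.mono hBsub2)
      hBconv.isPreconnected hmem hfg
  -- strip
  set Cs : Set ℂ := {w : ℂ | 0 < w.re} ∩ {w : ℂ | w.re < 1} with hCs
  have hCopen : IsOpen Cs := hre.inter (isOpen_lt Complex.continuous_re continuous_const)
  have hCconv : Convex ℝ Cs := (convex_halfSpace_re_gt 0).inter (convex_halfSpace_re_lt 1)
  have hCsub1 : Cs ⊆ {w : ℂ | 0 < w.re} := Set.inter_subset_left
  have hCsub2 : Cs ⊆ {w : ℂ | 0 < w.re ∧ w ≠ 1} := by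
    intro w hw
    refine ⟨hw.1, ?_⟩
    intro h
    have h2 : w.re < 1 := hw.2
    rw [h] at h2
    simp at h2
  have hz₁B : ((1 / 2 : ℝ) + Complex.I : ℂ) ∈ B := by
    constructor <;> simp [Complex.add_re, Complex.add_im]
  have hz₁C : ((1 / 2 : ℝ) + Complex.I : ℂ) ∈ Cs := by
    constructor <;> simp [Complex.add_re] <;> norm_num
  have hfg₂ : etaH =ᶠ[nhds ((1 / 2 : ℝ) + Complex.I : ℂ)] Z :=
    Filter.eventuallyEq_of_mem (hBopen.mem_nhds hz₁B) step1
  have step2 : Set.EqOn etaH Z Cs :=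
    (hHan.mono hCsub1).eqOn_of_preconnected_of_eventuallyEq (hZan.mono hCsub2)
      hCconv.isPreconnected hz₁C hfg₂
  exact step2 ⟨h0, h1⟩

lemma eta_pair_sum (t : ℝ) (M : ℕ) :
    ∑ n ∈ Finset.range (2 * M), (-1 : ℝ) ^ n / ((n : ℝ) + 1) ^ t
      = ∑ k ∈ Finset.range M, ((2 * (k : ℝ) + 1) ^ (-t) - (2 * (k : ℝ) + 2) ^ (-t)) := by
  induction M with
  | zero => simp
  | succ M ih =>
    rw [show 2 * (M + 1) = 2 * M + 1 + 1 by ring, Finset.sum_range_succ, Finset.sum_range_succ,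
      ih, Finset.sum_range_succ]
    have e1 : (-1 : ℝ) ^ (2 * M) = 1 := Even.neg_one_pow (even_two_mul M)
    have e2 : (-1 : ℝ) ^ (2 * M + 1) = -1 := Odd.neg_one_pow ⟨M, by ring⟩
    rw [e1, e2]
    have p1 : ((2 * M : ℕ) : ℝ) + 1 = 2 * (M : ℝ) + 1 := by push_cast; ring
    have p2 : ((2 * M + 1 : ℕ) : ℝ) + 1 = 2 * (M : ℝ) + 2 := by push_cast; ring
    rw [p1, p2, Real.rpow_neg (by positivity), Real.rpow_neg (by positivity)]
    ring

lemma eta_hasSum {t : ℝ} (ht : 0 < t) :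
    ∃ l : ℝ, Tendsto (fun N : ℕ => ∑ n ∈ Finset.range N, (-1 : ℝ) ^ n / ((n : ℝ) + 1) ^ t)
      atTop (nhds l) ∧ etaH (t : ℂ) = (l : ℂ) := by
  -- alternating series test
  have hanti : Antitone (fun n : ℕ => ((n : ℝ) + 1) ^ (-t)) := by
    intro a b hab
    have hcast : (a : ℝ) ≤ b := Nat.cast_le.mpr hab
    exact Real.rpow_le_rpow_of_nonpos (by positivity) (by linarith) (by linarith)
  have h0 : Tendsto (fun n : ℕ => ((n : ℝ) + 1) ^ (-t)) atTop (nhds 0) := by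
    have h1 : Tendsto (fun n : ℕ => ((n : ℝ) + 1)) atTop atTop :=
      tendsto_atTop_add_const_right _ 1 tendsto_natCast_atTop_atTop
    exact (tendsto_rpow_neg_atTop ht).comp h1
  obtain ⟨l, hl⟩ := hanti.tendsto_alternating_series_of_tendsto_zero h0
  have hleq : (fun n : ℕ => ∑ i ∈ Finset.range n, (-1 : ℝ) ^ i * ((i : ℝ) + 1) ^ (-t))
      = fun N : ℕ => ∑ n ∈ Finset.range N, (-1 : ℝ) ^ n / ((n : ℝ) + 1) ^ t := by
    funext N
    refine Finset.sum_congr rfl fun i _ => ?_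
    rw [Real.rpow_neg (by positivity), div_eq_mul_inv]
  rw [hleq] at hl
  refine ⟨l, hl, ?_⟩
  -- summability of the complex paired series at t
  have htre : (0 : ℝ) < ((t : ℂ)).re := by simpa using ht
  have hsum : Summable (fun k => etaFC k (t : ℂ)) := by
    refine Summable.of_norm_bounded (summable_etaBound ‖(t : ℂ)‖
      (e := -((t : ℂ)).re - 1) (by simp [Complex.ofReal_re]; linarith)) ?_
    exact norm_etaFC_le htre
  have hts : Tendsto (fun M : ℕ => ∑ k ∈ Finset.range M, etaFC k (t : ℂ)) atTop
      (nhds (etaH (t : ℂ))) := hsum.hasSum.tendsto_sum_nat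
  -- identify partial sums with even real partial sums
  have hcast : ∀ M : ℕ, ∑ k ∈ Finset.range M, etaFC k (t : ℂ)
      = ((∑ n ∈ Finset.range (2 * M), (-1 : ℝ) ^ n / ((n : ℝ) + 1) ^ t : ℝ) : ℂ) := by
    intro M
    rw [eta_pair_sum t M, Complex.ofReal_sum]
    refine Finset.sum_congr rfl fun k _ => ?_
    rw [Complex.ofReal_sub,
      Complex.ofReal_cpow (x := 2 * (k : ℝ) + 1) (by positivity) (-t),
      Complex.ofReal_cpow (x := 2 * (k : ℝ) + 2) (by positivity) (-t)]
    simp only [etaFC]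
    push_cast
    ring_nf
  have hts2 : Tendsto (fun M : ℕ =>
      ((∑ n ∈ Finset.range (2 * M), (-1 : ℝ) ^ n / ((n : ℝ) + 1) ^ t : ℝ) : ℂ)) atTop
      (nhds (etaH (t : ℂ))) := by
    rw [← funext hcast]
    exact hts
  have h2M : Tendsto (fun M : ℕ => 2 * M) atTop atTop :=
    StrictMono.tendsto_atTop (fun a b h => by omega)
  have hts3 : Tendsto (fun M : ℕ =>
      ((∑ n ∈ Finset.range (2 * M), (-1 : ℝ) ^ n / ((n : ℝ) + 1) ^ t : ℝ) : ℂ)) atTop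
      (nhds ((l : ℝ) : ℂ)) :=
    (Complex.continuous_ofReal.tendsto l).comp (hl.comp h2M)
  exact tendsto_nhds_unique hts2 hts3

/-- Functional equation of the Dirichlet eta function
`η(1-s) = ((2^s - 1)/(1 - 2^{s-1})) π^{-s} cos(sπ/2) Γ(s) η(s)`,
where `η(t) = Σ_{n=1}^∞ (-1)^{n+1}/n^t` (convergent for `t > 0`). -/
theorem eta_functional_equation (s : ℝ) (hs0 : 0 < s) (hs1 : s < 1) :
    ∃ eta_one_sub_s eta_s : ℝ,
      Tendsto (fun N : ℕ => ∑ n ∈ Finset.range N, (-1 : ℝ) ^ n / ((n : ℝ) + 1) ^ (1 - s))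
        atTop (nhds eta_one_sub_s) ∧
      Tendsto (fun N : ℕ => ∑ n ∈ Finset.range N, (-1 : ℝ) ^ n / ((n : ℝ) + 1) ^ s)
        atTop (nhds eta_s) ∧
      eta_one_sub_s =
        (2 ^ s - 1) / (1 - 2 ^ (s - 1)) * π ^ (-s) * Real.cos (s * π / 2) *
          Real.Gamma s * eta_s := by
  obtain ⟨l₁, hl₁t, hl₁⟩ := eta_hasSum (t := 1 - s) (by linarith)
  obtain ⟨l₂, hl₂t, hl₂⟩ := eta_hasSum hs0
  refine ⟨l₁, l₂, hl₁t, hl₂t, ?_⟩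
  -- complex identities
  have e2 : ((1 - s : ℝ) : ℂ) = 1 - (s : ℂ) := by push_cast; ring
  have key1 : (l₁ : ℂ) = (1 - (2 : ℂ) ^ ((s : ℂ))) * riemannZeta (1 - (s : ℂ)) := by
    have h := etaH_eq_strip (z := ((1 - s : ℝ) : ℂ))
      (by simp [Complex.ofReal_re]; linarith) (by simp [Complex.ofReal_re]; linarith)
    rw [hl₁] at h
    rw [h, e2]
    norm_num
  have key2 : (l₂ : ℂ) = (1 - (2 : ℂ) ^ ((1 : ℂ) - (s : ℂ))) * riemannZeta (s : ℂ) := by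
    have h := etaH_eq_strip (z := ((s : ℝ) : ℂ))
      (by simp [Complex.ofReal_re]; linarith) (by simp [Complex.ofReal_re]; linarith)
    rw [hl₂] at h
    exact h
  have hfe := riemannZeta_one_sub (s := (s : ℂ))
    (fun n => by
      intro hc
      have := congrArg Complex.re hc
      simp only [Complex.ofReal_re, Complex.neg_re, Complex.natCast_re] at this
      have hn : (0 : ℝ) ≤ (n : ℝ) := n.cast_nonneg
      linarith)
    (by
      intro hc
      rw [show (1 : ℂ) = ((1 : ℝ) : ℂ) by norm_num] at hc
      have := Complex.ofReal_inj.mp hc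
      linarith)
  have E1 : (l₁ : ℂ) * (1 - (2 : ℂ) ^ ((1 : ℂ) - (s : ℂ)))
      = (1 - (2 : ℂ) ^ ((s : ℂ))) *
        (2 * (2 * (π : ℂ)) ^ (-(s : ℂ)) * Complex.Gamma (s : ℂ) *
          Complex.cos ((π : ℂ) * (s : ℂ) / 2)) * (l₂ : ℂ) := by
    rw [key1, key2, hfe]; ring
  -- convert to real
  have c1 : (2 : ℂ) ^ ((1 : ℂ) - (s : ℂ)) = (((2 : ℝ) ^ (1 - s) : ℝ) : ℂ) := by
    rw [Complex.ofReal_cpow (by norm_num : (0:ℝ) ≤ 2) (1 - s)]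
    push_cast
    ring_nf
  have c2 : (2 : ℂ) ^ ((s : ℂ)) = (((2 : ℝ) ^ s : ℝ) : ℂ) := by
    rw [Complex.ofReal_cpow (by norm_num : (0:ℝ) ≤ 2) s]
    norm_num
  have c3 : (2 * (π : ℂ)) ^ (-(s : ℂ)) = (((2 * π) ^ (-s) : ℝ) : ℂ) := by
    rw [Complex.ofReal_cpow (by positivity : (0:ℝ) ≤ 2 * π) (-s)]
    push_cast
    ring_nf
  have c4 : Complex.Gamma (s : ℂ) = ((Real.Gamma s : ℝ) : ℂ) := Complex.Gamma_ofReal s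
  have c5 : Complex.cos ((π : ℂ) * (s : ℂ) / 2) = ((Real.cos (π * s / 2) : ℝ) : ℂ) := by
    rw [Complex.ofReal_cos]
    push_cast
    ring_nf
  rw [c1, c2, c3, c4, c5] at E1
  have E1R : l₁ * (1 - (2 : ℝ) ^ (1 - s))
      = (1 - (2 : ℝ) ^ s) * (2 * (2 * π) ^ (-s) * Real.Gamma s * Real.cos (π * s / 2)) * l₂ := by
    exact_mod_cast E1
  -- real algebra
  set x : ℝ := (2 : ℝ) ^ s with hx
  have hx0 : 0 < x := Real.rpow_pos_of_pos two_pos s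
  have hx2 : x < 2 := by
    have := Real.rpow_lt_rpow_of_exponent_lt (x := (2:ℝ)) (by norm_num) hs1
    rwa [Real.rpow_one] at this
  have h21s : (2 : ℝ) ^ (1 - s) = 2 / x := by
    rw [Real.rpow_sub two_pos, Real.rpow_one, hx]
  have h2s1 : (2 : ℝ) ^ (s - 1) = x / 2 := by
    rw [Real.rpow_sub two_pos, Real.rpow_one, hx]
  have h2ns : (2 : ℝ) ^ (-s) = 1 / x := by
    rw [Real.rpow_neg (by norm_num : (0:ℝ) ≤ 2), hx, inv_eq_one_div]
  have hmul : (2 * π : ℝ) ^ (-s) = (2 : ℝ) ^ (-s) * π ^ (-s) :=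
    Real.mul_rpow (by norm_num) pi_pos.le
  rw [h21s, hmul, h2ns] at E1R
  rw [h2s1]
  have hxne : x ≠ 2 := ne_of_lt hx2
  have hx0' : x ≠ 0 := ne_of_gt hx0
  have hne : 1 - 2 / x ≠ 0 := by
    intro h
    have : x = 2 := by field_simp at h; linarith
    exact hxne this
  have hl₁eq : l₁ = ((1 - x) * (2 * (1 / x * π ^ (-s)) * Real.Gamma s *
      Real.cos (π * s / 2)) * l₂) / (1 - 2 / x) := by
    rw [eq_div_iff hne]
    exact E1R
  rw [hl₁eq, show Real.cos (s * π / 2) = Real.cos (π * s / 2) by ring_nf]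
  field_simp
  have hA : (x - 2 : ℝ) ≠ 0 := fun h => hxne (by linarith)
  have hB : (2 - x : ℝ) ≠ 0 := fun h => hxne (by linarith)
  ring
end

section
/- Let n > 0 be a real number. Then ∫_0^1 ln(ln(1/y)) · y^{n−1} dy = −(γ + ln(n))/n, where γ is the Euler–Mascheroni constant. -/
open Real MeasureTheory Set Filter

local notation "γ" => Real.eulerMascheroniConstant

lemma integrableOn_log_mul_exp_neg :
    IntegrableOn (fun t : ℝ => Real.log t * Real.exp (-t)) (Ioi 0) := by
  have h := (mellin_hasDerivAt_of_isBigO_rpow (E := ℂ)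
      (f := fun t : ℝ => ((Real.exp (-t) : ℝ) : ℂ)) (a := 2) (b := 0) (s := 1)
      ?_ ?_ (by norm_num) ?_ (by norm_num)).1
  · have h' : IntegrableOn
        (fun t : ℝ => ((Real.log t * Real.exp (-t) : ℝ) : ℂ)) (Ioi 0) := by
      refine IntegrableOn.congr_fun h (fun t ht => ?_) measurableSet_Ioi
      simp [Complex.cpow_zero]
    refine IntegrableOn.congr_fun (Integrable.re h') (fun t ht => ?_) measurableSet_Ioi
    exact RCLike.ofReal_re _
  · refine (Continuous.continuousOn ?_).locallyIntegrableOn measurableSet_Ioi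
    exact Complex.continuous_ofReal.comp (Real.continuous_exp.comp continuous_neg)
  · rw [← Asymptotics.isBigO_norm_left]
    simp_rw [Complex.norm_real,
      Asymptotics.isBigO_norm_left]
    simpa only [neg_one_mul] using (isLittleO_exp_neg_mul_rpow_atTop zero_lt_one _).isBigO
  · simp_rw [neg_zero, rpow_zero]
    refine Asymptotics.isBigO_const_of_tendsto (?_ : Tendsto _ _ (nhds (1 : ℂ))) one_ne_zero
    rw [(by simp : (1 : ℂ) = Real.exp (-0))]
    exact (Complex.continuous_ofReal.comp
      (Real.continuous_exp.comp continuous_neg)).continuousWithinAt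

lemma integral_log_mul_exp_neg :
    ∫ t in Ioi (0 : ℝ), Real.log t * Real.exp (-t) = -γ := by
  have h1 : HasDerivAt Complex.GammaIntegral
      (∫ t : ℝ in Ioi 0, (t : ℂ) ^ ((1 : ℂ) - 1) * (Real.log t * Real.exp (-t))) 1 :=
    Complex.hasDerivAt_GammaIntegral (by norm_num)
  have h3 : Complex.GammaIntegral =ᶠ[nhds (1 : ℂ)] Complex.Gamma := by
    have hopen : IsOpen {s : ℂ | 0 < s.re} := isOpen_lt continuous_const Complex.continuous_re
    filter_upwards [hopen.mem_nhds (by norm_num : (0:ℝ) < (1:ℂ).re)] with s hs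
    exact (Complex.Gamma_eq_integral hs).symm
  have h2 : HasDerivAt Complex.GammaIntegral (-(γ : ℂ)) 1 :=
    Complex.hasDerivAt_Gamma_one.congr_of_eventuallyEq h3
  have h4 := h1.unique h2
  have h5 : (∫ t : ℝ in Ioi 0, (t : ℂ) ^ ((1 : ℂ) - 1) * (Real.log t * Real.exp (-t)))
      = ((∫ t in Ioi (0 : ℝ), Real.log t * Real.exp (-t) : ℝ) : ℂ) :=
    (setIntegral_congr_fun measurableSet_Ioi (fun t ht => by
      simp [Complex.cpow_zero])).trans integral_ofReal
  rw [h5] at h4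
  exact_mod_cast h4

lemma integrableOn_log_mul_exp_neg_mul {n : ℝ} (hn : 0 < n) :
    IntegrableOn (fun t : ℝ => Real.log t * Real.exp (-(n * t))) (Ioi 0) := by
  have hA : IntegrableOn (fun x : ℝ => Real.log (n * x) * Real.exp (-(n * x))) (Ioi 0) := by
    have := (integrableOn_Ioi_comp_mul_left_iff
      (fun t : ℝ => Real.log t * Real.exp (-t)) 0 hn).mpr
      (by rw [mul_zero]; exact integrableOn_log_mul_exp_neg)
    exact this
  have hB : IntegrableOn (fun x : ℝ => Real.log n * Real.exp (-(n * x))) (Ioi 0) := by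
    simpa [neg_mul, IntegrableOn] using (exp_neg_integrableOn_Ioi 0 hn).const_mul (Real.log n)
  refine IntegrableOn.congr_fun (hA.sub hB) (fun x hx => ?_) measurableSet_Ioi
  simp only [Pi.sub_apply]
  rw [Real.log_mul hn.ne' (ne_of_gt hx)]
  ring

lemma integral_log_mul_exp_neg_mul {n : ℝ} (hn : 0 < n) :
    ∫ t in Ioi (0 : ℝ), Real.log t * Real.exp (-(n * t)) = -((γ + Real.log n) / n) := by
  have hA : IntegrableOn (fun x : ℝ => Real.log (n * x) * Real.exp (-(n * x))) (Ioi 0) := by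
    have := (integrableOn_Ioi_comp_mul_left_iff
      (fun t : ℝ => Real.log t * Real.exp (-t)) 0 hn).mpr
      (by rw [mul_zero]; exact integrableOn_log_mul_exp_neg)
    exact this
  have hB : IntegrableOn (fun x : ℝ => Real.log n * Real.exp (-(n * x))) (Ioi 0) := by
    simpa [neg_mul, IntegrableOn] using (exp_neg_integrableOn_Ioi 0 hn).const_mul (Real.log n)
  have e1 : ∫ t in Ioi (0 : ℝ), Real.log (n * t) * Real.exp (-(n * t)) = n⁻¹ * (-γ) := by
    have := integral_comp_mul_left_Ioi (fun u : ℝ => Real.log u * Real.exp (-u)) 0 hn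
    rw [mul_zero] at this
    rw [this, integral_log_mul_exp_neg, smul_eq_mul]
  have e2 : ∫ t in Ioi (0 : ℝ), Real.exp (-(n * t)) = n⁻¹ := by
    have := integral_comp_mul_left_Ioi (fun u : ℝ => Real.exp (-u)) 0 hn
    rw [mul_zero] at this
    rw [this, integral_exp_neg_Ioi_zero, smul_eq_mul, mul_one]
  have key : ∫ t in Ioi (0 : ℝ), Real.log t * Real.exp (-(n * t))
      = ∫ t in Ioi (0 : ℝ),
          (Real.log (n * t) * Real.exp (-(n * t)) - Real.log n * Real.exp (-(n * t))) := by
    refine setIntegral_congr_fun measurableSet_Ioi (fun t ht => ?_)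
    rw [Real.log_mul hn.ne' (ne_of_gt ht)]
    ring
  rw [key, integral_sub hA hB, e1, integral_const_mul, e2]
  field_simp
  ring

lemma image_exp_neg_Ioi : (fun t : ℝ => Real.exp (-t)) '' Ioi 0 = Ioo 0 1 := by
  ext x
  constructor
  · rintro ⟨t, ht, rfl⟩
    exact ⟨Real.exp_pos _, Real.exp_lt_one_iff.mpr (neg_neg_iff_pos.mpr ht)⟩
  · rintro ⟨hx0, hx1⟩
    exact ⟨-Real.log x, by simpa using Real.log_neg hx0 hx1, by
      simp [Real.exp_log hx0]⟩

/-- `∫_0^1 ln(ln(1/y)) y^{n-1} dy = -(γ + ln n)/n` for `n > 0`, where `γ` is the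
Euler–Mascheroni constant. -/
theorem integral_log_log_inv_mul_rpow (n : ℝ) (hn : 0 < n) :
    IntervalIntegrable (fun y : ℝ => Real.log (Real.log (1 / y)) * y ^ (n - 1)) volume 0 1 ∧
    ∫ y in (0 : ℝ)..1, Real.log (Real.log (1 / y)) * y ^ (n - 1)
      = -((Real.eulerMascheroniConstant + Real.log n) / n) := by
  set g : ℝ → ℝ := fun y => Real.log (Real.log (1 / y)) * y ^ (n - 1) with hg
  have hderiv : ∀ t ∈ Ioi (0 : ℝ), HasDerivWithinAt (fun t : ℝ => Real.exp (-t))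
      (-Real.exp (-t)) (Ioi 0) t := by
    intro t _
    simpa using ((hasDerivAt_neg t).exp).hasDerivWithinAt
  have hinj : InjOn (fun t : ℝ => Real.exp (-t)) (Ioi 0) := by
    intro a _ b _ h
    exact neg_injective (Real.exp_injective h)
  have hcongr : ∀ t ∈ Ioi (0 : ℝ),
      |(-Real.exp (-t))| • g (Real.exp (-t)) = Real.log t * Real.exp (-(n * t)) := by
    intro t ht
    have h1 : Real.log (1 / Real.exp (-t)) = t := by
      rw [one_div, Real.exp_neg, inv_inv, Real.log_exp]
    have h2 : Real.exp (-t) ^ (n - 1) = Real.exp (-t * (n - 1)) := by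
      rw [Real.rpow_def_of_pos (Real.exp_pos _), Real.log_exp]
    rw [abs_neg, abs_of_pos (Real.exp_pos _), smul_eq_mul, hg]
    simp only [h1, h2]
    rw [show Real.exp (-t) * (Real.log t * Real.exp (-t * (n - 1)))
        = Real.log t * (Real.exp (-t) * Real.exp (-t * (n - 1))) by ring,
      ← Real.exp_add]
    ring_nf
  have hint : IntegrableOn g (Ioo 0 1) := by
    have := integrableOn_image_iff_integrableOn_abs_deriv_smul measurableSet_Ioi hderiv hinj g
    rw [image_exp_neg_Ioi] at this
    rw [this]
    exact IntegrableOn.congr_fun (integrableOn_log_mul_exp_neg_mul hn)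
      (fun t ht => (hcongr t ht).symm) measurableSet_Ioi
  have hval : ∫ y in Ioo (0 : ℝ) 1, g y = -((γ + Real.log n) / n) := by
    have := integral_image_eq_integral_abs_deriv_smul measurableSet_Ioi hderiv hinj g
    rw [image_exp_neg_Ioi] at this
    rw [this, setIntegral_congr_fun measurableSet_Ioi hcongr,
      integral_log_mul_exp_neg_mul hn]
  constructor
  · rw [intervalIntegrable_iff_integrableOn_Ioc_of_le zero_le_one,
      integrableOn_Ioc_iff_integrableOn_Ioo]
    exact hint
  · rw [intervalIntegral.integral_of_le zero_le_one, integral_Ioc_eq_integral_Ioo]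
    exact hval
end

section
/- Let a and b be real numbers with a > −1 and b > −1. Then ∫_0^1 (y^a − y^b)/(1 − y²) dy = (1/2)·(ψ((b+1)/2) − ψ((a+1)/2)), where ψ is the digamma function. -/
open Real MeasureTheory Set Filter Topology

lemma realBeta (p s : ℝ) (hp : 0 < p) (hs : 0 < s) :
    ∫ t in (0:ℝ)..1, t ^ (p-1) * (1-t) ^ (s-1)
      = Real.Gamma p * Real.Gamma s / Real.Gamma (p+s) := by
  have key := Complex.Gamma_mul_Gamma_eq_betaIntegral (s := (p:ℂ)) (t := (s:ℂ))
    (by simpa using hp) (by simpa using hs)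
  have hbeta : Complex.betaIntegral (p:ℂ) (s:ℂ)
      = ((∫ t in (0:ℝ)..1, t ^ (p-1) * (1-t) ^ (s-1) : ℝ) : ℂ) := by
    rw [Complex.betaIntegral, ← intervalIntegral.integral_ofReal]
    refine intervalIntegral.integral_congr fun x hx => ?_
    rw [uIcc_of_le (by norm_num)] at hx
    rw [show ((p:ℂ)-1) = ((p-1:ℝ):ℂ) by push_cast; ring,
      show ((s:ℂ)-1) = ((s-1:ℝ):ℂ) by push_cast; ring,
      show ((1:ℂ) - (x:ℂ)) = ((1-x:ℝ):ℂ) by push_cast; ring,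
      ← Complex.ofReal_cpow hx.1, ← Complex.ofReal_cpow (by linarith [hx.2]),
      Complex.ofReal_mul]
  rw [hbeta, ← Complex.ofReal_add, Complex.Gamma_ofReal, Complex.Gamma_ofReal,
    Complex.Gamma_ofReal, ← Complex.ofReal_mul, ← Complex.ofReal_mul] at key
  have h2 := Complex.ofReal_inj.mp key
  field_simp [(Real.Gamma_pos_of_pos (by linarith : (0:ℝ) < p + s)).ne']
  linarith [h2]

lemma realBetaIntegrable (p s : ℝ) (hp : 0 < p) (hs : 0 < s) :
    IntegrableOn (fun t : ℝ => t ^ (p-1) * (1-t) ^ (s-1)) (Ioo (0:ℝ) 1) := by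
  have h := (Complex.betaIntegral_convergent (u := (p:ℂ)) (v := (s:ℂ))
    (by simpa using hp) (by simpa using hs)).1
  have h2 : IntegrableOn (fun x : ℝ =>
      Complex.re ((x:ℂ) ^ ((p:ℂ) - 1) * (1 - (x:ℂ)) ^ ((s:ℂ) - 1))) (Ioo (0:ℝ) 1) := by
    exact ((h.mono_set Ioo_subset_Ioc_self).re)
  refine h2.congr_fun (fun x hx => ?_) measurableSet_Ioo
  beta_reduce
  rw [show ((p:ℂ)-1) = ((p-1:ℝ):ℂ) by push_cast; ring,
    show ((s:ℂ)-1) = ((s-1:ℝ):ℂ) by push_cast; ring,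
    show ((1:ℂ) - (x:ℂ)) = ((1-x:ℝ):ℂ) by push_cast; ring,
    ← Complex.ofReal_cpow hx.1.le, ← Complex.ofReal_cpow (by linarith [hx.2]),
    ← Complex.ofReal_mul, Complex.ofReal_re]

lemma neg_log_le (y ε : ℝ) (hy0 : 0 < y) (hy1 : y < 1) (hε0 : 0 < ε) (hε1 : ε ≤ 1) :
    -Real.log y ≤ (1 - y) * y ^ (-ε) / ε := by
  have hyε : 0 < y ^ ε := Real.rpow_pos_of_pos hy0 ε
  have h1 : Real.log ((y ^ ε)⁻¹) ≤ (y ^ ε)⁻¹ - 1 :=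
    Real.log_le_sub_one_of_pos (by positivity)
  rw [Real.log_inv, Real.log_rpow hy0] at h1
  have h2 : y ≤ y ^ ε := by
    have := Real.rpow_le_rpow_of_exponent_ge hy0 hy1.le hε1
    rwa [Real.rpow_one] at this
  rw [Real.rpow_neg hy0.le, le_div_iff₀ hε0]
  have h5 : y ^ ε * (y ^ ε)⁻¹ = 1 := mul_inv_cancel₀ hyε.ne'
  nlinarith [mul_le_mul_of_nonneg_right h2 (inv_nonneg.mpr hyε.le)]

lemma abs_rpow_sub_rpow_le (a b y : ℝ) (hy0 : 0 < y) (hy1 : y < 1) :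
    |y ^ a - y ^ b| ≤ |a - b| * y ^ (min a b) * (-Real.log y) := by
  wlog hab : b ≤ a generalizing a b
  · rw [abs_sub_comm, abs_sub_comm a b, min_comm]
    exact this b a (le_of_not_ge hab)
  have hL : Real.log y < 0 := Real.log_neg hy0 hy1
  have hmin : min a b = b := min_eq_right hab
  have key : y ^ a - y ^ b = y ^ b * (y ^ (a - b) - 1) := by
    rw [mul_sub, mul_one, ← Real.rpow_add hy0]; ring_nf
  have h1 : 0 < y ^ (a-b) := Real.rpow_pos_of_pos hy0 _
  have h2 : y ^ (a-b) ≤ 1 := Real.rpow_le_one hy0.le hy1.le (by linarith)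
  have h3 : 1 - y ^ (a-b) ≤ (a-b) * (-Real.log y) := by
    rw [Real.rpow_def_of_pos hy0]
    have := Real.add_one_le_exp (Real.log y * (a-b))
    nlinarith
  rw [key, abs_mul, abs_of_nonneg (Real.rpow_pos_of_pos hy0 b).le,
    abs_of_nonpos (by linarith), hmin, abs_of_nonneg (by linarith : (0:ℝ) ≤ a - b)]
  have hb := (Real.rpow_pos_of_pos hy0 b).le
  nlinarith [mul_le_mul_of_nonneg_left h3 hb]

lemma sq_image_Ioo : (fun y : ℝ => y ^ 2) '' Ioo 0 1 = Ioo (0:ℝ) 1 := by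
  ext t
  constructor
  · rintro ⟨y, ⟨hy1, hy2⟩, rfl⟩
    refine ⟨pow_pos hy1 2, ?_⟩
    show y ^ 2 < 1
    nlinarith
  · rintro ⟨ht0, ht1⟩
    exact ⟨Real.sqrt t, ⟨Real.sqrt_pos.mpr ht0, by
      rw [show (1:ℝ) = Real.sqrt 1 by simp]
      exact Real.sqrt_lt_sqrt ht0.le ht1⟩, Real.sq_sqrt ht0.le⟩

lemma subst_lemma (g : ℝ → ℝ) :
    ∫ t in Ioo (0:ℝ) 1, g t = ∫ y in Ioo (0:ℝ) 1, |2 * y| • g (y ^ 2) := by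
  nth_rewrite 1 [← sq_image_Ioo]
  apply integral_image_eq_integral_abs_deriv_smul measurableSet_Ioo
  · intro x _
    simpa using (hasDerivAt_pow 2 x).hasDerivWithinAt
  · intro u hu v hv h
    simp only at h
    have : (u - v) * (u + v) = 0 := by ring_nf; linarith [h]
    rcases mul_eq_zero.mp this with h' | h'
    · linarith
    · nlinarith [hu.1, hv.1]

lemma L_eq (a b s : ℝ) (ha : -1 < a) (hb : -1 < b) (hs : 0 < s) :
    ∫ y in Ioo (0:ℝ) 1, (y ^ a - y ^ b) * (1 - y ^ 2) ^ (s - 1)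
      = 1 / 2 * ((Real.Gamma ((a+1)/2) * Real.Gamma s / Real.Gamma ((a+1)/2 + s))
        - (Real.Gamma ((b+1)/2) * Real.Gamma s / Real.Gamma ((b+1)/2 + s))) := by
  set p := (a+1)/2 with hp
  set q := (b+1)/2 with hq
  have hp0 : 0 < p := by rw [hp]; linarith
  have hq0 : 0 < q := by rw [hq]; linarith
  have key := subst_lemma (fun t => (t ^ (p-1) - t ^ (q-1)) * (1-t) ^ (s-1))
  have congr1 : ∫ y in Ioo (0:ℝ) 1,
      |2 * y| • ((fun t => (t ^ (p-1) - t ^ (q-1)) * (1-t) ^ (s-1)) (y ^ 2))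
      = ∫ y in Ioo (0:ℝ) 1, 2 * ((y ^ a - y ^ b) * (1 - y ^ 2) ^ (s-1)) := by
    refine setIntegral_congr_fun measurableSet_Ioo fun y hy => ?_
    obtain ⟨hy0, hy1⟩ := hy
    have h2 : (y:ℝ) ^ (2:ℕ) = y ^ ((2:ℕ):ℝ) := (Real.rpow_natCast y 2).symm
    have ha' : (y ^ 2) ^ (p-1) = y ^ (a-1) := by
      rw [h2, ← Real.rpow_mul hy0.le]
      norm_num
      rw [hp]; ring_nf
    have hb' : (y ^ 2) ^ (q-1) = y ^ (b-1) := by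
      rw [h2, ← Real.rpow_mul hy0.le]
      norm_num
      rw [hq]; ring_nf
    have hya : y * y ^ (a-1) = y ^ a := by
      nth_rewrite 1 [← Real.rpow_one y]
      rw [← Real.rpow_add hy0]; ring_nf
    have hyb : y * y ^ (b-1) = y ^ b := by
      nth_rewrite 1 [← Real.rpow_one y]
      rw [← Real.rpow_add hy0]; ring_nf
    simp only [smul_eq_mul, abs_of_pos (by linarith : (0:ℝ) < 2 * y)]
    rw [ha', hb']
    rw [← hya, ← hyb]; ring
  rw [congr1, MeasureTheory.integral_const_mul] at key
  -- now key : ∫ t in Ioo, (t^(p-1)-t^(q-1))*(1-t)^(s-1) = 2 * ∫ y ...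
  have split : ∫ t in Ioo (0:ℝ) 1, (t ^ (p-1) - t ^ (q-1)) * (1-t) ^ (s-1)
      = (∫ t in Ioo (0:ℝ) 1, t ^ (p-1) * (1-t) ^ (s-1))
        - ∫ t in Ioo (0:ℝ) 1, t ^ (q-1) * (1-t) ^ (s-1) := by
    rw [← integral_sub (realBetaIntegrable p s hp0 hs) (realBetaIntegrable q s hq0 hs)]
    refine setIntegral_congr_fun measurableSet_Ioo fun t _ => ?_
    ring
  have conv : ∀ r : ℝ, 0 < r → ∫ t in Ioo (0:ℝ) 1, t ^ (r-1) * (1-t) ^ (s-1)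
      = Real.Gamma r * Real.Gamma s / Real.Gamma (r + s) := by
    intro r hr
    rw [← realBeta r s hr hs, intervalIntegral.integral_of_le (by norm_num : (0:ℝ) ≤ 1),
      integral_Ioc_eq_integral_Ioo]
  rw [split, conv p hp0, conv q hq0] at key
  linarith [key]

lemma gamma_ne_neg_nat {x : ℝ} (hx : 0 < x) : ∀ m : ℕ, x ≠ -(m:ℝ) := by
  intro m h
  have : (0:ℝ) ≤ m := Nat.cast_nonneg m
  linarith [h ▸ hx]

lemma hasDerivAt_Gamma_comp (p : ℝ) (hp : 0 < p) :
    HasDerivAt (fun s : ℝ => Real.Gamma (p + s)) (deriv Real.Gamma p) 0 := by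
  have h : HasDerivAt Real.Gamma (deriv Real.Gamma p) (p + id 0) := by
    simpa using (Real.differentiableAt_Gamma (gamma_ne_neg_nat hp)).hasDerivAt
  have h2 := h.comp 0 ((hasDerivAt_id (0:ℝ)).const_add p)
  simpa [Function.comp_def] using h2

lemma beta_limit (p q : ℝ) (hp : 0 < p) (hq : 0 < q) :
    Tendsto (fun s => Real.Gamma p * Real.Gamma s / Real.Gamma (p + s)
        - Real.Gamma q * Real.Gamma s / Real.Gamma (q + s)) (𝓝[>] (0:ℝ))
      (𝓝 (deriv Real.Gamma q / Real.Gamma q - deriv Real.Gamma p / Real.Gamma p)) := by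
  have hΓp := Real.Gamma_pos_of_pos hp
  have hΓq := Real.Gamma_pos_of_pos hq
  set f : ℝ → ℝ := fun s => Real.Gamma p / Real.Gamma (p + s) - Real.Gamma q / Real.Gamma (q + s) with hf
  have hf0 : f 0 = 0 := by simp [hf, div_self hΓp.ne', div_self hΓq.ne']
  have hd : HasDerivAt f (deriv Real.Gamma q / Real.Gamma q - deriv Real.Gamma p / Real.Gamma p) 0 := by
    have h1 : HasDerivAt (fun s : ℝ => Real.Gamma p / Real.Gamma (p + s))
        (Real.Gamma p * (-deriv Real.Gamma p / Real.Gamma (p + 0) ^ 2)) 0 := by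
      simp only [div_eq_mul_inv]
      exact ((hasDerivAt_Gamma_comp p hp).inv (by simp [hΓp.ne'])).const_mul _
    have h2 : HasDerivAt (fun s : ℝ => Real.Gamma q / Real.Gamma (q + s))
        (Real.Gamma q * (-deriv Real.Gamma q / Real.Gamma (q + 0) ^ 2)) 0 := by
      simp only [div_eq_mul_inv]
      exact ((hasDerivAt_Gamma_comp q hq).inv (by simp [hΓq.ne'])).const_mul _
    have := h1.sub h2
    refine this.congr_deriv ?_
    rw [add_zero, add_zero]
    field_simp
    ring
  have hslope : Tendsto (fun s => f s / s) (𝓝[>] (0:ℝ))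
      (𝓝 (deriv Real.Gamma q / Real.Gamma q - deriv Real.Gamma p / Real.Gamma p)) := by
    have h := hasDerivAt_iff_tendsto_slope.mp hd
    have h2 := h.mono_left (nhdsWithin_mono 0 (fun x hx => ne_of_gt hx : Ioi (0:ℝ) ⊆ {x | x ≠ 0}))
    refine h2.congr fun s => ?_
    rw [slope_def_field, hf0]
    simp [div_eq_mul_inv]
  have hΓ1 : Tendsto (fun s : ℝ => Real.Gamma (s + 1)) (𝓝[>] (0:ℝ)) (𝓝 1) := by
    have hc : ContinuousAt Real.Gamma 1 :=
      (Real.differentiableAt_Gamma (gamma_ne_neg_nat one_pos)).continuousAt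
    have : Tendsto (fun s : ℝ => s + 1) (𝓝[>] (0:ℝ)) (𝓝 1) := by
      have h3 : Continuous (fun s : ℝ => s + 1) := continuous_id.add continuous_const
      simpa using (h3.tendsto (0:ℝ)).mono_left nhdsWithin_le_nhds
    simpa [Real.Gamma_one, Function.comp_def] using hc.tendsto.comp this
  have hmul := hΓ1.mul hslope
  rw [one_mul] at hmul
  refine hmul.congr' ?_
  filter_upwards [self_mem_nhdsWithin] with s hs
  have hs0 : (0:ℝ) < s := hs
  have hΓs : Real.Gamma (s + 1) = s * Real.Gamma s := Real.Gamma_add_one hs0.ne'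
  rw [hΓs, hf]
  field_simp

lemma L_tendsto (a b : ℝ) (ha : -1 < a) (hb : -1 < b)
    (habs : ∀ (c d y : ℝ), 0 < y → y < 1 →
      |y ^ c - y ^ d| ≤ |c - d| * y ^ (min c d) * (-Real.log y))
    (hlog : ∀ (y ε : ℝ), 0 < y → y < 1 → 0 < ε → ε ≤ 1 →
      -Real.log y ≤ (1 - y) * y ^ (-ε) / ε) :
    Tendsto (fun s => ∫ y in Ioo (0:ℝ) 1, (y ^ a - y ^ b) * (1 - y ^ 2) ^ (s - 1))
      (𝓝[>] (0:ℝ)) (𝓝 (∫ y in Ioo (0:ℝ) 1, (y ^ a - y ^ b) / (1 - y ^ 2))) := by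
  set m := min a b with hm
  have hm1 : -1 < m := lt_min ha hb
  set ε := min 1 ((m+1)/2) with hε
  have hε0 : 0 < ε := lt_min one_pos (by linarith)
  have hε1 : ε ≤ 1 := min_le_left _ _
  have hmε : -1 < m - ε := by
    have : ε ≤ (m+1)/2 := min_le_right _ _
    linarith
  apply tendsto_integral_filter_of_dominated_convergence
    (bound := fun y => (|a - b| / ε) * y ^ (m - ε))
  · -- measurability
    filter_upwards with s
    have hcont : ContinuousOn (fun y : ℝ => (y ^ a - y ^ b) * (1 - y ^ 2) ^ (s - 1))
        (Ioo (0:ℝ) 1) := by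
      apply ContinuousOn.mul
      · exact (continuousOn_id.rpow_const fun y hy => Or.inl hy.1.ne').sub
          (continuousOn_id.rpow_const fun y hy => Or.inl hy.1.ne')
      · refine ContinuousOn.rpow_const ?_ fun y hy => Or.inl ?_
        · exact continuousOn_const.sub (continuous_pow 2).continuousOn
        · obtain ⟨h0, h1⟩ := hy; nlinarith
    exact hcont.aestronglyMeasurable measurableSet_Ioo
  · -- bound
    filter_upwards [self_mem_nhdsWithin] with s hs
    have hs0 : (0:ℝ) < s := hs
    rw [ae_restrict_iff' measurableSet_Ioo]
    filter_upwards with y hy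
    obtain ⟨hy0, hy1⟩ := hy
    have h01 : 0 < 1 - y ^ 2 := by nlinarith
    have h1y : 0 < 1 - y := by linarith
    have hrle : (1 - y ^ 2) ^ (s - 1) ≤ (1 - y)⁻¹ := by
      have e1 : (1 - y ^ 2) ^ (s - 1) = (1 - y ^ 2) ^ s * (1 - y ^ 2) ^ (-1:ℝ) := by
        rw [← Real.rpow_add h01]; ring_nf
      have e2 : (1 - y ^ 2) ^ s ≤ 1 := Real.rpow_le_one h01.le (by nlinarith) hs0.le
      have e3 : (1 - y ^ 2) ^ (-1:ℝ) = (1 - y ^ 2)⁻¹ := Real.rpow_neg_one _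
      have e4 : (1 - y ^ 2)⁻¹ ≤ (1 - y)⁻¹ := by
        apply inv_anti₀ h1y
        nlinarith
      calc (1 - y ^ 2) ^ (s - 1) = (1 - y ^ 2) ^ s * (1 - y ^ 2)⁻¹ := by rw [e1, e3]
        _ ≤ 1 * (1 - y)⁻¹ := by
            apply mul_le_mul e2 e4 (by positivity) zero_le_one
        _ = (1 - y)⁻¹ := one_mul _
    have habs2 : |y ^ a - y ^ b| ≤ |a - b| * y ^ m * ((1 - y) * y ^ (-ε) / ε) := by
      refine (habs a b y hy0 hy1).trans ?_
      apply mul_le_mul_of_nonneg_left (hlog y ε hy0 hy1 hε0 hε1)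
      positivity
    rw [Real.norm_eq_abs, abs_mul, abs_of_nonneg (Real.rpow_nonneg h01.le _)]
    calc |y ^ a - y ^ b| * (1 - y ^ 2) ^ (s - 1)
        ≤ (|a - b| * y ^ m * ((1 - y) * y ^ (-ε) / ε)) * (1 - y)⁻¹ := by
          apply mul_le_mul habs2 hrle (Real.rpow_nonneg h01.le _) (by positivity)
      _ = (|a - b| / ε) * (y ^ m * y ^ (-ε)) * ((1 - y) * (1 - y)⁻¹) := by ring
      _ = (|a - b| / ε) * y ^ (m - ε) := by
          rw [← Real.rpow_add hy0, mul_inv_cancel₀ h1y.ne', mul_one, ← sub_eq_add_neg]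
  · -- integrable bound
    have h := (intervalIntegral.intervalIntegrable_rpow' (a := 0) (b := 1) hmε).1
    exact (h.mono_set Ioo_subset_Ioc_self).const_mul _
  · -- pointwise limit
    rw [ae_restrict_iff' measurableSet_Ioo]
    filter_upwards with y hy
    obtain ⟨hy0, hy1⟩ := hy
    have h01 : 0 < 1 - y ^ 2 := by nlinarith
    have hcont : ContinuousAt (fun s : ℝ => (y ^ a - y ^ b) * (1 - y ^ 2) ^ (s - 1)) 0 := by
      apply ContinuousAt.mul continuousAt_const
      exact (Real.continuousAt_const_rpow h01.ne').comp (continuousAt_id.sub continuousAt_const)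
    have h2 : Tendsto (fun s : ℝ => (y ^ a - y ^ b) * (1 - y ^ 2) ^ (s - 1)) (𝓝[>] (0:ℝ))
        (𝓝 ((y ^ a - y ^ b) * (1 - y ^ 2) ^ ((0:ℝ) - 1))) :=
      hcont.tendsto.mono_left (nhdsWithin_le_nhds (s := Ioi (0:ℝ)))
    simpa [zero_sub, Real.rpow_neg_one, div_eq_mul_inv] using h2

/-- The digamma function `ψ(x) = Γ'(x)/Γ(x)`. -/
noncomputable def digamma (x : ℝ) : ℝ := deriv Real.Gamma x / Real.Gamma x

/-- `∫_0^1 (y^a - y^b)/(1 - y²) dy = (ψ((b+1)/2) - ψ((a+1)/2))/2` for `a, b > -1`. -/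
theorem integral_rpow_sub_rpow_div_one_sub_sq (a b : ℝ) (ha : -1 < a) (hb : -1 < b) :
    ∫ y in (0 : ℝ)..1, (y ^ a - y ^ b) / (1 - y ^ 2)
      = 1 / 2 * (digamma ((b + 1) / 2) - digamma ((a + 1) / 2)) := by
  have hp0 : 0 < (a+1)/2 := by linarith
  have hq0 : 0 < (b+1)/2 := by linarith
  have hL1 := L_tendsto a b ha hb (fun c d y h0 h1 => abs_rpow_sub_rpow_le c d y h0 h1)
    (fun y ε h0 h1 h2 h3 => neg_log_le y ε h0 h1 h2 h3)
  have hL2 : Tendsto (fun s => ∫ y in Ioo (0:ℝ) 1, (y ^ a - y ^ b) * (1 - y ^ 2) ^ (s - 1))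
      (𝓝[>] (0:ℝ))
      (𝓝 (1 / 2 * (deriv Real.Gamma ((b+1)/2) / Real.Gamma ((b+1)/2)
        - deriv Real.Gamma ((a+1)/2) / Real.Gamma ((a+1)/2)))) := by
    have h := (beta_limit ((a+1)/2) ((b+1)/2) hp0 hq0).const_mul (1/2 : ℝ)
    refine h.congr' ?_
    filter_upwards [self_mem_nhdsWithin] with s hs
    exact (L_eq a b s ha hb hs).symm
  have hkey := tendsto_nhds_unique hL1 hL2
  rw [intervalIntegral.integral_of_le (by norm_num : (0:ℝ) ≤ 1),
    integral_Ioc_eq_integral_Ioo]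
  simpa [digamma] using hkey
end
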